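/- arXiv:2404.11872 — 6 statements merged into one kernel-verified Lean document; each statement's English description precedes it below -/
import Mathlib

section
/- Let T ∈ (0,∞], let λ : [0,T) → ℝ be smooth, and let β : ℝ × [0,T) → ℝ be smooth, 2π-periodic in θ, and satisfy the evolution equation ∂β/∂t = ∂²β/∂θ² + β − λ(t). If ∫₀^{2π} β(θ,0) cos θ dθ = 0 and ∫₀^{2π} β(θ,0) sin θ dθ = 0, then for every t ∈ [0,T) one has ∫₀^{2π} β(θ,t) cos θ dθ = 0 and ∫₀^{2π} β(θ,t) sin θ dθ = 0. (Consequently, a curve which is initially an ℓ-convex Legendre curve remains ℓ-convex under the flow.) -/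
open Real Filter MeasureTheory intervalIntegral
open scoped ENNReal Topology

/-- The time interval `[0, T)` for `T ∈ (0, ∞]`, as a subset of ℝ. -/
def timeDom (T : ℝ≥0∞) : Set ℝ := {t : ℝ | 0 ≤ t ∧ ENNReal.ofReal t < T}

lemma periodic_deriv' {f : ℝ → ℝ} {c : ℝ} (h : Function.Periodic f c) :
    Function.Periodic (deriv f) c := by
  intro x
  have h1 : (fun y => f (y + c)) = f := funext h
  calc deriv f (x + c) = deriv (fun y => f (y + c)) x := (deriv_comp_add_const f c x).symm
    _ = deriv f x := by rw [h1]

lemma ibp_key {f g : ℝ → ℝ} (hf : ContDiff ℝ (⊤ : ℕ∞) f) (hg : ContDiff ℝ (⊤ : ℕ∞) g)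
    (hfp : Function.Periodic f (2 * π)) (hgp : Function.Periodic g (2 * π))
    (hg2 : ∀ θ, deriv (deriv g) θ = - g θ) :
    ∫ θ in (0:ℝ)..(2 * π), deriv (deriv f) θ * g θ = - ∫ θ in (0:ℝ)..(2 * π), f θ * g θ := by
  have hf' : ContDiff ℝ (⊤ : ℕ∞) (deriv f) := (contDiff_infty_iff_deriv.mp hf).2
  have hf'' : ContDiff ℝ (⊤ : ℕ∞) (deriv (deriv f)) := (contDiff_infty_iff_deriv.mp hf').2
  have hg' : ContDiff ℝ (⊤ : ℕ∞) (deriv g) := (contDiff_infty_iff_deriv.mp hg).2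
  have hg'' : ContDiff ℝ (⊤ : ℕ∞) (deriv (deriv g)) := (contDiff_infty_iff_deriv.mp hg').2
  have hfp' : Function.Periodic (deriv f) (2 * π) := periodic_deriv' hfp
  have hgp' : Function.Periodic (deriv g) (2 * π) := periodic_deriv' hgp
  have e1 : ∫ θ in (0:ℝ)..(2 * π), g θ * deriv (deriv f) θ
      = g (2 * π) * deriv f (2 * π) - g 0 * deriv f 0
        - ∫ θ in (0:ℝ)..(2 * π), deriv g θ * deriv f θ := by
    apply intervalIntegral.integral_mul_deriv_eq_deriv_mul_of_hasDerivAt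
      (hg.continuous.continuousOn) (hf'.continuous.continuousOn)
      (fun x _ => ((hg.differentiable (by simp)) x).hasDerivAt)
      (fun x _ => ((hf'.differentiable (by simp)) x).hasDerivAt)
      ((hg'.continuous).intervalIntegrable _ _)
      ((hf''.continuous).intervalIntegrable _ _)
  have e2 : ∫ θ in (0:ℝ)..(2 * π), deriv g θ * deriv f θ
      = deriv g (2 * π) * f (2 * π) - deriv g 0 * f 0
        - ∫ θ in (0:ℝ)..(2 * π), deriv (deriv g) θ * f θ := by
    apply intervalIntegral.integral_mul_deriv_eq_deriv_mul_of_hasDerivAt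
      (hg'.continuous.continuousOn) (hf.continuous.continuousOn)
      (fun x _ => ((hg'.differentiable (by simp)) x).hasDerivAt)
      (fun x _ => ((hf.differentiable (by simp)) x).hasDerivAt)
      ((hg''.continuous).intervalIntegrable _ _)
      ((hf'.continuous).intervalIntegrable _ _)
  have b1 : g (2 * π) = g 0 := by simpa using (hgp 0)
  have b2 : deriv f (2 * π) = deriv f 0 := by simpa using (hfp' 0)
  have b3 : deriv g (2 * π) = deriv g 0 := by simpa using (hgp' 0)
  have b4 : f (2 * π) = f 0 := by simpa using (hfp 0)
  have e3 : ∫ θ in (0:ℝ)..(2 * π), deriv (deriv g) θ * f θ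
      = - ∫ θ in (0:ℝ)..(2 * π), f θ * g θ := by
    rw [← intervalIntegral.integral_neg]
    apply intervalIntegral.integral_congr
    intro θ _
    show deriv (deriv g) θ * f θ = -(f θ * g θ)
    rw [hg2 θ]; ring
  have comm : ∫ θ in (0:ℝ)..(2 * π), deriv (deriv f) θ * g θ
      = ∫ θ in (0:ℝ)..(2 * π), g θ * deriv (deriv f) θ := by
    apply intervalIntegral.integral_congr; intro θ _; ring
  rw [comm, e1, e2, e3, b1, b2, b3, b4]
  ring

lemma key_const (T : ℝ≥0∞)
    (lam : ℝ → ℝ) (β : ℝ → ℝ → ℝ)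
    (hβ : ContDiffOn ℝ (⊤ : ℕ∞) (Function.uncurry β) (timeDom T ×ˢ (Set.univ : Set ℝ)))
    (hper : ∀ t ∈ timeDom T, Function.Periodic (β t) (2 * π))
    (hpde : ∀ t ∈ timeDom T, ∀ θ : ℝ,
      derivWithin (fun s => β s θ) (timeDom T) t
        = iteratedDeriv 2 (β t) θ + β t θ - lam t)
    (g : ℝ → ℝ) (hg : ContDiff ℝ (⊤ : ℕ∞) g) (hgp : Function.Periodic g (2 * π))
    (hg2 : ∀ θ, deriv (deriv g) θ = - g θ)
    (hgint : ∫ θ in (0:ℝ)..(2 * π), g θ = 0) :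
    ∀ t ∈ timeDom T, ∫ θ in (0:ℝ)..(2 * π), β t θ * g θ
      = ∫ θ in (0:ℝ)..(2 * π), β 0 θ * g θ := by
  intro t ht
  rcases eq_or_lt_of_le ht.1 with h0 | hpos
  · rw [← h0]
  have hslice : ∀ s ∈ timeDom T, ContDiff ℝ (⊤ : ℕ∞) (β s) := by
    intro s hs
    rw [← contDiffOn_univ]
    have hcomp : ContDiffOn ℝ (⊤ : ℕ∞) (Function.uncurry β ∘ fun θ : ℝ => (s, θ))
        Set.univ :=
      hβ.comp ((contDiff_const.prodMk contDiff_id).contDiffOn) (fun θ _ => ⟨hs, trivial⟩)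
    exact hcomp
  have hIccS : Set.Icc (0:ℝ) t ⊆ timeDom T := by
    intro s hs
    exact ⟨hs.1, lt_of_le_of_lt (ENNReal.ofReal_le_ofReal hs.2) ht.2⟩
  obtain ⟨c, htc, hcS⟩ : ∃ c, t < c ∧ c ∈ timeDom T := by
    by_cases hTtop : T = ⊤
    · exact ⟨t + 1, by linarith, ⟨by linarith [ht.1], by
        rw [hTtop]; exact ENNReal.ofReal_lt_top⟩⟩
    · have h1 : t < T.toReal := (ENNReal.ofReal_lt_iff_lt_toReal ht.1 hTtop).mp ht.2
      refine ⟨(t + T.toReal) / 2, by linarith, ⟨by linarith [ht.1], ?_⟩⟩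
      rw [ENNReal.ofReal_lt_iff_lt_toReal (by linarith [ht.1]) hTtop]
      linarith
  have hIoosub : Set.Ioo (0:ℝ) c ⊆ timeDom T := fun s hs =>
    ⟨hs.1.le, lt_of_le_of_lt (ENNReal.ofReal_le_ofReal hs.2.le) hcS.2⟩
  have hnhds : ∀ s ∈ Set.Ioo (0:ℝ) c, timeDom T ∈ 𝓝 s := fun s hs =>
    Filter.mem_of_superset (isOpen_Ioo.mem_nhds hs) hIoosub
  have hdiffat : ∀ s ∈ Set.Ioo (0:ℝ) c, ∀ θ : ℝ,
      HasDerivAt (fun u => β u θ)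
        (fderiv ℝ (Function.uncurry β) (s, θ) ((1:ℝ), (0:ℝ))) s := by
    intro s hs θ
    have hmem : (timeDom T ×ˢ (Set.univ : Set ℝ)) ∈ 𝓝 (s, θ) :=
      prod_mem_nhds (hnhds s hs) Filter.univ_mem
    have hca : ContDiffAt ℝ (⊤ : ℕ∞) (Function.uncurry β) (s, θ) := hβ.contDiffAt hmem
    have hfd : HasFDerivAt (Function.uncurry β)
        (fderiv ℝ (Function.uncurry β) (s, θ)) (s, θ) :=
      (hca.differentiableAt (by simp)).hasFDerivAt
    have hin : HasDerivAt (fun u : ℝ => (u, θ)) ((1:ℝ), (0:ℝ)) s :=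
      (hasDerivAt_id s).prodMk (hasDerivAt_const s θ)
    exact hfd.comp_hasDerivAt s hin
  have hval : ∀ s ∈ Set.Ioo (0:ℝ) c, ∀ θ : ℝ,
      fderiv ℝ (Function.uncurry β) (s, θ) ((1:ℝ), (0:ℝ))
        = iteratedDeriv 2 (β s) θ + β s θ - lam s := by
    intro s hs θ
    have h1 := (hdiffat s hs θ).deriv
    rw [← h1, ← derivWithin_of_mem_nhds (hnhds s hs)]
    exact hpde s (hIoosub hs) θ
  have hfdcont : ContinuousOn
      (fun q : ℝ × ℝ => fderiv ℝ (Function.uncurry β) q ((1:ℝ), (0:ℝ)) * g q.2)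
      (Set.Ioo (0:ℝ) c ×ˢ (Set.univ : Set ℝ)) := by
    have h1 : ContinuousOn (fderiv ℝ (Function.uncurry β))
        (Set.Ioo (0:ℝ) c ×ˢ (Set.univ : Set ℝ)) :=
      ((hβ.mono (Set.prod_mono hIoosub (subset_refl _))).continuousOn_fderiv_of_isOpen
        (isOpen_Ioo.prod isOpen_univ) (by exact_mod_cast le_top))
    exact (h1.clm_apply continuousOn_const).mul
      ((hg.continuous.comp continuous_snd).continuousOn)
  have hF0 : ∀ s₀ ∈ Set.Ioo (0:ℝ) t,
      HasDerivAt (fun s => ∫ θ in (0:ℝ)..(2 * π), β s θ * g θ) 0 s₀ := by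
    intro s₀ hs₀
    have hs₀c : s₀ ∈ Set.Ioo (0:ℝ) c := ⟨hs₀.1, hs₀.2.trans htc⟩
    set ε := min s₀ (c - s₀) / 2 with hε
    have hεpos : 0 < ε := by
      have h1 := hs₀c.1; have h2 := hs₀c.2
      apply div_pos (lt_min (by linarith) (by linarith)) two_pos
    have hball : Metric.closedBall s₀ ε ⊆ Set.Ioo 0 c := by
      intro x hx
      rw [Metric.mem_closedBall, Real.dist_eq, abs_le] at hx
      have hm1 : ε ≤ s₀ / 2 := by
        rw [hε]; have := min_le_left s₀ (c - s₀); linarith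
      have hm2 : ε ≤ (c - s₀) / 2 := by
        rw [hε]; have := min_le_right s₀ (c - s₀); linarith
      constructor
      · have := hs₀c.1; linarith [hx.1]
      · linarith [hx.2]
    have hKsub : Set.Icc (s₀ - ε) (s₀ + ε) ×ˢ Set.Icc (0:ℝ) (2 * π)
        ⊆ Set.Ioo (0:ℝ) c ×ˢ (Set.univ : Set ℝ) :=
      Set.prod_mono (by rw [← Real.closedBall_eq_Icc]; exact hball) (Set.subset_univ _)
    obtain ⟨C, hC⟩ := (isCompact_Icc.prod isCompact_Icc).exists_bound_of_continuousOn
      (hfdcont.mono hKsub)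
    have main := intervalIntegral.hasDerivAt_integral_of_dominated_loc_of_deriv_le
      (μ := MeasureTheory.volume)
      (F := fun s θ => β s θ * g θ)
      (F' := fun s θ => fderiv ℝ (Function.uncurry β) (s, θ) ((1:ℝ), (0:ℝ)) * g θ)
      (x₀ := s₀) (a := 0) (b := 2 * π) (bound := fun _ => C) (s := Metric.ball s₀ ε) (Metric.ball_mem_nhds s₀ hεpos)
      ?_ ?_ ?_ ?_ ?_ ?_
    · have hint : (∫ θ in (0:ℝ)..(2 * π),
          fderiv ℝ (Function.uncurry β) (s₀, θ) ((1:ℝ), (0:ℝ)) * g θ) = 0 := by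
        have heq : ∀ θ, fderiv ℝ (Function.uncurry β) (s₀, θ) ((1:ℝ), (0:ℝ))
            = deriv (deriv (β s₀)) θ + β s₀ θ - lam s₀ := by
          intro θ
          rw [hval s₀ hs₀c θ]
          simp [iteratedDeriv_succ, iteratedDeriv_one]
        have hβc : ContDiff ℝ (⊤ : ℕ∞) (β s₀) := hslice s₀ (hIoosub hs₀c)
        have hβp := hper s₀ (hIoosub hs₀c)
        have contA : Continuous (deriv (deriv (β s₀))) :=
          ((contDiff_infty_iff_deriv.mp ((contDiff_infty_iff_deriv.mp hβc).2)).2).continuous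
        have iA : IntervalIntegrable (fun θ => deriv (deriv (β s₀)) θ * g θ)
            volume 0 (2 * π) := (contA.mul hg.continuous).intervalIntegrable _ _
        have iB : IntervalIntegrable (fun θ => β s₀ θ * g θ) volume 0 (2 * π) :=
          (hβc.continuous.mul hg.continuous).intervalIntegrable _ _
        have iL : IntervalIntegrable (fun θ => lam s₀ * g θ) volume 0 (2 * π) :=
          (continuous_const.mul hg.continuous).intervalIntegrable _ _
        have expand : (fun θ => fderiv ℝ (Function.uncurry β) (s₀, θ) ((1:ℝ), (0:ℝ)) * g θ)
            = fun θ => deriv (deriv (β s₀)) θ * g θ + β s₀ θ * g θ - lam s₀ * g θ := by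
          funext θ; rw [heq θ]; ring
        rw [expand, intervalIntegral.integral_sub (iA.add iB) iL,
          intervalIntegral.integral_add iA iB, ibp_key hβc hg hβp hgp hg2,
          intervalIntegral.integral_const_mul, hgint]
        ring
      have h2 := main.2
      rw [hint] at h2
      exact h2
    · filter_upwards [isOpen_Ioo.mem_nhds hs₀c] with x hx
      exact ((hslice x (hIoosub hx)).continuous.mul hg.continuous).aestronglyMeasurable
    · exact ((hslice s₀ (hIoosub hs₀c)).continuous.mul hg.continuous).intervalIntegrable _ _
    · have hcθ : Continuous fun θ : ℝ => ((s₀, θ) : ℝ × ℝ) :=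
        continuous_const.prodMk continuous_id
      have h2 : ContinuousOn
          (fun θ : ℝ => fderiv ℝ (Function.uncurry β) (s₀, θ) ((1:ℝ), (0:ℝ)) * g θ)
          Set.univ :=
        hfdcont.comp hcθ.continuousOn (fun θ _ => ⟨hs₀c, trivial⟩)
      exact (continuousOn_univ.mp h2).aestronglyMeasurable
    · apply MeasureTheory.ae_of_all
      intro θ hθ x hx
      have hθ' : θ ∈ Set.Icc (0:ℝ) (2 * π) := by
        rw [Set.uIoc_of_le (by linarith [Real.pi_pos])] at hθ
        exact ⟨hθ.1.le, hθ.2⟩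
      have hx' : x ∈ Set.Icc (s₀ - ε) (s₀ + ε) := by
        rw [← Real.closedBall_eq_Icc]
        exact Metric.ball_subset_closedBall hx
      exact hC (x, θ) ⟨hx', hθ'⟩
    · exact intervalIntegrable_const
    · apply MeasureTheory.ae_of_all
      intro θ hθ x hx
      have hx' : x ∈ Set.Ioo (0:ℝ) c := hball (Metric.ball_subset_closedBall hx)
      exact (hdiffat x hx' θ).mul_const (g θ)
  have hFcont : ContinuousOn (fun s => ∫ θ in (0:ℝ)..(2 * π), β s θ * g θ)
      (Set.Icc 0 t) := by
    intro x₀ hx₀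
    have hKsub2 : Set.Icc (0:ℝ) t ×ˢ Set.Icc (0:ℝ) (2 * π)
        ⊆ timeDom T ×ˢ (Set.univ : Set ℝ) :=
      Set.prod_mono hIccS (Set.subset_univ _)
    have hΨ : ContinuousOn (fun q : ℝ × ℝ => Function.uncurry β q * g q.2)
        (Set.Icc (0:ℝ) t ×ˢ Set.Icc (0:ℝ) (2 * π)) :=
      (hβ.continuousOn.mono hKsub2).mul ((hg.continuous.comp continuous_snd).continuousOn)
    obtain ⟨C₂, hC₂⟩ := (isCompact_Icc.prod isCompact_Icc).exists_bound_of_continuousOn hΨ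
    apply intervalIntegral.continuousWithinAt_of_dominated_interval
      (bound := fun _ => C₂)
    · filter_upwards [self_mem_nhdsWithin] with x hx
      exact ((hslice x (hIccS hx)).continuous.mul hg.continuous).aestronglyMeasurable
    · filter_upwards [self_mem_nhdsWithin] with x hx
      apply MeasureTheory.ae_of_all
      intro θ hθ
      have hθ' : θ ∈ Set.Icc (0:ℝ) (2 * π) := by
        rw [Set.uIoc_of_le (by linarith [Real.pi_pos])] at hθ
        exact ⟨hθ.1.le, hθ.2⟩
      exact hC₂ (x, θ) ⟨hx, hθ'⟩
    · exact intervalIntegrable_const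
    · apply MeasureTheory.ae_of_all
      intro θ _
      have hcont : ContinuousOn (fun x => β x θ) (Set.Icc 0 t) :=
        hβ.continuousOn.comp (continuous_id.prodMk continuous_const).continuousOn
          (fun x hx => ⟨hIccS hx, trivial⟩)
      exact (hcont x₀ hx₀).mul continuousWithinAt_const
  obtain ⟨c', _, hc'⟩ := exists_hasDerivAt_eq_slope
    (fun s => ∫ θ in (0:ℝ)..(2 * π), β s θ * g θ) (fun _ => 0) hpos hFcont
    (fun x hx => hF0 x hx)
  have h := hc'.symm
  rw [div_eq_zero_iff] at h
  rcases h with h | h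
  · linarith [h]
  · exfalso; simp at h; linarith

theorem ell_convexity_preserved
    (T : ℝ≥0∞) (hT : 0 < T)
    (lam : ℝ → ℝ) (β : ℝ → ℝ → ℝ)
    (hlam : ContDiffOn ℝ (⊤ : ℕ∞) lam (timeDom T))
    (hβ : ContDiffOn ℝ (⊤ : ℕ∞) (Function.uncurry β) (timeDom T ×ˢ (Set.univ : Set ℝ)))
    (hper : ∀ t ∈ timeDom T, Function.Periodic (β t) (2 * π))
    (hpde : ∀ t ∈ timeDom T, ∀ θ : ℝ,
      derivWithin (fun s => β s θ) (timeDom T) t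
        = iteratedDeriv 2 (β t) θ + β t θ - lam t)
    (hcos0 : ∫ θ in (0:ℝ)..(2 * π), β 0 θ * Real.cos θ = 0)
    (hsin0 : ∫ θ in (0:ℝ)..(2 * π), β 0 θ * Real.sin θ = 0) :
    ∀ t ∈ timeDom T,
      (∫ θ in (0:ℝ)..(2 * π), β t θ * Real.cos θ = 0) ∧
      (∫ θ in (0:ℝ)..(2 * π), β t θ * Real.sin θ = 0) := by
  intro t ht
  constructor
  · have hc := key_const T lam β hβ hper hpde Real.cos Real.contDiff_cos
      Real.cos_periodic
      (by intro θ; simp [Real.deriv_cos', Real.deriv_sin])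
      (by simp [integral_cos]) t ht
    exact hc.trans hcos0
  · have hs := key_const T lam β hβ hper hpde Real.sin Real.contDiff_sin
      Real.sin_periodic
      (by intro θ; simp [Real.deriv_sin, Real.deriv_cos'])
      (by simp [integral_sin]) t ht
    exact hs.trans hsin0
end

section
/- Let T ∈ (0,∞] and let p : ℝ × [0,T) → ℝ be smooth, 2π-periodic in θ, with L(t) = ∫₀^{2π} p(θ,t) dθ > 0 for all t, solving the area-preserving inverse curvature flow ∂p/∂t = ∂²p/∂θ² + p − (1/L(t))∫₀^{2π} β(θ,t)² dθ, where β = p + ∂²p/∂θ². Then the algebraic area A(t) = (1/2)∫₀^{2π} p(θ,t)β(θ,t) dθ is constant in t, and the algebraic length L(t) is non-increasing in t. -/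
open Real Filter
open scoped ENNReal

/-- The curvature quantity `β = p + p''` of an ℓ-convex Legendre curve (ℓ = 1)
with support function `p`. -/
noncomputable def betaF (p : ℝ → ℝ) : ℝ → ℝ := fun θ => p θ + iteratedDeriv 2 p θ

/-- The algebraic length `L = ∫₀^{2π} p`. -/
noncomputable def algLen (p : ℝ → ℝ) : ℝ := ∫ θ in (0:ℝ)..(2 * π), p θ

/-- The algebraic area `A = (1/2) ∫₀^{2π} p β`. -/
noncomputable def algArea (p : ℝ → ℝ) : ℝ :=
  (1 / 2) * ∫ θ in (0:ℝ)..(2 * π), p θ * betaF p θ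

section Helpers
open MeasureTheory Set
open scoped Topology

namespace AC

variable {S : Set ℝ} {f : ℝ × ℝ → ℝ} {u θ : ℝ}

lemma slice_t (hf : DifferentiableWithinAt ℝ f (S ×ˢ (univ : Set ℝ)) (u, θ)) :
    HasDerivWithinAt (fun s => f (s, θ))
      (fderivWithin ℝ f (S ×ˢ (univ : Set ℝ)) (u, θ) (1, 0)) S u := by
  have h1 : HasDerivWithinAt (fun s : ℝ => (s, θ)) ((1:ℝ), (0:ℝ)) S u :=
    ((hasDerivAt_id u).prodMk (hasDerivAt_const u θ)).hasDerivWithinAt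
  exact hf.hasFDerivWithinAt.comp_hasDerivWithinAt u h1 (fun s hs => (⟨hs, mem_univ _⟩ : (s, θ) ∈ S ×ˢ (univ : Set ℝ)))

lemma slice_th (hf : DifferentiableWithinAt ℝ f (S ×ˢ (univ : Set ℝ)) (u, θ)) (hu : u ∈ S) :
    HasDerivAt (fun t => f (u, t))
      (fderivWithin ℝ f (S ×ˢ (univ : Set ℝ)) (u, θ) (0, 1)) θ := by
  have h1 : HasDerivAt (fun t : ℝ => (u, t)) ((0:ℝ), (1:ℝ)) θ :=
    (hasDerivAt_const θ u).prodMk (hasDerivAt_id θ)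
  have h2 := hf.hasFDerivWithinAt.comp_hasDerivWithinAt θ
    (h1.hasDerivWithinAt (s := univ)) (fun t _ => ⟨hu, mem_univ _⟩)
  rw [hasDerivWithinAt_univ] at h2
  exact h2

end AC
namespace AC
variable {S : Set ℝ} {f : ℝ × ℝ → ℝ} {u θ : ℝ} {v w : ℝ × ℝ} {n m : ℕ∞}

lemma pd_contDiffOn {g : ℝ × ℝ → ℝ} (hud : UniqueDiffOn ℝ (S ×ˢ (univ : Set ℝ)))
    (hg : ContDiffOn ℝ (m + 1) g (S ×ˢ (univ : Set ℝ))) (v : ℝ × ℝ) :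
    ContDiffOn ℝ m (fun x => fderivWithin ℝ g (S ×ˢ (univ : Set ℝ)) x v)
      (S ×ˢ (univ : Set ℝ)) := by
  have h1 : ContDiffOn ℝ m (fderivWithin ℝ g (S ×ˢ (univ : Set ℝ))) (S ×ˢ (univ : Set ℝ)) :=
    hg.fderivWithin hud (by exact_mod_cast le_rfl)
  exact ((ContinuousLinearMap.apply ℝ ℝ v).contDiff).comp_contDiffOn h1

lemma pd_fderivWithin {g : ℝ × ℝ → ℝ} {x : ℝ × ℝ} (hud : UniqueDiffOn ℝ (S ×ˢ (univ : Set ℝ)))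
    (hg : ContDiffOn ℝ 2 g (S ×ˢ (univ : Set ℝ))) (hx : x ∈ S ×ˢ (univ : Set ℝ)) (v w : ℝ × ℝ) :
    fderivWithin ℝ (fun y => fderivWithin ℝ g (S ×ˢ (univ : Set ℝ)) y v)
        (S ×ˢ (univ : Set ℝ)) x w
      = fderivWithin ℝ (fderivWithin ℝ g (S ×ˢ (univ : Set ℝ)))
          (S ×ˢ (univ : Set ℝ)) x w v := by
  have h1 : ContDiffOn ℝ 1 (fderivWithin ℝ g (S ×ˢ (univ : Set ℝ))) (S ×ˢ (univ : Set ℝ)) :=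
    hg.fderivWithin hud (by norm_num)
  have h2 : DifferentiableWithinAt ℝ (fderivWithin ℝ g (S ×ˢ (univ : Set ℝ)))
      (S ×ˢ (univ : Set ℝ)) x := (h1.differentiableOn one_ne_zero) x hx
  have h3 := ((ContinuousLinearMap.apply ℝ ℝ v).hasFDerivAt.comp_hasFDerivWithinAt x
    h2.hasFDerivWithinAt)
  have h4 : HasFDerivWithinAt (fun y => fderivWithin ℝ g (S ×ˢ (univ : Set ℝ)) y v)
      (((ContinuousLinearMap.apply ℝ ℝ v).comp
        (fderivWithin ℝ (fderivWithin ℝ g (S ×ˢ (univ : Set ℝ))) (S ×ˢ (univ : Set ℝ)) x)))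
      (S ×ˢ (univ : Set ℝ)) x := h3
  rw [h4.fderivWithin (hud x hx)]
  rfl

lemma clairaut {g : ℝ × ℝ → ℝ} {x : ℝ × ℝ} (hud : UniqueDiffOn ℝ (S ×ˢ (univ : Set ℝ)))
    (hg : ContDiffOn ℝ 2 g (S ×ˢ (univ : Set ℝ))) (hx : x ∈ S ×ˢ (univ : Set ℝ))
    (hcl : x.1 ∈ closure (interior S)) (v w : ℝ × ℝ) :
    fderivWithin ℝ (fun y => fderivWithin ℝ g (S ×ˢ (univ : Set ℝ)) y v)
        (S ×ˢ (univ : Set ℝ)) x w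
      = fderivWithin ℝ (fun y => fderivWithin ℝ g (S ×ˢ (univ : Set ℝ)) y w)
        (S ×ˢ (univ : Set ℝ)) x v := by
  rw [pd_fderivWithin hud hg hx, pd_fderivWithin hud hg hx]
  have hcl2 : x ∈ closure (interior (S ×ˢ (univ : Set ℝ))) := by
    rw [interior_prod_eq, interior_univ, closure_prod_eq, closure_univ]
    exact ⟨hcl, mem_univ _⟩
  exact ((hg x hx).isSymmSndFDerivWithinAt (by norm_num) hud hcl2 hx) w v

end AC
namespace AC
variable {S : Set ℝ}

lemma ftc_time {h h' : ℝ → ℝ} {t0 t1 : ℝ} (hS : Convex ℝ S) (h0 : t0 ∈ S) (h1 : t1 ∈ S)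
    (h01 : t0 ≤ t1) (hd : ∀ u ∈ S, HasDerivWithinAt h (h' u) S u)
    (hc : ContinuousOn h' (Icc t0 t1)) :
    ∫ u in t0..t1, h' u = h t1 - h t0 := by
  have hsub : Icc t0 t1 ⊆ S := hS.ordConnected.out h0 h1
  apply intervalIntegral.integral_eq_sub_of_hasDeriv_right_of_le h01
  · exact fun x hx => ((hd x (hsub hx)).continuousWithinAt).mono hsub
  · intro x hx
    refine (hd x (hsub ⟨hx.1.le, hx.2.le⟩)).mono_of_mem_nhdsWithin ?_
    rw [mem_nhdsWithin]
    exact ⟨Iio t1, isOpen_Iio, hx.2, fun y hy =>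
      hsub ⟨hx.1.le.trans hy.2.le, hy.1.le⟩⟩
  · exact (hc.mono (by rw [uIcc_of_le h01])).intervalIntegrable

end AC
namespace AC
variable {S : Set ℝ}

lemma cont_param {g : ℝ × ℝ → ℝ} {a b : ℝ}
    (hab : Icc a b ⊆ S) (hgc : ContinuousOn g (S ×ˢ (univ : Set ℝ))) :
    ContinuousOn (fun u => ∫ θ in (0:ℝ)..(2 * π), g (u, θ)) (Icc a b) := by
  rcases le_or_gt a b with h | h
  swap
  · rw [Icc_eq_empty_of_lt h]; exact continuousOn_empty _
  have hK : IsCompact (Icc a b ×ˢ Icc (0:ℝ) (2 * π)) := isCompact_Icc.prod isCompact_Icc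
  have hgK : ContinuousOn g (Icc a b ×ˢ Icc (0:ℝ) (2 * π)) :=
    hgc.mono (Set.prod_mono hab (subset_univ _))
  obtain ⟨M, hM⟩ : ∃ M, ∀ x ∈ Icc a b ×ˢ Icc (0:ℝ) (2 * π), ‖g x‖ ≤ M := by
    rcases hK.exists_bound_of_continuousOn hgK with ⟨M, hM⟩
    exact ⟨M, hM⟩
  intro u0 hu0
  apply intervalIntegral.continuousWithinAt_of_dominated_interval
    (bound := fun _ => M) (F := fun u θ => g (u, θ))
  · filter_upwards [self_mem_nhdsWithin] with x hx
    have : Continuous fun θ => g (x, θ) := by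
      rw [← continuousOn_univ]
      exact hgc.comp (Continuous.continuousOn (by continuity))
        (fun θ _ => ⟨hab hx, mem_univ _⟩)
    exact this.aestronglyMeasurable
  · filter_upwards [self_mem_nhdsWithin] with x hx
    refine Eventually.of_forall fun t ht => ?_
    exact hM (x, t) ⟨hx, Ioc_subset_Icc_self (by simpa [uIoc_of_le Real.two_pi_pos.le] using ht)⟩
  · exact intervalIntegrable_const
  · refine Eventually.of_forall fun t _ => ?_
    have hc2 : ContinuousWithinAt (fun x : ℝ => (x, t)) (Icc a b) u0 :=
      (continuous_id.prodMk continuous_const).continuousWithinAt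
    exact ContinuousWithinAt.comp (t := S ×ˢ (univ : Set ℝ))
      (hgc (u0, t) ⟨hab hu0, mem_univ _⟩) hc2 (fun x hx => ⟨hab hx, mem_univ _⟩)

lemma swap_int {g : ℝ × ℝ → ℝ} {a b : ℝ} (hab : a ≤ b)
    (hg : ContinuousOn g (Icc a b ×ˢ Icc (0:ℝ) (2 * π))) :
    ∫ θ in (0:ℝ)..(2 * π), (∫ u in a..b, g (u, θ)) = ∫ u in a..b, ∫ θ in (0:ℝ)..(2 * π), g (u, θ) := by
  have h2π : (0:ℝ) ≤ 2 * π := Real.two_pi_pos.le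
  have hint : IntegrableOn (fun z : ℝ × ℝ => g (z.2, z.1)) (Ioc (0:ℝ) (2*π) ×ˢ Ioc a b) := by
    have hc : ContinuousOn (fun z : ℝ × ℝ => g (z.2, z.1)) (Icc (0:ℝ) (2*π) ×ˢ Icc a b) :=
      hg.comp (Continuous.continuousOn (by continuity)) (fun z hz => ⟨hz.2, hz.1⟩)
    exact (hc.integrableOn_compact (isCompact_Icc.prod isCompact_Icc)).mono_set
      (Set.prod_mono Ioc_subset_Icc_self Ioc_subset_Icc_self)
  rw [intervalIntegral.integral_of_le h2π, intervalIntegral.integral_of_le hab]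
  simp_rw [intervalIntegral.integral_of_le hab, intervalIntegral.integral_of_le h2π]
  apply MeasureTheory.integral_integral_swap
  rw [Function.uncurry_def]
  rw [MeasureTheory.Measure.prod_restrict]
  rwa [IntegrableOn, MeasureTheory.Measure.volume_eq_prod] at hint

end AC
namespace AC
variable {S : Set ℝ}

lemma periodic_deriv (g : ℝ → ℝ) (hg : Function.Periodic g (2 * π)) :
    Function.Periodic (deriv g) (2 * π) := by
  intro x
  have h1 : (fun y => g (y + 2 * π)) = g := funext fun y => hg y
  calc deriv g (x + 2 * π) = deriv (fun y => g (y + 2 * π)) x := by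
        rw [deriv_comp_add_const]
    _ = deriv g x := by rw [h1]

lemma per_integral_deriv {g g' : ℝ → ℝ} (hd : ∀ θ, HasDerivAt g (g' θ) θ)
    (hc : Continuous g') (hper : Function.Periodic g (2 * π)) :
    ∫ θ in (0:ℝ)..(2 * π), g' θ = 0 := by
  rw [intervalIntegral.integral_eq_sub_of_hasDerivAt (fun x _ => hd x)
    (hc.intervalIntegrable _ _)]
  have := hper 0
  rw [zero_add] at this
  rw [this, sub_self]

lemma contTh {g : ℝ × ℝ → ℝ} (hg : ContinuousOn g (S ×ˢ (univ : Set ℝ))) {u : ℝ}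
    (hu : u ∈ S) : Continuous fun θ => g (u, θ) := by
  rw [← continuousOn_univ]
  exact hg.comp (Continuous.continuousOn (by continuity)) (fun θ _ => ⟨hu, mem_univ _⟩)

lemma contT {g : ℝ × ℝ → ℝ} (hg : ContinuousOn g (S ×ˢ (univ : Set ℝ))) {a b : ℝ}
    (hsub : Icc a b ⊆ S) (θ : ℝ) : ContinuousOn (fun u => g (u, θ)) (Icc a b) :=
  hg.comp ((continuous_id.prodMk continuous_const).continuousOn)
    (fun u hu => ⟨hsub hu, mem_univ _⟩)

end AC
namespace AC

lemma main_aux (S : Set ℝ) (p : ℝ → ℝ → ℝ)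
    (hconv : Convex ℝ S) (hud : UniqueDiffOn ℝ S)
    (hcl : ∀ u ∈ S, u ∈ closure (interior S))
    (hp : ContDiffOn ℝ ((3:ℕ∞) + 1) (Function.uncurry p) (S ×ˢ (univ : Set ℝ)))
    (hper : ∀ t ∈ S, Function.Periodic (p t) (2 * π))
    (hL : ∀ t ∈ S, 0 < algLen (p t))
    (hpde : ∀ t ∈ S, ∀ θ : ℝ,
      derivWithin (fun s => p s θ) S t
        = iteratedDeriv 2 (p t) θ + p t θ
          - (1 / algLen (p t)) * ∫ x in (0:ℝ)..(2 * π), (betaF (p t) x) ^ 2)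
    (t0 t1 : ℝ) (h0 : t0 ∈ S) (h1 : t1 ∈ S) (h01 : t0 ≤ t1) :
    algArea (p t1) = algArea (p t0) ∧ algLen (p t1) ≤ algLen (p t0) := by
  have hπ : (0:ℝ) < 2 * π := Real.two_pi_pos
  set F := Function.uncurry p with hFdef
  set Ω := S ×ˢ (univ : Set ℝ) with hΩdef
  have hudΩ : UniqueDiffOn ℝ Ω := hud.prod uniqueDiffOn_univ
  set Q : ℝ × ℝ → ℝ := fun x => fderivWithin ℝ F Ω x (1, 0) with hQdef
  set R : ℝ × ℝ → ℝ := fun x => fderivWithin ℝ F Ω x (0, 1) with hRdef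
  set R2 : ℝ × ℝ → ℝ := fun x => fderivWithin ℝ R Ω x (0, 1) with hR2def
  set QT : ℝ × ℝ → ℝ := fun x => fderivWithin ℝ Q Ω x (0, 1) with hQTdef
  have hQ3 : ContDiffOn ℝ 3 Q Ω := pd_contDiffOn hudΩ hp _
  have hR3 : ContDiffOn ℝ 3 R Ω := pd_contDiffOn hudΩ hp _
  have hQ2' : ContDiffOn ℝ ((1:ℕ∞) + 1) Q Ω := hQ3.of_le (by norm_num)
  have hR2' : ContDiffOn ℝ ((1:ℕ∞) + 1) R Ω := hR3.of_le (by norm_num)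
  have hR2c : ContDiffOn ℝ 1 R2 Ω := pd_contDiffOn hudΩ hR2' _
  have hQTc : ContDiffOn ℝ 1 QT Ω := pd_contDiffOn hudΩ hQ2' _
  have hFc : ContinuousOn F Ω := hp.continuousOn
  have hQc : ContinuousOn Q Ω := hQ3.continuousOn
  have hRc : ContinuousOn R Ω := hR3.continuousOn
  have hR2cc : ContinuousOn R2 Ω := hR2c.continuousOn
  have hQTcc : ContinuousOn QT Ω := hQTc.continuousOn
  have hFd : DifferentiableOn ℝ F Ω := hp.differentiableOn (by norm_num)
  have hQd : DifferentiableOn ℝ Q Ω := hQ3.differentiableOn (by norm_num)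
  have hRd : DifferentiableOn ℝ R Ω := hR3.differentiableOn (by norm_num)
  have hmem : ∀ {u : ℝ} (θ : ℝ), u ∈ S → ((u, θ) ∈ Ω) := fun _ hu => ⟨hu, mem_univ _⟩
  have sQ : ∀ {u : ℝ} (θ : ℝ), u ∈ S → HasDerivWithinAt (fun s => p s θ) (Q (u, θ)) S u :=
    fun θ hu => slice_t (hFd _ (hmem θ hu))
  have sR : ∀ {u : ℝ} (θ : ℝ), u ∈ S → HasDerivAt (p u) (R (u, θ)) θ :=
    fun θ hu => slice_th (hFd _ (hmem θ hu)) hu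
  have sR2 : ∀ {u : ℝ} (θ : ℝ), u ∈ S → HasDerivAt (fun t => R (u, t)) (R2 (u, θ)) θ :=
    fun θ hu => slice_th (hRd _ (hmem θ hu)) hu
  have sQT : ∀ {u : ℝ} (θ : ℝ), u ∈ S → HasDerivAt (fun t => Q (u, t)) (QT (u, θ)) θ :=
    fun θ hu => slice_th (hQd _ (hmem θ hu)) hu
  have sRT : ∀ {u : ℝ} (θ : ℝ), u ∈ S → HasDerivWithinAt (fun s => R (s, θ)) (QT (u, θ)) S u := by
    intro u θ hu
    have h1 := slice_t (S := S) (hRd _ (hmem θ hu))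
    have h2 : fderivWithin ℝ R Ω (u, θ) (1, 0) = QT (u, θ) := by
      simp only [hQTdef, hQdef, hRdef]
      exact (clairaut hudΩ (hp.of_le (by norm_num)) (hmem θ hu) (hcl u hu) (1, 0) (0, 1)).symm
    rwa [h2] at h1
  have hderivslice : ∀ u ∈ S, deriv (p u) = fun θ => R (u, θ) :=
    fun u hu => funext fun θ => (sR θ hu).deriv
  have hperR : ∀ u ∈ S, Function.Periodic (fun θ => R (u, θ)) (2 * π) := by
    intro u hu
    rw [← hderivslice u hu]
    exact periodic_deriv _ (hper u hu)
  have hderivslice2 : ∀ u ∈ S, deriv (fun t => R (u, t)) = fun θ => R2 (u, θ) :=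
    fun u hu => funext fun θ => (sR2 θ hu).deriv
  have hperR2 : ∀ u ∈ S, Function.Periodic (fun θ => R2 (u, θ)) (2 * π) := by
    intro u hu
    rw [← hderivslice2 u hu]
    exact periodic_deriv _ (hperR u hu)
  have hiter2 : ∀ u ∈ S, ∀ θ : ℝ, iteratedDeriv 2 (p u) θ = R2 (u, θ) := by
    intro u hu θ
    have : iteratedDeriv 2 (p u) θ = deriv (deriv (p u)) θ := by
      rw [show (2:ℕ) = 1 + 1 from rfl, iteratedDeriv_succ, iteratedDeriv_one]
    rw [this, hderivslice u hu, hderivslice2 u hu]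
  have hbetaB : ∀ u ∈ S, betaF (p u) = fun θ => F (u, θ) + R2 (u, θ) := by
    intro u hu
    funext θ
    simp only [betaF, hiter2 u hu θ]
    rfl
  have hQval : ∀ u ∈ S, ∀ θ : ℝ, Q (u, θ) = F (u, θ) + R2 (u, θ)
      - (1 / algLen (p u)) * ∫ x in (0:ℝ)..(2 * π), (betaF (p u) x) ^ 2 := by
    intro u hu θ
    have h1 := hpde u hu θ
    rw [(sQ θ hu).derivWithin (hud u hu)] at h1
    rw [h1, hiter2 u hu θ]
    have : F (u, θ) = p u θ := rfl
    rw [this]; ring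
  have hperQ : ∀ u ∈ S, Function.Periodic (fun θ => Q (u, θ)) (2 * π) := by
    intro u hu
    have : (fun θ => Q (u, θ)) = fun θ => F (u, θ) + R2 (u, θ)
        - (1 / algLen (p u)) * ∫ x in (0:ℝ)..(2 * π), (betaF (p u) x) ^ 2 :=
      funext fun θ => hQval u hu θ
    rw [this]
    intro x
    simp only
    have e2 : R2 (u, x + 2 * π) = R2 (u, x) := hperR2 u hu x
    rw [show F (u, x + 2 * π) = p u (x + 2 * π) from rfl, hper u hu x, e2]
    rfl
  have cF : ∀ {u : ℝ}, u ∈ S → Continuous (fun θ => F (u, θ)) := fun hu => contTh hFc hu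
  have cQ : ∀ {u : ℝ}, u ∈ S → Continuous (fun θ => Q (u, θ)) := fun hu => contTh hQc hu
  have cR : ∀ {u : ℝ}, u ∈ S → Continuous (fun θ => R (u, θ)) := fun hu => contTh hRc hu
  have cR2 : ∀ {u : ℝ}, u ∈ S → Continuous (fun θ => R2 (u, θ)) := fun hu => contTh hR2cc hu
  have cQT : ∀ {u : ℝ}, u ∈ S → Continuous (fun θ => QT (u, θ)) := fun hu => contTh hQTcc hu
  have key1 : ∀ u ∈ S, (∫ θ in (0:ℝ)..(2 * π), R2 (u, θ)) = 0 := fun u hu =>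
    per_integral_deriv (fun θ => sR2 θ hu) (cR2 hu) (hperR u hu)
  have keyB : ∀ u ∈ S, (∫ θ in (0:ℝ)..(2 * π), betaF (p u) θ) = algLen (p u) := by
    intro u hu
    simp only [hbetaB u hu]
    rw [intervalIntegral.integral_add ((cF hu).intervalIntegrable _ _)
      ((cR2 hu).intervalIntegrable _ _), key1 u hu, add_zero]
    rfl
  have hbint : ∀ u ∈ S, IntervalIntegrable (betaF (p u)) volume 0 (2 * π) := by
    intro u hu
    rw [hbetaB u hu]
    exact ((cF hu).add (cR2 hu)).intervalIntegrable _ _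
  have hbint2 : ∀ u ∈ S, IntervalIntegrable (fun θ => betaF (p u) θ ^ 2) volume 0 (2 * π) := by
    intro u hu
    rw [hbetaB u hu]
    exact (((cF hu).add (cR2 hu)).pow 2).intervalIntegrable _ _
  have keyQint : ∀ u ∈ S, (∫ θ in (0:ℝ)..(2 * π), Q (u, θ)) ≤ 0 := by
    intro u hu
    have hLpos := hL u hu
    have hQint : (∫ θ in (0:ℝ)..(2 * π), Q (u, θ))
        = algLen (p u) - (2 * π) * ((1 / algLen (p u))
            * ∫ x in (0:ℝ)..(2 * π), (betaF (p u) x) ^ 2) := by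
      have e : ∀ θ : ℝ, Q (u, θ) = betaF (p u) θ
          - (1 / algLen (p u)) * ∫ x in (0:ℝ)..(2 * π), (betaF (p u) x) ^ 2 := by
        intro θ
        rw [hQval u hu θ, hbetaB u hu]
      rw [intervalIntegral.integral_congr (fun θ _ => e θ)]
      rw [intervalIntegral.integral_sub (hbint u hu) intervalIntegrable_const]
      rw [keyB u hu, intervalIntegral.integral_const]
      rw [sub_zero, smul_eq_mul]
    have hCS : algLen (p u) ^ 2 ≤ (2 * π) * ∫ x in (0:ℝ)..(2 * π), (betaF (p u) x) ^ 2 := by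
      have h0 : (0:ℝ) ≤ ∫ θ in (0:ℝ)..(2 * π), ((2 * π) * betaF (p u) θ - algLen (p u)) ^ 2 :=
        intervalIntegral.integral_nonneg hπ.le (fun x _ => sq_nonneg _)
      have e : ∀ θ : ℝ, ((2 * π) * betaF (p u) θ - algLen (p u)) ^ 2
          = ((4 * π ^ 2) * betaF (p u) θ ^ 2
              - (4 * π * algLen (p u)) * betaF (p u) θ) + algLen (p u) ^ 2 := by
        intro θ; ring
      rw [intervalIntegral.integral_congr (fun θ _ => e θ)] at h0
      rw [intervalIntegral.integral_add (((hbint2 u hu).const_mul _).sub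
        ((hbint u hu).const_mul _)) intervalIntegrable_const] at h0
      rw [intervalIntegral.integral_sub ((hbint2 u hu).const_mul _)
        ((hbint u hu).const_mul _)] at h0
      rw [intervalIntegral.integral_const_mul, intervalIntegral.integral_const_mul,
        keyB u hu, intervalIntegral.integral_const] at h0
      rw [smul_eq_mul, sub_zero] at h0
      nlinarith [h0, hπ]
    rw [hQint, sub_nonpos]
    rw [show (2 * π) * ((1 / algLen (p u)) * ∫ x in (0:ℝ)..(2 * π), (betaF (p u) x) ^ 2)
      = ((2 * π) * ∫ x in (0:ℝ)..(2 * π), (betaF (p u) x) ^ 2) / algLen (p u) by ring]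
    rw [le_div_iff₀ hLpos]
    nlinarith [hCS, hLpos]
  have keyArea : ∀ u ∈ S,
      (∫ θ in (0:ℝ)..(2 * π), (F (u, θ) * Q (u, θ) - R (u, θ) * QT (u, θ))) = 0 := by
    intro u hu
    have hLpos := hL u hu
    have hprod : (∫ θ in (0:ℝ)..(2 * π), (R2 (u, θ) * Q (u, θ) + R (u, θ) * QT (u, θ))) = 0 := by
      apply per_integral_deriv (g := fun θ => R (u, θ) * Q (u, θ))
      · exact fun θ => (sR2 θ hu).mul (sQT θ hu)
      · exact ((cR2 hu).mul (cQ hu)).add ((cR hu).mul (cQT hu))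
      · exact (hperR u hu).mul (hperQ u hu)
    have e : ∀ θ : ℝ, F (u, θ) * Q (u, θ) - R (u, θ) * QT (u, θ)
        = ((F (u, θ) + R2 (u, θ)) * Q (u, θ))
            - (R2 (u, θ) * Q (u, θ) + R (u, θ) * QT (u, θ)) := by intro θ; ring
    rw [intervalIntegral.integral_congr (fun θ _ => e θ)]
    rw [intervalIntegral.integral_sub (f := fun θ => (F (u, θ) + R2 (u, θ)) * Q (u, θ))
      (g := fun θ => R2 (u, θ) * Q (u, θ) + R (u, θ) * QT (u, θ))
      (((((cF hu).add (cR2 hu))).mul (cQ hu)).intervalIntegrable _ _)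
      ((((cR2 hu).mul (cQ hu)).add ((cR hu).mul (cQT hu))).intervalIntegrable _ _)]
    rw [hprod, sub_zero]
    have e2 : ∀ θ : ℝ, (F (u, θ) + R2 (u, θ)) * Q (u, θ)
        = betaF (p u) θ ^ 2 - ((1 / algLen (p u)
            * ∫ x in (0:ℝ)..(2 * π), (betaF (p u) x) ^ 2)) * betaF (p u) θ := by
      intro θ
      rw [hQval u hu θ, hbetaB u hu]
      ring
    rw [intervalIntegral.integral_congr (fun θ _ => e2 θ)]
    rw [intervalIntegral.integral_sub (hbint2 u hu) ((hbint u hu).const_mul _)]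
    rw [intervalIntegral.integral_const_mul, keyB u hu]
    field_simp
    simp
  have area2 : ∀ u ∈ S, 2 * algArea (p u)
      = ∫ θ in (0:ℝ)..(2 * π), (F (u, θ) * F (u, θ) - R (u, θ) * R (u, θ)) := by
    intro u hu
    have hz : (∫ θ in (0:ℝ)..(2 * π), (R (u, θ) * R (u, θ) + F (u, θ) * R2 (u, θ))) = 0 := by
      apply per_integral_deriv (g := fun θ => F (u, θ) * R (u, θ))
      · intro θ
        exact (sR θ hu).mul (sR2 θ hu)
      · exact ((cR hu).mul (cR hu)).add ((cF hu).mul (cR2 hu))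
      · exact (hper u hu).mul (hperR u hu)
    have e : ∀ θ : ℝ, p u θ * betaF (p u) θ
        = (F (u, θ) * F (u, θ) - R (u, θ) * R (u, θ))
            + (R (u, θ) * R (u, θ) + F (u, θ) * R2 (u, θ)) := by
      intro θ
      rw [hbetaB u hu]
      show F (u, θ) * (F (u, θ) + R2 (u, θ)) = _
      ring
    have : algArea (p u) = (1 / 2) * ∫ θ in (0:ℝ)..(2 * π),
        ((F (u, θ) * F (u, θ) - R (u, θ) * R (u, θ))
          + (R (u, θ) * R (u, θ) + F (u, θ) * R2 (u, θ))) := by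
      rw [algArea]
      rw [intervalIntegral.integral_congr (fun θ _ => e θ)]
    rw [this]
    rw [intervalIntegral.integral_add (f := fun θ => F (u, θ) * F (u, θ) - R (u, θ) * R (u, θ))
      (g := fun θ => R (u, θ) * R (u, θ) + F (u, θ) * R2 (u, θ))
      ((((cF hu).mul (cF hu)).sub ((cR hu).mul (cR hu))).intervalIntegrable _ _)
      ((((cR hu).mul (cR hu)).add ((cF hu).mul (cR2 hu))).intervalIntegrable _ _)]
    rw [hz, add_zero]
    ring
  have hsub : Icc t0 t1 ⊆ S := hconv.ordConnected.out h0 h1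
  have prodsub : Icc t0 t1 ×ˢ Icc (0:ℝ) (2 * π) ⊆ Ω := by
    rw [hΩdef]; exact prod_mono hsub (subset_univ _)
  have lenFTC : ∀ θ : ℝ, (∫ u in t0..t1, Q (u, θ)) = p t1 θ - p t0 θ := fun θ =>
    ftc_time hconv h0 h1 h01 (fun u hu => sQ θ hu) (contT hQc hsub θ)
  have lenswap := swap_int (g := Q) h01 (hQc.mono prodsub)
  have lendiff : algLen (p t1) - algLen (p t0)
      = ∫ u in t0..t1, ∫ θ in (0:ℝ)..(2 * π), Q (u, θ) := by
    rw [← lenswap]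
    have e1 : algLen (p t1) = ∫ θ in (0:ℝ)..(2 * π), F (t1, θ) := rfl
    have e2 : algLen (p t0) = ∫ θ in (0:ℝ)..(2 * π), F (t0, θ) := rfl
    rw [e1, e2, ← intervalIntegral.integral_sub ((cF h1).intervalIntegrable _ _)
      ((cF h0).intervalIntegrable _ _)]
    exact intervalIntegral.integral_congr (fun θ _ => (lenFTC θ).symm)
  have lenle : algLen (p t1) ≤ algLen (p t0) := by
    have hn : (0:ℝ) ≤ ∫ u in t0..t1, -(∫ θ in (0:ℝ)..(2 * π), Q (u, θ)) :=
      intervalIntegral.integral_nonneg h01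
        (fun u hu => neg_nonneg.2 (keyQint u (hsub hu)))
    rw [intervalIntegral.integral_neg] at hn
    linarith [lendiff, hn]
  set W : ℝ × ℝ → ℝ := fun x => (Q x * F x + F x * Q x) - (QT x * R x + R x * QT x) with hWdef
  have sW : ∀ {u : ℝ} (θ : ℝ), u ∈ S →
      HasDerivWithinAt (fun s => F (s, θ) * F (s, θ) - R (s, θ) * R (s, θ)) (W (u, θ)) S u :=
    fun θ hu => ((sQ θ hu).mul (sQ θ hu)).sub ((sRT θ hu).mul (sRT θ hu))
  have hWc : ContinuousOn W Ω :=
    ((hQc.mul hFc).add (hFc.mul hQc)).sub ((hQTcc.mul hRc).add (hRc.mul hQTcc))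
  have areaFTC : ∀ θ : ℝ, (∫ u in t0..t1, W (u, θ))
      = (F (t1, θ) * F (t1, θ) - R (t1, θ) * R (t1, θ))
        - (F (t0, θ) * F (t0, θ) - R (t0, θ) * R (t0, θ)) := fun θ =>
    ftc_time hconv h0 h1 h01 (fun u hu => sW θ hu) (contT hWc hsub θ)
  have areaswap := swap_int (g := W) h01 (hWc.mono prodsub)
  have inner0 : ∀ u ∈ S, (∫ θ in (0:ℝ)..(2 * π), W (u, θ)) = 0 := by
    intro u hu
    have e : ∀ θ : ℝ, W (u, θ) = 2 * (F (u, θ) * Q (u, θ) - R (u, θ) * QT (u, θ)) := by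
      intro θ; rw [hWdef]; ring
    rw [intervalIntegral.integral_congr (fun θ _ => e θ), intervalIntegral.integral_const_mul,
      keyArea u hu, mul_zero]
  have areaEq : algArea (p t1) = algArea (p t0) := by
    have h2 : 2 * algArea (p t1) - 2 * algArea (p t0) = 0 := by
      rw [area2 t1 h1, area2 t0 h0]
      rw [← intervalIntegral.integral_sub (f := fun θ => F (t1, θ) * F (t1, θ) - R (t1, θ) * R (t1, θ))
        (g := fun θ => F (t0, θ) * F (t0, θ) - R (t0, θ) * R (t0, θ))
        ((((cF h1).mul (cF h1)).sub ((cR h1).mul (cR h1))).intervalIntegrable _ _)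
        ((((cF h0).mul (cF h0)).sub ((cR h0).mul (cR h0))).intervalIntegrable _ _)]
      rw [intervalIntegral.integral_congr (fun θ _ => (areaFTC θ).symm)]
      rw [areaswap]
      rw [intervalIntegral.integral_congr (g := fun _ => (0:ℝ))
        (fun u hu => inner0 u (hsub (by rwa [uIcc_of_le h01] at hu)))]
      simp
    linarith
  exact ⟨areaEq, lenle⟩

end AC
end Helpers

open MeasureTheory Set in
theorem area_const_length_decreasing
    (T : ℝ≥0∞) (hT : 0 < T) (p : ℝ → ℝ → ℝ)
    (hp : ContDiffOn ℝ (⊤ : ℕ∞) (Function.uncurry p) (timeDom T ×ˢ (Set.univ : Set ℝ)))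
    (hper : ∀ t ∈ timeDom T, Function.Periodic (p t) (2 * π))
    (hL : ∀ t ∈ timeDom T, 0 < algLen (p t))
    (hpde : ∀ t ∈ timeDom T, ∀ θ : ℝ,
      derivWithin (fun s => p s θ) (timeDom T) t
        = iteratedDeriv 2 (p t) θ + p t θ
          - (1 / algLen (p t)) * ∫ x in (0:ℝ)..(2 * π), (betaF (p t) x) ^ 2) :
    (∀ s ∈ timeDom T, ∀ t ∈ timeDom T, algArea (p s) = algArea (p t)) ∧
    (∀ s ∈ timeDom T, ∀ t ∈ timeDom T, s ≤ t → algLen (p t) ≤ algLen (p s)) := by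
  have hshape : Convex ℝ (timeDom T) ∧ UniqueDiffOn ℝ (timeDom T) ∧
      (∀ u ∈ timeDom T, u ∈ closure (interior (timeDom T))) := by
    rcases eq_or_ne T ⊤ with h | h
    · have he : timeDom T = Set.Ici (0:ℝ) := by ext t; simp [timeDom, h]
      rw [he]
      refine ⟨convex_Ici 0, uniqueDiffOn_Ici 0, ?_⟩
      intro u hu
      rw [interior_Ici, closure_Ioi]
      exact hu
    · have hb : (0:ℝ) < T.toReal := ENNReal.toReal_pos hT.ne' h
      have he : timeDom T = Set.Ico 0 T.toReal := by
        ext t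
        simp only [timeDom, Set.mem_setOf_eq, Set.mem_Ico]
        constructor
        · rintro ⟨ht, hlt⟩; exact ⟨ht, (ENNReal.ofReal_lt_iff_lt_toReal ht h).1 hlt⟩
        · rintro ⟨ht, hlt⟩; exact ⟨ht, (ENNReal.ofReal_lt_iff_lt_toReal ht h).2 hlt⟩
      rw [he]
      refine ⟨convex_Ico 0 _, uniqueDiffOn_Ico 0 _, ?_⟩
      intro u hu
      rw [interior_Ico, closure_Ioo (ne_of_lt hb)]
      exact ⟨hu.1, hu.2.le⟩
  obtain ⟨hconv, hud, hcl⟩ := hshape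
  have hp' : ContDiffOn ℝ ((3:ℕ∞) + 1) (Function.uncurry p)
      (timeDom T ×ˢ (Set.univ : Set ℝ)) := hp.of_le (by exact_mod_cast le_top)
  have main := fun t0 t1 h0 h1 h01 =>
    AC.main_aux (timeDom T) p hconv hud hcl hp' hper hL hpde t0 t1 h0 h1 h01
  constructor
  · intro s hs t ht
    rcases le_total s t with h | h
    · exact ((main s t hs ht h).1).symm
    · exact (main t s ht hs h).1
  · intro s hs t ht hst
    exact (main s t hs ht hst).2
end

section
/- Let T ∈ (0,∞] and let p : ℝ × [0,T) → ℝ be smooth, 2π-periodic in θ, solving the length-preserving inverse curvature flow ∂p/∂t = ∂²p/∂θ² + p − L(t)/(2π), where L(t) = ∫₀^{2π} p(θ,t) dθ and β = p + ∂²p/∂θ². Then L(t) = L(0) for all t ∈ [0,T), and the algebraic area A(t) = (1/2)∫₀^{2π} p(θ,t)β(θ,t) dθ is non-decreasing in t; indeed dA/dt = ∫₀^{2π} β(θ,t)² dθ − L(t)²/(2π) ≥ 0. -/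
open Real Filter MeasureTheory Metric intervalIntegral
open scoped ENNReal Topology Interval

private lemma periodic_deriv_aux (f : ℝ → ℝ) (c : ℝ) (h : Function.Periodic f c) :
    Function.Periodic (deriv f) c := fun x => by
  have h2 : (fun y => f (y + c)) = f := funext h
  calc deriv f (x + c) = deriv (fun y => f (y + c)) x := (deriv_comp_add_const f c x).symm
  _ = deriv f x := by rw [h2]

theorem length_const_area_increasing
    (T : ℝ≥0∞) (hT : 0 < T) (p : ℝ → ℝ → ℝ)
    (hp : ContDiffOn ℝ (⊤ : ℕ∞) (Function.uncurry p) (timeDom T ×ˢ (Set.univ : Set ℝ)))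
    (hper : ∀ t ∈ timeDom T, Function.Periodic (p t) (2 * π))
    (hpde : ∀ t ∈ timeDom T, ∀ θ : ℝ,
      derivWithin (fun s => p s θ) (timeDom T) t
        = iteratedDeriv 2 (p t) θ + p t θ - algLen (p t) / (2 * π)) :
    (∀ t ∈ timeDom T, algLen (p t) = algLen (p 0)) ∧
    (∀ s ∈ timeDom T, ∀ t ∈ timeDom T, s ≤ t → algArea (p s) ≤ algArea (p t)) ∧
    (∀ t ∈ timeDom T,
      HasDerivWithinAt (fun s => algArea (p s))
        ((∫ θ in (0:ℝ)..(2 * π), (betaF (p t) θ) ^ 2) - (algLen (p t)) ^ 2 / (2 * π))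
        (timeDom T) t ∧
      0 ≤ (∫ θ in (0:ℝ)..(2 * π), (betaF (p t) θ) ^ 2) - (algLen (p t)) ^ 2 / (2 * π)) := by
  have hπ : (0:ℝ) < 2 * π := by positivity
  set D : Set ℝ := timeDom T with hDdef
  set S : Set (ℝ × ℝ) := D ×ˢ (Set.univ : Set ℝ) with hSdef
  -- cast facts
  have hone : (1 : WithTop ℕ∞) ≤ ((⊤:ℕ∞) : WithTop ℕ∞) := by
    rw [show ((1:WithTop ℕ∞)) = ((1:ℕ∞) : WithTop ℕ∞) from rfl]
    exact WithTop.coe_le_coe.2 le_top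
  have htwo : (2 : WithTop ℕ∞) ≤ ((⊤:ℕ∞) : WithTop ℕ∞) := by
    rw [show ((2:WithTop ℕ∞)) = ((2:ℕ∞) : WithTop ℕ∞) from rfl]
    exact WithTop.coe_le_coe.2 le_top
  -- structure of D
  have h0D : (0:ℝ) ∈ D := ⟨le_refl 0, by simpa using hT⟩
  have hDcases : D = Set.Ici (0:ℝ) ∨ ∃ b : ℝ, 0 < b ∧ D = Set.Ico 0 b := by
    rcases eq_or_ne T ⊤ with h | h
    · left; ext t
      simp [hDdef, timeDom, h, ENNReal.ofReal_lt_top]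
    · right
      refine ⟨T.toReal, ENNReal.toReal_pos hT.ne' h, ?_⟩
      ext t
      simp only [hDdef, timeDom, Set.mem_setOf_eq, Set.mem_Ico]
      constructor
      · rintro ⟨h0, hlt⟩
        exact ⟨h0, (ENNReal.ofReal_lt_iff_lt_toReal h0 h).1 hlt⟩
      · rintro ⟨h0, hlt⟩
        exact ⟨h0, (ENNReal.ofReal_lt_iff_lt_toReal h0 h).2 hlt⟩
  have hD_Ici : D ⊆ Set.Ici (0:ℝ) := fun t ht => ht.1
  have hconv : Convex ℝ D := by
    rcases hDcases with h | ⟨b, hb, h⟩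
    · rw [h]; exact convex_Ici 0
    · rw [h]; exact convex_Ico 0 b
  have hnb : ∀ t ∈ D, 0 < t → D ∈ 𝓝 t := by
    rcases hDcases with h | ⟨b, hb, h⟩
    · intro t ht h0; rw [h]; exact Ici_mem_nhds h0
    · intro t ht h0; rw [h]
      exact Filter.mem_of_superset (Ioo_mem_nhds h0 (h ▸ ht).2) Set.Ioo_subset_Ico_self
  have hIcc : ∀ t ∈ D, ∃ b' : ℝ, t < b' ∧ Set.Icc 0 b' ⊆ D := by
    rcases hDcases with h | ⟨b, hb, h⟩
    · intro t ht; exact ⟨t + 1, lt_add_one t, fun x hx => h ▸ hx.1⟩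
    · intro t ht
      refine ⟨(t + b) / 2, by have := (h ▸ ht).2; linarith, fun x hx => ?_⟩
      rw [h]; exact ⟨hx.1, lt_of_le_of_lt hx.2 (by have := (h ▸ ht).2; have := (h ▸ ht).1; linarith)⟩
  have hIntD : ∀ t ∈ D, 0 < t → t ∈ interior D :=
    fun t ht h0 => mem_interior_iff_mem_nhds.2 (hnb t ht h0)
  have hIntD' : ∀ t ∈ interior D, t ∈ D ∧ 0 < t := by
    intro t ht
    refine ⟨interior_subset ht, ?_⟩
    have := interior_mono hD_Ici ht
    rwa [interior_Ici] at this
  have hIntNe : (interior D).Nonempty := by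
    obtain ⟨b', hb', hsub⟩ := hIcc 0 h0D
    exact ⟨b' / 2, hIntD _ (hsub ⟨by linarith, by linarith⟩) (by linarith)⟩
  have hUD : UniqueDiffOn ℝ D := uniqueDiffOn_convex hconv hIntNe
  have hSUD : UniqueDiffOn ℝ S := hUD.prod uniqueDiffOn_univ

  -- slicing lemmas
  have slice_t : ∀ f : ℝ × ℝ → ℝ, DifferentiableOn ℝ f S → ∀ t ∈ D, ∀ θ : ℝ,
      HasDerivWithinAt (fun s => f (s, θ)) (fderivWithin ℝ f S (t, θ) (1, 0)) D t := by
    intro f hf t ht θ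
    have h1 : HasFDerivWithinAt f (fderivWithin ℝ f S (t, θ)) S (t, θ) :=
      (hf (t, θ) ⟨ht, trivial⟩).hasFDerivWithinAt
    have h2 : HasDerivWithinAt (fun s : ℝ => (s, θ)) ((1:ℝ), (0:ℝ)) D t :=
      ((hasDerivAt_id t).prodMk (hasDerivAt_const t θ)).hasDerivWithinAt
    exact h1.comp_hasDerivWithinAt t h2 (fun s (hs : s ∈ D) => (⟨hs, trivial⟩ : (s, θ) ∈ S))
  have slice_th : ∀ f : ℝ × ℝ → ℝ, DifferentiableOn ℝ f S → ∀ t ∈ D, ∀ θ : ℝ,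
      HasDerivAt (fun θ' => f (t, θ')) (fderivWithin ℝ f S (t, θ) (0, 1)) θ := by
    intro f hf t ht θ
    have h1 : HasFDerivWithinAt f (fderivWithin ℝ f S (t, θ)) S (t, θ) :=
      (hf (t, θ) ⟨ht, trivial⟩).hasFDerivWithinAt
    have h2 : HasDerivWithinAt (fun θ' : ℝ => (t, θ')) ((0:ℝ), (1:ℝ)) Set.univ θ :=
      ((hasDerivAt_const θ t).prodMk (hasDerivAt_id θ)).hasDerivWithinAt
    have h3 := h1.comp_hasDerivWithinAt θ h2 (fun s _ => ⟨ht, trivial⟩)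
    rwa [hasDerivWithinAt_univ] at h3
  have sliceCont : ∀ f : ℝ × ℝ → ℝ, ContinuousOn f S → ∀ t ∈ D, Continuous (fun θ => f (t, θ)) := by
    intro f hf t ht
    rw [← continuousOn_univ]
    exact hf.comp ((continuous_const.prodMk continuous_id).continuousOn) (fun θ _ => ⟨ht, trivial⟩)
  -- partial derivative functions
  set Gm : ℝ × ℝ → (ℝ × ℝ) →L[ℝ] ℝ := fderivWithin ℝ (Function.uncurry p) S with hGmdef
  set Qf : ℝ × ℝ → ℝ := fun x => Gm x (1, 0) with hQfdef
  set Pf1 : ℝ × ℝ → ℝ := fun x => Gm x (0, 1) with hPf1def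
  set Pf2 : ℝ × ℝ → ℝ := fun x => fderivWithin ℝ Pf1 S x (0, 1) with hPf2def
  set Mf : ℝ × ℝ → ℝ := fun x => fderivWithin ℝ Pf1 S x (1, 0) with hMfdef
  set Nf : ℝ × ℝ → ℝ := fun x => fderivWithin ℝ Qf S x (0, 1) with hNfdef
  have hGsm : ContDiffOn ℝ (⊤:ℕ∞) Gm S := hp.fderivWithin hSUD (by simp)
  have apply_smooth : ∀ (v : ℝ × ℝ) (g : ℝ × ℝ → (ℝ × ℝ) →L[ℝ] ℝ), ContDiffOn ℝ (⊤:ℕ∞) g S →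
      ContDiffOn ℝ (⊤:ℕ∞) (fun x => g x v) S := by
    intro v g hg
    exact (ContinuousLinearMap.apply ℝ ℝ v).contDiff.comp_contDiffOn hg
  have hQsm : ContDiffOn ℝ (⊤:ℕ∞) Qf S := apply_smooth _ _ hGsm
  have hP1sm : ContDiffOn ℝ (⊤:ℕ∞) Pf1 S := apply_smooth _ _ hGsm
  have hP2sm : ContDiffOn ℝ (⊤:ℕ∞) Pf2 S := apply_smooth _ _ (hP1sm.fderivWithin hSUD (by simp))
  have hMsm : ContDiffOn ℝ (⊤:ℕ∞) Mf S := apply_smooth _ _ (hP1sm.fderivWithin hSUD (by simp))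
  have hNsm : ContDiffOn ℝ (⊤:ℕ∞) Nf S := apply_smooth _ _ (hQsm.fderivWithin hSUD (by simp))
  -- slice facts
  have hps : ∀ t ∈ D, ContDiff ℝ (⊤:ℕ∞) (p t) := by
    intro t ht
    rw [← contDiffOn_univ]
    exact hp.comp ((contDiff_const.prodMk contDiff_id).contDiffOn) (fun θ _ => ⟨ht, trivial⟩)
  have hQ : ∀ t ∈ D, ∀ θ : ℝ, HasDerivWithinAt (fun s => p s θ) (Qf (t, θ)) D t :=
    fun t ht θ => slice_t (Function.uncurry p) (hp.differentiableOn (by simp)) t ht θ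
  have hP1 : ∀ t ∈ D, ∀ θ : ℝ, HasDerivAt (p t) (Pf1 (t, θ)) θ :=
    fun t ht θ => slice_th (Function.uncurry p) (hp.differentiableOn (by simp)) t ht θ
  have hP1eq : ∀ t ∈ D, ∀ θ : ℝ, deriv (p t) θ = Pf1 (t, θ) :=
    fun t ht θ => (hP1 t ht θ).deriv
  have hP1fun : ∀ t ∈ D, deriv (p t) = fun θ => Pf1 (t, θ) :=
    fun t ht => funext (hP1eq t ht)
  have hP2 : ∀ t ∈ D, ∀ θ : ℝ, HasDerivAt (fun θ' => Pf1 (t, θ')) (Pf2 (t, θ)) θ :=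
    fun t ht θ => slice_th Pf1 (hP1sm.differentiableOn (by simp)) t ht θ
  have hM : ∀ t ∈ D, ∀ θ : ℝ, HasDerivWithinAt (fun s => Pf1 (s, θ)) (Mf (t, θ)) D t :=
    fun t ht θ => slice_t Pf1 (hP1sm.differentiableOn (by simp)) t ht θ
  have hN : ∀ t ∈ D, ∀ θ : ℝ, HasDerivAt (fun θ' => Qf (t, θ')) (Nf (t, θ)) θ :=
    fun t ht θ => slice_th Qf (hQsm.differentiableOn (by simp)) t ht θ
  have hP2eq : ∀ t ∈ D, ∀ θ : ℝ, deriv (deriv (p t)) θ = Pf2 (t, θ) := by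
    intro t ht θ
    rw [hP1fun t ht]
    exact (hP2 t ht θ).deriv
  have hIt2 : ∀ f : ℝ → ℝ, iteratedDeriv 2 f = deriv (deriv f) := by
    intro f
    rw [show (2:ℕ) = 1 + 1 from rfl, iteratedDeriv_succ, iteratedDeriv_one]
  have hIt2eq : ∀ t ∈ D, ∀ θ : ℝ, iteratedDeriv 2 (p t) θ = Pf2 (t, θ) := by
    intro t ht θ; rw [hIt2]; exact hP2eq t ht θ
  have hQeq : ∀ t ∈ D, ∀ θ : ℝ, Qf (t, θ) = Pf2 (t, θ) + p t θ - algLen (p t) / (2 * π) := by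
    intro t ht θ
    rw [← (hQ t ht θ).derivWithin (hUD t ht), hpde t ht θ, hIt2eq t ht θ]

  -- smoothness of θ-slices
  have hps1 : ∀ t ∈ D, ContDiff ℝ (⊤:ℕ∞) (deriv (p t)) :=
    fun t ht => (contDiff_infty_iff_deriv.1 (hps t ht)).2
  have hps2 : ∀ t ∈ D, ContDiff ℝ (⊤:ℕ∞) (deriv (deriv (p t))) :=
    fun t ht => (contDiff_infty_iff_deriv.1 (hps1 t ht)).2
  have hcontp : ∀ t ∈ D, Continuous (p t) := fun t ht => (hps t ht).continuous
  have hcont1 : ∀ t ∈ D, Continuous (deriv (p t)) := fun t ht => (hps1 t ht).continuous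
  have hcont2 : ∀ t ∈ D, Continuous (deriv (deriv (p t))) := fun t ht => (hps2 t ht).continuous
  have hβcont : ∀ t ∈ D, Continuous (betaF (p t)) := by
    intro t ht
    have : betaF (p t) = fun θ => p t θ + deriv (deriv (p t)) θ := by
      funext θ; rw [betaF, hIt2]
    rw [this]
    exact (hcontp t ht).add (hcont2 t ht)
  -- periodicity
  have hper1 : ∀ t ∈ D, Function.Periodic (deriv (p t)) (2 * π) :=
    fun t ht => periodic_deriv_aux _ _ (hper t ht)
  have hper2 : ∀ t ∈ D, Function.Periodic (deriv (deriv (p t))) (2 * π) :=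
    fun t ht => periodic_deriv_aux _ _ (hper1 t ht)
  have hQper : ∀ t ∈ D, Function.Periodic (fun θ => Qf (t, θ)) (2 * π) := by
    intro t ht x
    simp only [hQeq t ht, ← hP2eq t ht]
    rw [hper2 t ht x, hper t ht x]
  have hP1per : ∀ t ∈ D, Function.Periodic (fun θ => Pf1 (t, θ)) (2 * π) := by
    intro t ht x
    simp only [← hP1eq t ht]
    exact hper1 t ht x
  -- basic integral identities
  have hI2zero : ∀ t ∈ D, (∫ θ in (0:ℝ)..(2 * π), iteratedDeriv 2 (p t) θ) = 0 := by
    intro t ht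
    rw [hIt2]
    rw [intervalIntegral.integral_deriv_eq_sub
      (fun x _ => ((hps1 t ht).differentiable (by simp)).differentiableAt)
      ((hcont2 t ht).intervalIntegrable _ _)]
    have h := hper1 t ht 0
    rw [zero_add] at h
    rw [h, sub_self]
  have hβL : ∀ t ∈ D, (∫ θ in (0:ℝ)..(2 * π), betaF (p t) θ) = algLen (p t) := by
    intro t ht
    have hint2 : IntervalIntegrable (fun θ => iteratedDeriv 2 (p t) θ) MeasureTheory.volume 0 (2*π) := by
      rw [hIt2]; exact (hcont2 t ht).intervalIntegrable _ _
    rw [show (fun θ => betaF (p t) θ) = fun θ => p t θ + iteratedDeriv 2 (p t) θ from rfl]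
    rw [intervalIntegral.integral_add ((hcontp t ht).intervalIntegrable _ _) hint2]
    rw [hI2zero t ht, add_zero]
    rfl
  -- parametric continuity of integrals
  have hparamCont : ∀ f : ℝ × ℝ → ℝ, ContinuousOn f S →
      ContinuousOn (fun t => ∫ θ in (0:ℝ)..(2 * π), f (t, θ)) D := by
    intro f hf t₀ ht₀
    obtain ⟨b', hb', hsub⟩ := hIcc t₀ ht₀
    have hKsub : (Set.Icc (0:ℝ) b') ×ˢ (Set.Icc (0:ℝ) (2*π)) ⊆ S :=
      fun x hx => ⟨hsub hx.1, trivial⟩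
    obtain ⟨C, hC⟩ := (IsCompact.prod (isCompact_Icc (a := (0:ℝ)) (b := b'))
      (isCompact_Icc (a := (0:ℝ)) (b := 2*π))).exists_bound_of_continuousOn (hf.mono hKsub)
    have hev : ∀ᶠ s in 𝓝[D] t₀, s ∈ Set.Icc 0 b' := by
      have h1 : Set.Iio b' ∈ 𝓝[D] t₀ := mem_nhdsWithin_of_mem_nhds (Iio_mem_nhds hb')
      filter_upwards [self_mem_nhdsWithin, h1] with s hsD hs2
      exact ⟨hsD.1, le_of_lt hs2⟩
    apply intervalIntegral.tendsto_integral_filter_of_dominated_convergence (fun _ => C)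
    · filter_upwards [self_mem_nhdsWithin] with s hs
      exact (sliceCont f hf s hs).aestronglyMeasurable
    · filter_upwards [hev] with s hs
      apply MeasureTheory.ae_of_all
      intro θ hθ
      have hθ' : θ ∈ Set.Icc (0:ℝ) (2*π) := by
        rw [Set.uIoc_of_le (le_of_lt hπ)] at hθ
        exact Set.Ioc_subset_Icc_self hθ
      exact hC (s, θ) ⟨hs, hθ'⟩
    · exact intervalIntegrable_const
    · apply MeasureTheory.ae_of_all
      intro θ _
      have h1 : ContinuousWithinAt (fun s : ℝ => f (s, θ)) D t₀ :=
        ContinuousWithinAt.comp (hf (t₀, θ) ⟨ht₀, trivial⟩)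
          (f := fun s : ℝ => (s, θ)) ((continuous_id.prodMk continuous_const).continuousWithinAt)
          (fun s hs => ⟨hs, trivial⟩)
      exact h1

  -- interior facts
  have hQat : ∀ t ∈ interior D, ∀ θ : ℝ, HasDerivAt (fun s => p s θ) (Qf (t, θ)) t := by
    intro t ht θ
    obtain ⟨htD, htpos⟩ := hIntD' t ht
    exact (hQ t htD θ).hasDerivAt (hnb t htD htpos)
  have hMat : ∀ t ∈ interior D, ∀ θ : ℝ, HasDerivAt (fun s => deriv (p s) θ) (Mf (t, θ)) t := by
    intro t ht θ
    obtain ⟨htD, htpos⟩ := hIntD' t ht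
    have hDnb := hnb t htD htpos
    have h0 := (hM t htD θ).hasDerivAt hDnb
    have hEv : (fun s : ℝ => deriv (p s) θ) =ᶠ[𝓝 t] (fun s => Pf1 (s, θ)) := by
      filter_upwards [hDnb] with s hs
      exact hP1eq s hs θ
    exact h0.congr_of_eventuallyEq hEv
  -- Clairaut symmetry on the interior
  have hMN : ∀ t ∈ interior D, ∀ θ : ℝ, Mf (t, θ) = Nf (t, θ) := by
    intro t ht θ
    obtain ⟨htD, htpos⟩ := hIntD' t ht
    have hSx : S ∈ 𝓝 ((t, θ) : ℝ × ℝ) := prod_mem_nhds (hnb t htD htpos) Filter.univ_mem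
    have hcdAt : ContDiffAt ℝ (⊤:ℕ∞) (Function.uncurry p) (t, θ) := hp.contDiffAt hSx
    have hintev : interior S ∈ 𝓝 ((t, θ) : ℝ × ℝ) := interior_mem_nhds.2 hSx
    have hGmEv : Gm =ᶠ[𝓝 ((t, θ) : ℝ × ℝ)] fderiv ℝ (Function.uncurry p) := by
      filter_upwards [hintev] with y hy
      exact fderivWithin_of_mem_nhds (mem_interior_iff_mem_nhds.1 hy)
    have hfd' : DifferentiableAt ℝ (fderiv ℝ (Function.uncurry p)) (t, θ) := by
      have h1 : ContDiffAt ℝ 1 (fderiv ℝ (Function.uncurry p)) (t, θ) :=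
        hcdAt.fderiv_right (le_trans (by norm_num) htwo)
      exact h1.differentiableAt one_ne_zero
    set f'' := fderiv ℝ (fderiv ℝ (Function.uncurry p)) (t, θ) with hf''def
    have happ : ∀ v : ℝ × ℝ, HasFDerivAt (fun y => fderiv ℝ (Function.uncurry p) y v)
        ((ContinuousLinearMap.apply ℝ ℝ v).comp f'') (t, θ) :=
      fun v => (ContinuousLinearMap.apply ℝ ℝ v).hasFDerivAt.comp (t, θ) hfd'.hasFDerivAt
    have hPf1Ev : Pf1 =ᶠ[𝓝 ((t, θ) : ℝ × ℝ)] (fun y => fderiv ℝ (Function.uncurry p) y (0, 1)) := by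
      filter_upwards [hGmEv] with y hy
      show Gm y (0, 1) = _
      rw [hy]
    have hQfEv : Qf =ᶠ[𝓝 ((t, θ) : ℝ × ℝ)] (fun y => fderiv ℝ (Function.uncurry p) y (1, 0)) := by
      filter_upwards [hGmEv] with y hy
      show Gm y (1, 0) = _
      rw [hy]
    have hMval : Mf (t, θ) = f'' (1, 0) (0, 1) := by
      calc Mf (t, θ) = fderivWithin ℝ Pf1 S (t, θ) (1, 0) := rfl
        _ = fderiv ℝ Pf1 (t, θ) (1, 0) := by rw [fderivWithin_of_mem_nhds hSx]
        _ = fderiv ℝ (fun y => fderiv ℝ (Function.uncurry p) y (0, 1)) (t, θ) (1, 0) := by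
            rw [hPf1Ev.fderiv_eq]
        _ = f'' (1, 0) (0, 1) := by rw [(happ (0, 1)).fderiv]; rfl
    have hNval : Nf (t, θ) = f'' (0, 1) (1, 0) := by
      calc Nf (t, θ) = fderivWithin ℝ Qf S (t, θ) (0, 1) := rfl
        _ = fderiv ℝ Qf (t, θ) (0, 1) := by rw [fderivWithin_of_mem_nhds hSx]
        _ = fderiv ℝ (fun y => fderiv ℝ (Function.uncurry p) y (1, 0)) (t, θ) (0, 1) := by
            rw [hQfEv.fderiv_eq]
        _ = f'' (0, 1) (1, 0) := by rw [(happ (1, 0)).fderiv]; rfl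
    rw [hMval, hNval]
    exact (hcdAt.isSymmSndFDerivAt (by simp only [minSmoothness_of_isRCLikeNormedField]; exact htwo)).eq _ _

  -- ∫ Qf (t, ·) = 0
  have hQint : ∀ t ∈ D, IntervalIntegrable (fun θ => Qf (t, θ)) MeasureTheory.volume 0 (2*π) :=
    fun t ht => (sliceCont Qf hQsm.continuousOn t ht).intervalIntegrable _ _
  have hP2int : ∀ t ∈ D, IntervalIntegrable (fun θ => Pf2 (t, θ)) MeasureTheory.volume 0 (2*π) :=
    fun t ht => (sliceCont Pf2 hP2sm.continuousOn t ht).intervalIntegrable _ _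
  have hqzero : ∀ t ∈ D, (∫ θ in (0:ℝ)..(2*π), Qf (t, θ)) = 0 := by
    intro t ht
    have h1 : (∫ θ in (0:ℝ)..(2*π), Qf (t, θ))
        = ∫ θ in (0:ℝ)..(2*π), (iteratedDeriv 2 (p t) θ + p t θ - algLen (p t) / (2*π)) := by
      apply intervalIntegral.integral_congr
      intro θ _
      show Qf (t, θ) = iteratedDeriv 2 (p t) θ + p t θ - algLen (p t) / (2*π)
      rw [hQeq t ht θ, hIt2eq t ht θ]
    rw [h1]
    have hi2 : IntervalIntegrable (fun θ => iteratedDeriv 2 (p t) θ) MeasureTheory.volume 0 (2*π) := by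
      rw [hIt2]; exact (hcont2 t ht).intervalIntegrable _ _
    rw [intervalIntegral.integral_sub (hi2.add ((hcontp t ht).intervalIntegrable _ _))
      intervalIntegrable_const]
    rw [intervalIntegral.integral_add hi2 ((hcontp t ht).intervalIntegrable _ _)]
    rw [hI2zero t ht, intervalIntegral.integral_const]
    have hLdef : (∫ θ in (0:ℝ)..(2*π), p t θ) = algLen (p t) := rfl
    rw [hLdef, zero_add, smul_eq_mul, sub_zero, sub_eq_zero]
    field_simp
  -- derivative of length on the interior
  have hLd : ∀ t₀ ∈ interior D, HasDerivAt (fun s => algLen (p s)) 0 t₀ := by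
    intro t₀ ht₀
    obtain ⟨htD, htpos⟩ := hIntD' t₀ ht₀
    obtain ⟨ε, hε, hball⟩ : ∃ ε > 0, Metric.closedBall t₀ ε ⊆ interior D :=
      nhds_basis_closedBall.mem_iff.1 (isOpen_interior.mem_nhds ht₀)
    have hKsub : (Metric.closedBall t₀ ε) ×ˢ (Set.Icc (0:ℝ) (2*π)) ⊆ S :=
      fun x hx => ⟨interior_subset (hball hx.1), trivial⟩
    obtain ⟨C, hC⟩ := ((isCompact_closedBall t₀ ε).prod
      (isCompact_Icc (a := (0:ℝ)) (b := 2*π))).exists_bound_of_continuousOn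
      (hQsm.continuousOn.mono hKsub)
    have hres := intervalIntegral.hasDerivAt_integral_of_dominated_loc_of_deriv_le (𝕜 := ℝ)
      (μ := MeasureTheory.volume) (F := fun s θ => p s θ) (F' := fun s θ => Qf (s, θ)) (x₀ := t₀)
      (a := 0) (b := 2*π) (bound := fun _ => C) (Metric.ball_mem_nhds t₀ hε)
      ?_ ((hcontp t₀ htD).intervalIntegrable _ _)
      ((sliceCont Qf hQsm.continuousOn t₀ htD).aestronglyMeasurable) ?_
      intervalIntegrable_const ?_
    · have h2 := hres.2
      rw [hqzero t₀ htD] at h2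
      exact h2
    · filter_upwards [isOpen_interior.mem_nhds ht₀] with s hs
      exact (hcontp s (interior_subset hs)).aestronglyMeasurable
    · apply MeasureTheory.ae_of_all
      intro θ hθ s hs
      have hθ' : θ ∈ Set.Icc (0:ℝ) (2*π) := by
        rw [Set.uIoc_of_le (le_of_lt hπ)] at hθ
        exact Set.Ioc_subset_Icc_self hθ
      exact hC (s, θ) ⟨Metric.ball_subset_closedBall hs, hθ'⟩
    · apply MeasureTheory.ae_of_all
      intro θ _ s hs
      exact hQat s (hball (Metric.ball_subset_closedBall hs)) θ
  -- continuity of length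
  have hLcont : ContinuousOn (fun s => algLen (p s)) D := by
    have h := hparamCont (Function.uncurry p) hp.continuousOn
    exact h.congr (fun t _ => rfl)
  -- length is constant
  have hLconst : ∀ t ∈ D, algLen (p t) = algLen (p 0) := by
    have hdiff : DifferentiableOn ℝ (fun s => algLen (p s)) (interior D) :=
      fun t ht => ((hLd t ht).differentiableAt).differentiableWithinAt
    have hmono := monotoneOn_of_deriv_nonneg hconv hLcont hdiff
      (fun t ht => by rw [(hLd t ht).deriv])
    have hanti := antitoneOn_of_deriv_nonpos hconv hLcont hdiff
      (fun t ht => by rw [(hLd t ht).deriv])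
    intro t ht
    rcases le_total t 0 with h | h
    · have h0 : t = 0 := le_antisymm h (ht.1)
      rw [h0]
    · exact le_antisymm (hanti h0D ht h) (hmono h0D ht h)

  -- the claimed derivative of the area
  set g : ℝ → ℝ :=
    fun t => (∫ θ in (0:ℝ)..(2 * π), (betaF (p t) θ)^2) - (algLen (p t))^2 / (2 * π) with hgdef
  -- area via integration by parts
  have hA_alt : ∀ t ∈ D, algArea (p t)
      = (1/2) * ((∫ θ in (0:ℝ)..(2*π), p t θ * p t θ)
        - ∫ θ in (0:ℝ)..(2*π), deriv (p t) θ * deriv (p t) θ) := by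
    intro t ht
    have hsplit : (∫ θ in (0:ℝ)..(2*π), p t θ * betaF (p t) θ)
        = (∫ θ in (0:ℝ)..(2*π), p t θ * p t θ)
          + ∫ θ in (0:ℝ)..(2*π), p t θ * deriv (deriv (p t)) θ := by
      rw [← intervalIntegral.integral_add (f := fun θ => p t θ * p t θ)
        (g := fun θ => p t θ * deriv (deriv (p t)) θ)
        (((hcontp t ht).mul (hcontp t ht)).intervalIntegrable _ _)
        (((hcontp t ht).mul (hcont2 t ht)).intervalIntegrable _ _)]
      apply intervalIntegral.integral_congr
      intro θ _
      show p t θ * betaF (p t) θ = p t θ * p t θ + p t θ * deriv (deriv (p t)) θ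
      simp only [betaF]
      rw [hIt2 (p t)]
      ring
    have hibp := intervalIntegral.integral_mul_deriv_eq_deriv_mul
      (a := (0:ℝ)) (b := 2*π)
      (u := p t) (u' := deriv (p t)) (v := deriv (p t)) (v' := deriv (deriv (p t)))
      (fun x _ => ((hps t ht).differentiable (by simp)).differentiableAt.hasDerivAt)
      (fun x _ => ((hps1 t ht).differentiable (by simp)).differentiableAt.hasDerivAt)
      ((hcont1 t ht).intervalIntegrable _ _) ((hcont2 t ht).intervalIntegrable _ _)
    have hp2π : p t (2*π) = p t 0 := by have h := hper t ht 0; rwa [zero_add] at h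
    have hd2π : deriv (p t) (2*π) = deriv (p t) 0 := by
      have h := hper1 t ht 0; rwa [zero_add] at h
    show (1/2) * (∫ θ in (0:ℝ)..(2*π), p t θ * betaF (p t) θ) = _
    rw [hsplit, hibp, hp2π, hd2π]
    ring
  -- derivative of the area on the interior
  have hAd : ∀ t₀ ∈ interior D, HasDerivAt (fun s => algArea (p s)) (g t₀) t₀ := by
    intro t₀ ht₀
    obtain ⟨htD, htpos⟩ := hIntD' t₀ ht₀
    obtain ⟨ε, hε, hball⟩ : ∃ ε > 0, Metric.closedBall t₀ ε ⊆ interior D :=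
      nhds_basis_closedBall.mem_iff.1 (isOpen_interior.mem_nhds ht₀)
    have hKsub : (Metric.closedBall t₀ ε) ×ˢ (Set.Icc (0:ℝ) (2*π)) ⊆ S :=
      fun x hx => ⟨interior_subset (hball hx.1), trivial⟩
    have hFcont : ContinuousOn (fun x : ℝ × ℝ =>
        (Qf x * Function.uncurry p x + Function.uncurry p x * Qf x)
          - (Mf x * Pf1 x + Pf1 x * Mf x)) S :=
      ((hQsm.continuousOn.mul hp.continuousOn).add
        (hp.continuousOn.mul hQsm.continuousOn)).sub
      ((hMsm.continuousOn.mul hP1sm.continuousOn).add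
        (hP1sm.continuousOn.mul hMsm.continuousOn))
    obtain ⟨C, hC⟩ := ((isCompact_closedBall t₀ ε).prod
      (isCompact_Icc (a := (0:ℝ)) (b := 2*π))).exists_bound_of_continuousOn
      (hFcont.mono hKsub)
    have hres := intervalIntegral.hasDerivAt_integral_of_dominated_loc_of_deriv_le (𝕜 := ℝ)
      (μ := MeasureTheory.volume)
      (F := fun s θ => p s θ * p s θ - Pf1 (s, θ) * Pf1 (s, θ))
      (F' := fun s θ => (Qf (s, θ) * p s θ + p s θ * Qf (s, θ))
        - (Mf (s, θ) * Pf1 (s, θ) + Pf1 (s, θ) * Mf (s, θ)))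
      (x₀ := t₀) (a := 0) (b := 2*π) (bound := fun _ => C) (Metric.ball_mem_nhds t₀ hε)
      ?_
      ((((hcontp t₀ htD).mul (hcontp t₀ htD)).sub
        ((sliceCont Pf1 hP1sm.continuousOn t₀ htD).mul
          (sliceCont Pf1 hP1sm.continuousOn t₀ htD))).intervalIntegrable _ _)
      ?_ ?_ intervalIntegrable_const ?_
    rotate_left
    · filter_upwards [isOpen_interior.mem_nhds ht₀] with s hs
      have hsD : s ∈ D := interior_subset hs
      exact (((hcontp s hsD).mul (hcontp s hsD)).sub
        ((sliceCont Pf1 hP1sm.continuousOn s hsD).mul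
          (sliceCont Pf1 hP1sm.continuousOn s hsD))).aestronglyMeasurable
    · exact ((((sliceCont Qf hQsm.continuousOn t₀ htD).mul (hcontp t₀ htD)).add
        ((hcontp t₀ htD).mul (sliceCont Qf hQsm.continuousOn t₀ htD))).sub
        (((sliceCont Mf hMsm.continuousOn t₀ htD).mul (sliceCont Pf1 hP1sm.continuousOn t₀ htD)).add
          ((sliceCont Pf1 hP1sm.continuousOn t₀ htD).mul
            (sliceCont Mf hMsm.continuousOn t₀ htD)))).aestronglyMeasurable
    · apply MeasureTheory.ae_of_all
      intro θ hθ s hs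
      have hθ' : θ ∈ Set.Icc (0:ℝ) (2*π) := by
        rw [Set.uIoc_of_le (le_of_lt hπ)] at hθ
        exact Set.Ioc_subset_Icc_self hθ
      exact hC (s, θ) ⟨Metric.ball_subset_closedBall hs, hθ'⟩
    · apply MeasureTheory.ae_of_all
      intro θ _ s hs
      have hsI : s ∈ interior D := hball (Metric.ball_subset_closedBall hs)
      obtain ⟨hsD, hspos⟩ := hIntD' s hsI
      have hQs : HasDerivAt (fun y => p y θ) (Qf (s, θ)) s := hQat s hsI θ
      have hMs : HasDerivAt (fun y => Pf1 (y, θ)) (Mf (s, θ)) s :=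
        (hM s hsD θ).hasDerivAt (hnb s hsD hspos)
      exact (hQs.mul hQs).sub (hMs.mul hMs)
    -- now rewrite the derivative value
    · have hval : (∫ θ in (0:ℝ)..(2*π), ((Qf (t₀, θ) * p t₀ θ + p t₀ θ * Qf (t₀, θ))
          - (Mf (t₀, θ) * Pf1 (t₀, θ) + Pf1 (t₀, θ) * Mf (t₀, θ)))) = 2 * (g t₀) := by
        have hio : IntervalIntegrable (fun θ => Pf1 (t₀, θ) * Nf (t₀, θ))
            MeasureTheory.volume 0 (2*π) :=
          ((sliceCont Pf1 hP1sm.continuousOn t₀ htD).mul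
            (sliceCont Nf hNsm.continuousOn t₀ htD)).intervalIntegrable _ _
        have hiq : IntervalIntegrable (fun θ => p t₀ θ * Qf (t₀, θ))
            MeasureTheory.volume 0 (2*π) :=
          ((hcontp t₀ htD).mul (sliceCont Qf hQsm.continuousOn t₀ htD)).intervalIntegrable _ _
        have hstep1 : (∫ θ in (0:ℝ)..(2*π), ((Qf (t₀, θ) * p t₀ θ + p t₀ θ * Qf (t₀, θ))
            - (Mf (t₀, θ) * Pf1 (t₀, θ) + Pf1 (t₀, θ) * Mf (t₀, θ))))
            = ∫ θ in (0:ℝ)..(2*π), (2 * (p t₀ θ * Qf (t₀, θ)) - 2 * (Pf1 (t₀, θ) * Nf (t₀, θ))) := by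
          apply intervalIntegral.integral_congr
          intro θ _
          show (Qf (t₀, θ) * p t₀ θ + p t₀ θ * Qf (t₀, θ))
            - (Mf (t₀, θ) * Pf1 (t₀, θ) + Pf1 (t₀, θ) * Mf (t₀, θ))
            = 2 * (p t₀ θ * Qf (t₀, θ)) - 2 * (Pf1 (t₀, θ) * Nf (t₀, θ))
          rw [hMN t₀ ht₀ θ]
          ring
        have hibp2 := intervalIntegral.integral_mul_deriv_eq_deriv_mul
          (a := (0:ℝ)) (b := 2*π)
          (u := fun θ => Pf1 (t₀, θ)) (u' := fun θ => Pf2 (t₀, θ))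
          (v := fun θ => Qf (t₀, θ)) (v' := fun θ => Nf (t₀, θ))
          (fun x _ => hP2 t₀ htD x) (fun x _ => hN t₀ htD x)
          ((sliceCont Pf2 hP2sm.continuousOn t₀ htD).intervalIntegrable _ _)
          ((sliceCont Nf hNsm.continuousOn t₀ htD).intervalIntegrable _ _)
        have hb1 : Pf1 (t₀, 2*π) = Pf1 (t₀, 0) := by
          have h := hP1per t₀ htD 0; rw [zero_add] at h; exact h
        have hb2 : Qf (t₀, 2*π) = Qf (t₀, 0) := by
          have h := hQper t₀ htD 0; rw [zero_add] at h; exact h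
        have hibp3 : (∫ θ in (0:ℝ)..(2*π), Pf1 (t₀, θ) * Nf (t₀, θ))
            = - ∫ θ in (0:ℝ)..(2*π), Pf2 (t₀, θ) * Qf (t₀, θ) := by
          rw [hibp2]; simp only [hb1, hb2]; ring
        have hfinal : (∫ θ in (0:ℝ)..(2*π), (p t₀ θ * Qf (t₀, θ) + Pf2 (t₀, θ) * Qf (t₀, θ))) = g t₀ := by
          have hbq : ∀ θ : ℝ, p t₀ θ * Qf (t₀, θ) + Pf2 (t₀, θ) * Qf (t₀, θ)
              = (betaF (p t₀) θ)^2 - (algLen (p t₀) / (2*π)) * betaF (p t₀) θ := by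
            intro θ
            have hb : betaF (p t₀) θ = p t₀ θ + Pf2 (t₀, θ) := by
              simp only [betaF]; rw [hIt2eq t₀ htD θ]
            have hq : Qf (t₀, θ) = betaF (p t₀) θ - algLen (p t₀) / (2*π) := by
              rw [hQeq t₀ htD θ, hb]; ring
            rw [hq, hb]; ring
          rw [intervalIntegral.integral_congr (fun θ _ => hbq θ)]
          rw [intervalIntegral.integral_sub (f := fun θ => betaF (p t₀) θ ^ 2)
            (g := fun θ => algLen (p t₀) / (2 * π) * betaF (p t₀) θ)
            (((hβcont t₀ htD).pow 2).intervalIntegrable _ _)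
            ((continuous_const.mul (hβcont t₀ htD)).intervalIntegrable _ _)]
          rw [intervalIntegral.integral_const_mul, hβL t₀ htD]
          rw [hgdef]
          have hπ0 : (π:ℝ) ≠ 0 := pi_ne_zero
          field_simp
        calc (∫ θ in (0:ℝ)..(2*π), ((Qf (t₀, θ) * p t₀ θ + p t₀ θ * Qf (t₀, θ))
            - (Mf (t₀, θ) * Pf1 (t₀, θ) + Pf1 (t₀, θ) * Mf (t₀, θ))))
            = ∫ θ in (0:ℝ)..(2*π), (2 * (p t₀ θ * Qf (t₀, θ)) - 2 * (Pf1 (t₀, θ) * Nf (t₀, θ))) :=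
              hstep1
          _ = 2 * (∫ θ in (0:ℝ)..(2*π), p t₀ θ * Qf (t₀, θ))
              - 2 * (∫ θ in (0:ℝ)..(2*π), Pf1 (t₀, θ) * Nf (t₀, θ)) := by
              rw [intervalIntegral.integral_sub ((hiq.const_mul 2)) ((hio.const_mul 2)),
                intervalIntegral.integral_const_mul, intervalIntegral.integral_const_mul]
          _ = 2 * (∫ θ in (0:ℝ)..(2*π), p t₀ θ * Qf (t₀, θ))
              + 2 * (∫ θ in (0:ℝ)..(2*π), Pf2 (t₀, θ) * Qf (t₀, θ)) := by
              rw [hibp3]; ring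
          _ = 2 * (∫ θ in (0:ℝ)..(2*π), (p t₀ θ * Qf (t₀, θ) + Pf2 (t₀, θ) * Qf (t₀, θ))) := by
              rw [intervalIntegral.integral_add (g := fun θ => Pf2 (t₀, θ) * Qf (t₀, θ)) hiq
                (((sliceCont Pf2 hP2sm.continuousOn t₀ htD).mul
                  (sliceCont Qf hQsm.continuousOn t₀ htD)).intervalIntegrable _ _)]
              ring
          _ = 2 * g t₀ := by rw [hfinal]
      have hd2 := (hres.2.const_mul (1/2 : ℝ))
      rw [hval] at hd2
      have hEv : (fun s => algArea (p s)) =ᶠ[𝓝 t₀]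
          (fun s => (1/2 : ℝ) * ∫ θ in (0:ℝ)..(2*π),
            (p s θ * p s θ - Pf1 (s, θ) * Pf1 (s, θ))) := by
        filter_upwards [isOpen_interior.mem_nhds ht₀] with s hs
        have hsD : s ∈ D := interior_subset hs
        rw [hA_alt s hsD]
        congr 1
        rw [← intervalIntegral.integral_sub (f := fun θ => p s θ * p s θ)
          (g := fun θ => deriv (p s) θ * deriv (p s) θ)
          (((hcontp s hsD).mul (hcontp s hsD)).intervalIntegrable _ _)
          (((hcont1 s hsD).mul (hcont1 s hsD)).intervalIntegrable _ _)]
        apply intervalIntegral.integral_congr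
        intro θ _
        show p s θ * p s θ - deriv (p s) θ * deriv (p s) θ = _
        rw [hP1eq s hsD θ]
      have hfin : HasDerivAt (fun s => algArea (p s)) ((1/2 : ℝ) * (2 * g t₀)) t₀ :=
        HasDerivAt.congr_of_eventuallyEq hd2 hEv
      have : (1/2 : ℝ) * (2 * g t₀) = g t₀ := by ring
      rwa [this] at hfin

  -- continuity of the area on D
  have hAcont : ContinuousOn (fun s => algArea (p s)) D := by
    have h := hparamCont (fun x => Function.uncurry p x * (Function.uncurry p x + Pf2 x))
      (hp.continuousOn.mul (hp.continuousOn.add hP2sm.continuousOn))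
    have h2 : ContinuousOn (fun t => (1/2 : ℝ) * ∫ θ in (0:ℝ)..(2*π),
        (Function.uncurry p (t, θ) * (Function.uncurry p (t, θ) + Pf2 (t, θ)))) D :=
      continuousOn_const.mul h
    apply h2.congr
    intro t ht
    show algArea (p t) = _
    show (1/2 : ℝ) * (∫ θ in (0:ℝ)..(2*π), p t θ * betaF (p t) θ) = _
    congr 1
    apply intervalIntegral.integral_congr
    intro θ _
    show p t θ * betaF (p t) θ = Function.uncurry p (t, θ) * (Function.uncurry p (t, θ) + Pf2 (t, θ))
    simp only [Function.uncurry_apply_pair, betaF]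
    rw [hIt2eq t ht θ]
  -- continuity of g on D
  have hgcont : ContinuousOn g D := by
    have h := hparamCont (fun x => (Function.uncurry p x + Pf2 x)^2)
      ((hp.continuousOn.add hP2sm.continuousOn).pow 2)
    have hbsq : ContinuousOn (fun t => ∫ θ in (0:ℝ)..(2*π), (betaF (p t) θ)^2) D := by
      apply h.congr
      intro t ht
      apply intervalIntegral.integral_congr
      intro θ _
      show (betaF (p t) θ)^2 = (Function.uncurry p (t, θ) + Pf2 (t, θ))^2
      simp only [Function.uncurry_apply_pair, betaF]
      rw [hIt2eq t ht θ]
    exact hbsq.sub ((hLcont.pow 2).div_const _)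
  -- nonnegativity of g on D
  have hgnn : ∀ t ∈ D, 0 ≤ g t := by
    intro t ht
    have h0 : 0 ≤ ∫ θ in (0:ℝ)..(2*π), (betaF (p t) θ - algLen (p t) / (2*π))^2 :=
      intervalIntegral.integral_nonneg (le_of_lt hπ) (fun u _ => sq_nonneg _)
    have h1 : ∀ θ : ℝ, (betaF (p t) θ - algLen (p t) / (2*π))^2
        = ((betaF (p t) θ)^2 - (2 * (algLen (p t) / (2*π))) * betaF (p t) θ)
          + (algLen (p t) / (2*π))^2 := fun θ => by ring
    rw [intervalIntegral.integral_congr (fun θ _ => h1 θ)] at h0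
    rw [intervalIntegral.integral_add
      (f := fun θ => betaF (p t) θ ^ 2 - 2 * (algLen (p t) / (2*π)) * betaF (p t) θ)
      (g := fun _ => (algLen (p t) / (2*π))^2)
      ((((hβcont t ht).pow 2).sub (continuous_const.mul (hβcont t ht))).intervalIntegrable _ _)
      intervalIntegrable_const] at h0
    rw [intervalIntegral.integral_sub (f := fun θ => betaF (p t) θ ^ 2)
      (g := fun θ => 2 * (algLen (p t) / (2*π)) * betaF (p t) θ)
      (((hβcont t ht).pow 2).intervalIntegrable _ _)
      ((continuous_const.mul (hβcont t ht)).intervalIntegrable _ _)] at h0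
    rw [intervalIntegral.integral_const_mul, hβL t ht, intervalIntegral.integral_const,
      smul_eq_mul] at h0
    have hgeq : g t = ((∫ θ in (0:ℝ)..(2*π), (betaF (p t) θ)^2)
        - 2 * (algLen (p t) / (2*π)) * algLen (p t)) + (2*π - 0) * (algLen (p t) / (2*π))^2 := by
      rw [hgdef]
      have hπ0 : (π:ℝ) ≠ 0 := pi_ne_zero
      field_simp
      ring
    rw [hgeq]
    exact h0
  -- derivative of the area at the left endpoint 0
  have hA0 : HasDerivWithinAt (fun s => algArea (p s)) (g 0) D 0 := by
    obtain ⟨b', hb', hsub⟩ := hIcc 0 h0D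
    have hIooInt : Set.Ioo (0:ℝ) b' ⊆ interior D :=
      (isOpen_Ioo.subset_interior_iff).2 (fun x hx => hsub ⟨le_of_lt hx.1, le_of_lt hx.2⟩)
    have hIooNhd : Set.Ioo (0:ℝ) b' ∈ 𝓝[>] (0:ℝ) := Ioo_mem_nhdsGT_of_mem ⟨le_refl 0, hb'⟩
    have hIntNhd : interior D ∈ 𝓝[>] (0:ℝ) := Filter.mem_of_superset hIooNhd hIooInt
    have hdiff : DifferentiableOn ℝ (fun s => algArea (p s)) (interior D) :=
      fun s hs => (hAd s hs).differentiableAt.differentiableWithinAt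
    have hclim : ContinuousWithinAt (fun s => algArea (p s)) (interior D) 0 :=
      (hAcont 0 h0D).mono interior_subset
    have hdlim : Filter.Tendsto (fun x => deriv (fun s => algArea (p s)) x)
        (𝓝[>] (0:ℝ)) (𝓝 (g 0)) := by
      have hEv : (fun x => deriv (fun s => algArea (p s)) x) =ᶠ[𝓝[>] (0:ℝ)] g := by
        filter_upwards [hIntNhd] with x hx
        exact (hAd x hx).deriv
      rw [Filter.tendsto_congr' hEv]
      have h1 : Filter.Tendsto g (𝓝[Set.Ioo (0:ℝ) b'] 0) (𝓝 (g 0)) :=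
        (hgcont 0 h0D).mono (fun x hx => hsub ⟨le_of_lt hx.1, le_of_lt hx.2⟩)
      exact h1.mono_left (nhdsWithin_le_of_mem hIooNhd)
    exact (hasDerivWithinAt_Ici_of_tendsto_deriv hdiff hclim hIntNhd hdlim).mono hD_Ici
  -- assembly
  have hADW : ∀ t ∈ D, HasDerivWithinAt (fun s => algArea (p s)) (g t) D t := by
    intro t ht
    rcases eq_or_lt_of_le ht.1 with h0 | hpos
    · rw [← h0]
      exact hA0
    · exact (hAd t (hIntD t ht hpos)).hasDerivWithinAt
  have hAmono : ∀ s ∈ D, ∀ t ∈ D, s ≤ t → algArea (p s) ≤ algArea (p t) := by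
    have hmono := monotoneOn_of_deriv_nonneg hconv hAcont
      (fun s hs => (hAd s hs).differentiableAt.differentiableWithinAt)
      (fun s hs => by rw [(hAd s hs).deriv]; exact hgnn s (interior_subset hs))
    exact fun s hs t ht h => hmono hs ht h
  exact ⟨hLconst, hAmono, fun t ht => ⟨hADW t ht, hgnn t ht⟩⟩
end

section
/- Let p : ℝ → ℝ be a smooth 2π-periodic function, the support function of an ℓ-convex Legendre curve with ℓ = 1, with algebraic length L = ∫₀^{2π} p(θ) dθ and algebraic area A = (1/2)∫₀^{2π} p(θ)(p(θ) + p''(θ)) dθ. Then L² − 4πA ≥ 0, with equality if and only if the curve is a circle, i.e. if and only if p(θ) = a₀ + a₁ cos θ + b₁ sin θ for some real constants a₀, a₁, b₁. -/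
open Real

section IsoAux
open MeasureTheory intervalIntegral Complex AddCircle

noncomputable instance : Fact ((0:ℝ) < 2 * π) := ⟨by positivity⟩

variable {T : ℝ} [hT : Fact (0 < T)]

omit hT in
lemma isoAux_lift_continuous {g : ℝ → ℂ} (hg : Continuous g) (hgp : Function.Periodic g T) :
    Continuous hgp.lift := by
  have : Continuous (hgp.lift ∘ ((↑) : ℝ → AddCircle T)) := by
    simpa [Function.comp_def, hgp.lift_coe] using hg
  exact continuous_coinduced_dom.mpr this

lemma isoAux_parseval_summable {g : ℝ → ℂ} (hg : Continuous g) (hgp : Function.Periodic g T) :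
    Summable (fun n : ℤ => ‖fourierCoeff hgp.lift n‖ ^ 2) := by
  set F : C(AddCircle T, ℂ) := ⟨hgp.lift, isoAux_lift_continuous hg hgp⟩
  have h := lp.memℓp (fourierBasis.repr (ContinuousMap.toLp 2 haarAddCircle ℂ F))
  rw [memℓp_gen_iff (by norm_num)] at h
  have : ∀ n : ℤ, fourierBasis.repr (ContinuousMap.toLp 2 haarAddCircle ℂ F) n
      = fourierCoeff hgp.lift n := by
    intro n
    rw [fourierBasis_repr, fourierCoeff_toLp]
    rfl
  simpa [this] using h

lemma isoAux_parseval_eq {g : ℝ → ℂ} (hg : Continuous g) (hgp : Function.Periodic g T) :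
    ∑' n : ℤ, ‖fourierCoeff hgp.lift n‖ ^ 2 = (1 / T) * ∫ x in (0:ℝ)..T, ‖g x‖ ^ 2 := by
  set F : C(AddCircle T, ℂ) := ⟨hgp.lift, isoAux_lift_continuous hg hgp⟩
  have h := tsum_sq_fourierCoeff (ContinuousMap.toLp 2 haarAddCircle ℂ F)
  have h1 : ∀ n : ℤ, fourierCoeff ((ContinuousMap.toLp 2 haarAddCircle ℂ F :
      Lp ℂ 2 haarAddCircle) : AddCircle T → ℂ) n = fourierCoeff hgp.lift n := by
    intro n; rw [fourierCoeff_toLp]; rfl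
  have h2 : (∫ t : AddCircle T, ‖(ContinuousMap.toLp 2 haarAddCircle ℂ F :
        Lp ℂ 2 haarAddCircle) t‖ ^ 2 ∂haarAddCircle)
      = ∫ t : AddCircle T, ‖F t‖ ^ 2 ∂haarAddCircle := by
    apply MeasureTheory.integral_congr_ae
    filter_upwards [ContinuousMap.coeFn_toLp (p := 2) (𝕜 := ℂ) haarAddCircle F] with t ht
    rw [ht]
  rw [h2] at h
  simp_rw [h1] at h
  rw [h]
  have h3 : (∫ x in (0:ℝ)..T, ‖g x‖ ^ 2) = ∫ x in (0:ℝ)..(0 + T), ‖F (x : AddCircle T)‖ ^ 2 := by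
    rw [zero_add]
    apply intervalIntegral.integral_congr
    intro x _
    simp [F, hgp.lift_coe]
  rw [h3, AddCircle.intervalIntegral_preimage T 0 (fun t => ‖F t‖ ^ 2)]
  rw [volume_eq_smul_haarAddCircle, MeasureTheory.integral_smul_measure,
    ENNReal.toReal_ofReal hT.out.le]
  rw [smul_eq_mul, one_div, inv_mul_cancel_left₀ hT.out.ne']

lemma isoAux_coeff_lift_eq {g : ℝ → ℂ} (hgp : Function.Periodic g (2 * π)) (n : ℤ) :
    fourierCoeff hgp.lift n = fourierCoeffOn (by positivity : (0:ℝ) < 2*π) g n := by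
  rw [fourierCoeff_eq_intervalIntegral _ n 0, zero_add, fourierCoeffOn_eq_integral]
  rw [show (2*π - 0 : ℝ) = 2*π by ring]
  rfl

lemma isoAux_coeff_deriv {g g' : ℝ → ℂ} (hgp : Function.Periodic g (2 * π))
    (hgp' : Function.Periodic g' (2 * π))
    (hd : ∀ x : ℝ, HasDerivAt g (g' x) x) (hc' : Continuous g') (n : ℤ) (hn : n ≠ 0) :
    fourierCoeff hgp'.lift n = I * n * fourierCoeff hgp.lift n := by
  rw [isoAux_coeff_lift_eq, isoAux_coeff_lift_eq]
  have h := fourierCoeffOn_of_hasDerivAt (by positivity : (0:ℝ) < 2*π) hn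
    (fun x _ => hd x) (hc'.intervalIntegrable 0 (2*π))
  have hg2 : g (2*π) = g 0 := by simpa using hgp 0
  rw [hg2] at h
  simp only [sub_self, mul_zero, zero_sub] at h
  rw [h]
  have hπ : (π:ℂ) ≠ 0 := ofReal_ne_zero.mpr pi_ne_zero
  have hnc : (n:ℂ) ≠ 0 := Int.cast_ne_zero.mpr hn
  field_simp
  push_cast
  ring

lemma isoAux_coeff_zero {g : ℝ → ℂ} (hgp : Function.Periodic g (2 * π)) :
    fourierCoeff hgp.lift 0 = (1/(2*π) : ℂ) * ∫ x in (0:ℝ)..(2*π), g x := by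
  rw [fourierCoeff_eq_intervalIntegral _ 0 0, zero_add]
  simp only [neg_zero, fourier_zero, one_smul, smul_eq_mul]
  norm_num

lemma isoAux_re_mul_exp (z : ℂ) (r : ℝ) :
    (z * Complex.exp ((r:ℂ) * I)).re = z.re * Real.cos r - z.im * Real.sin r := by
  rw [Complex.exp_mul_I]
  simp [Complex.add_re, Complex.mul_re, Complex.mul_im, Complex.cos_ofReal_re,
    Complex.sin_ofReal_re]

lemma isoAux_deriv_periodic (p : ℝ → ℝ) (hper : Function.Periodic p (2*π)) :
    Function.Periodic (deriv p) (2*π) := by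
  intro x
  have h : (fun y => p (y + 2*π)) = p := funext fun y => hper y
  rw [← deriv_comp_add_const p (2*π) x, h]

lemma isoAux_area_ibp (p : ℝ → ℝ) (hp : ContDiff ℝ (⊤:ℕ∞) p)
    (hper : Function.Periodic p (2*π)) :
    algArea p = (1/2) * ((∫ θ in (0:ℝ)..(2*π), (p θ)^2)
      - ∫ θ in (0:ℝ)..(2*π), (deriv p θ)^2) := by
  have hd : Differentiable ℝ p := hp.differentiable (by norm_num)
  have hp' : ContDiff ℝ (⊤:ℕ∞) (deriv p) := (contDiff_infty_iff_deriv.mp hp).2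
  have hd' : Differentiable ℝ (deriv p) := hp'.differentiable (by norm_num)
  have hc'' : Continuous (deriv (deriv p)) := (contDiff_infty_iff_deriv.mp hp').2.continuous
  have hibp : (∫ θ in (0:ℝ)..(2*π), p θ * deriv (deriv p) θ)
      = p (2*π) * deriv p (2*π) - p 0 * deriv p 0
        - ∫ θ in (0:ℝ)..(2*π), deriv p θ * deriv p θ :=
    intervalIntegral.integral_mul_deriv_eq_deriv_mul
      (fun x _ => (hd x).hasDerivAt) (fun x _ => (hd' x).hasDerivAt)
      ((hp'.continuous).intervalIntegrable 0 (2*π))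
      (hc''.intervalIntegrable 0 (2*π))
  have e1 : p (2*π) = p 0 := by simpa using hper 0
  have e2 : deriv p (2*π) = deriv p 0 := by simpa using isoAux_deriv_periodic p hper 0
  rw [e1, e2, sub_self, zero_sub] at hibp
  have hsplit : (∫ θ in (0:ℝ)..(2*π), p θ * betaF p θ)
      = (∫ θ in (0:ℝ)..(2*π), (p θ)^2) + ∫ θ in (0:ℝ)..(2*π), p θ * deriv (deriv p) θ := by
    rw [← intervalIntegral.integral_add (f := fun θ => p θ ^ 2) (g := fun θ => p θ * deriv (deriv p) θ)
      ((hp.continuous.pow 2).intervalIntegrable 0 (2*π))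
      ((hp.continuous.mul hc'').intervalIntegrable 0 (2*π))]
    apply intervalIntegral.integral_congr
    intro x _
    simp only [betaF, iteratedDeriv_succ, iteratedDeriv_one, iteratedDeriv_zero]
    ring
  have hsq : (∫ θ in (0:ℝ)..(2*π), deriv p θ * deriv p θ)
      = ∫ θ in (0:ℝ)..(2*π), (deriv p θ)^2 := by
    apply intervalIntegral.integral_congr; intro x _; ring
  rw [algArea, hsplit, hibp, hsq]
  ring

end IsoAux

open MeasureTheory intervalIntegral Complex AddCircle in
theorem isoperimetric_inequality_ell_convex
    (p : ℝ → ℝ) (hp : ContDiff ℝ (⊤ : ℕ∞) p)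
    (hper : Function.Periodic p (2 * π)) :
    0 ≤ (algLen p) ^ 2 - 4 * π * algArea p ∧
    ((algLen p) ^ 2 - 4 * π * algArea p = 0 ↔
      ∃ a₀ a₁ b₁ : ℝ, ∀ θ : ℝ,
        p θ = a₀ + a₁ * Real.cos θ + b₁ * Real.sin θ) := by
  have hπ : (0:ℝ) < π := Real.pi_pos
  have hd : Differentiable ℝ p := hp.differentiable (by norm_num)
  have hp' : ContDiff ℝ (⊤:ℕ∞) (deriv p) := (contDiff_infty_iff_deriv.mp hp).2
  set q : ℝ → ℂ := fun θ => ((p θ : ℝ) : ℂ) with hqdef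
  set q' : ℝ → ℂ := fun θ => ((deriv p θ : ℝ) : ℂ) with hq'def
  have hqc : Continuous q := Complex.continuous_ofReal.comp hp.continuous
  have hq'c : Continuous q' := Complex.continuous_ofReal.comp hp'.continuous
  have hqp : Function.Periodic q (2*π) := fun x => by simp [hqdef, hper x]
  have hq'p : Function.Periodic q' (2*π) := fun x => by
    simp [hq'def, isoAux_deriv_periodic p hper x]
  set c : ℤ → ℂ := fun n => fourierCoeff hqp.lift n with hcdef
  set c' : ℤ → ℂ := fun n => fourierCoeff hq'p.lift n with hc'def
  have hderiv : ∀ x : ℝ, HasDerivAt q (q' x) x := fun x => ((hd x).hasDerivAt).ofReal_comp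
  have hc'n : ∀ n : ℤ, n ≠ 0 → c' n = I * n * c n := fun n hn =>
    isoAux_coeff_deriv hqp hq'p hderiv hq'c n hn
  have hc'0 : c' 0 = 0 := by
    show fourierCoeff hq'p.lift 0 = 0
    rw [isoAux_coeff_zero hq'p]
    have h1 : (∫ x in (0:ℝ)..(2*π), q' x) = ((∫ x in (0:ℝ)..(2*π), deriv p x : ℝ) : ℂ) :=
      intervalIntegral.integral_ofReal
    rw [h1, intervalIntegral.integral_deriv_eq_sub (fun x _ => hd x)
      ((hp'.continuous).intervalIntegrable 0 (2*π))]
    have : p (2*π) = p 0 := by simpa using hper 0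
    simp [this]
  have hnorm : ∀ n : ℤ, ‖c' n‖^2 = (n:ℝ)^2 * ‖c n‖^2 := by
    intro n
    by_cases hn : n = 0
    · simp [hn, hc'0]
    · rw [hc'n n hn]
      rw [norm_mul, norm_mul, Complex.norm_I, one_mul, Complex.norm_intCast]
      rw [mul_pow, _root_.sq_abs]
  have hc0 : c 0 = ((algLen p / (2*π) : ℝ) : ℂ) := by
    show fourierCoeff hqp.lift 0 = ((algLen p / (2*π) : ℝ) : ℂ)
    rw [isoAux_coeff_zero hqp]
    have h1 : (∫ x in (0:ℝ)..(2*π), q x) = ((∫ x in (0:ℝ)..(2*π), p x : ℝ) : ℂ) :=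
      intervalIntegral.integral_ofReal
    rw [h1, algLen]
    push_cast
    ring
  have hS1 : Summable (fun n : ℤ => ‖c n‖^2) := isoAux_parseval_summable hqc hqp
  have hS2' : Summable (fun n : ℤ => ‖c' n‖^2) := isoAux_parseval_summable hq'c hq'p
  have hS2 : Summable (fun n : ℤ => (n:ℝ)^2 * ‖c n‖^2) := hS2'.congr hnorm
  have hP1 : ∑' n : ℤ, ‖c n‖^2 = (1/(2*π)) * ∫ x in (0:ℝ)..(2*π), (p x)^2 := by
    have h := isoAux_parseval_eq hqc hqp
    have h2 : (∫ x in (0:ℝ)..(2*π), ‖q x‖^2) = ∫ x in (0:ℝ)..(2*π), (p x)^2 := by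
      apply intervalIntegral.integral_congr
      intro x _
      simp [hqdef, Complex.norm_real, _root_.sq_abs]
    rw [h2] at h
    exact h
  have hP2 : ∑' n : ℤ, (n:ℝ)^2 * ‖c n‖^2
      = (1/(2*π)) * ∫ x in (0:ℝ)..(2*π), (deriv p x)^2 := by
    have h := isoAux_parseval_eq hq'c hq'p
    have h2 : (∫ x in (0:ℝ)..(2*π), ‖q' x‖^2) = ∫ x in (0:ℝ)..(2*π), (deriv p x)^2 := by
      apply intervalIntegral.integral_congr
      intro x _
      simp [hq'def, Complex.norm_real, _root_.sq_abs]
    rw [h2] at h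
    rw [← tsum_congr hnorm]
    exact h
  -- the weighted sum
  set e : ℤ → ℝ := fun n => if n = 0 then 0 else ((n:ℝ)^2 - 1) * ‖c n‖^2 with hedef
  have hind : Summable (fun n : ℤ => if n = 0 then ‖c 0‖^2 else 0) :=
    summable_of_ne_finset_zero (s := {0}) (by intro b hb; simp at hb; simp [hb])
  have he : ∀ n : ℤ, e n = ((n:ℝ)^2 * ‖c n‖^2 - ‖c n‖^2) + (if n = 0 then ‖c 0‖^2 else 0) := by
    intro n
    by_cases hn : n = 0
    · simp [hedef, hn]
    · simp only [hedef, hn, if_false, add_zero]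
      ring
  have hSe : Summable e := (((hS2.sub hS1).add hind).congr (fun n => (he n).symm))
  have htsum_e : ∑' n : ℤ, e n
      = ((∑' n : ℤ, (n:ℝ)^2 * ‖c n‖^2) - ∑' n : ℤ, ‖c n‖^2) + ‖c 0‖^2 := by
    calc ∑' n : ℤ, e n
        = ∑' n : ℤ, (((n:ℝ)^2 * ‖c n‖^2 - ‖c n‖^2) + (if n = 0 then ‖c 0‖^2 else 0)) :=
          tsum_congr he
      _ = (∑' n : ℤ, ((n:ℝ)^2 * ‖c n‖^2 - ‖c n‖^2))
            + ∑' n : ℤ, (if n = 0 then ‖c 0‖^2 else 0) := Summable.tsum_add (hS2.sub hS1) hind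
      _ = ((∑' n : ℤ, (n:ℝ)^2 * ‖c n‖^2) - ∑' n : ℤ, ‖c n‖^2) + ‖c 0‖^2 := by
          rw [Summable.tsum_sub hS2 hS1, tsum_ite_eq]
  have he_nonneg : ∀ n : ℤ, 0 ≤ e n := by
    intro n
    by_cases hn : n = 0
    · simp [hedef, hn]
    · simp only [hedef, hn, if_false]
      apply mul_nonneg _ (sq_nonneg _)
      have h1 : (1:ℝ) ≤ |(n:ℝ)| := by
        rw [show |(n:ℝ)| = ((|n| : ℤ) : ℝ) by push_cast; rfl]
        exact_mod_cast Int.one_le_abs hn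
      nlinarith [abs_nonneg ((n:ℝ)), _root_.sq_abs ((n:ℝ))]
  -- the key identity
  have key : (algLen p) ^ 2 - 4 * π * algArea p = (2*π)^2 * ∑' n : ℤ, e n := by
    have hI1 : (∫ x in (0:ℝ)..(2*π), (p x)^2) = (2*π) * ∑' n : ℤ, ‖c n‖^2 := by
      rw [hP1]; field_simp
    have hI2 : (∫ x in (0:ℝ)..(2*π), (deriv p x)^2) = (2*π) * ∑' n : ℤ, (n:ℝ)^2 * ‖c n‖^2 := by
      rw [hP2]; field_simp
    have hL : (algLen p)^2 = (2*π)^2 * ‖c 0‖^2 := by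
      rw [hc0, Complex.norm_real, Real.norm_eq_abs, _root_.sq_abs]
      field_simp
    rw [isoAux_area_ibp p hp hper, hI1, hI2, htsum_e, hL]
    ring
  have hnn : 0 ≤ (algLen p) ^ 2 - 4 * π * algArea p := by
    rw [key]
    exact mul_nonneg (by positivity) (tsum_nonneg he_nonneg)
  refine ⟨hnn, ?_, ?_⟩
  · -- equality implies circle
    intro h0
    have h2 : (2*π)^2 * ∑' n : ℤ, e n = 0 := by rw [← key]; exact h0
    have hsum0 : ∑' n : ℤ, e n = 0 := by
      have h3 : ((2*π)^2 : ℝ) ≠ 0 := by positivity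
      exact (mul_eq_zero.mp h2).resolve_left h3
    have hzero : ∀ n : ℤ, e n = 0 := fun n =>
      le_antisymm (hsum0 ▸ Summable.le_tsum hSe n (fun j _ => he_nonneg j)) (he_nonneg n)
    have hcvanish : ∀ n : ℤ, n ∉ ({-1, 0, 1} : Finset ℤ) → c n = 0 := by
      intro n hn
      simp only [Finset.mem_insert, Finset.mem_singleton] at hn
      push_neg at hn
      obtain ⟨hn1, hn2, hn3⟩ := hn
      have hcases : 2 ≤ n ∨ n ≤ -2 := by omega
      have hge : (4:ℝ) ≤ (n:ℝ)^2 := by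
        rcases hcases with h | h
        · have : (2:ℝ) ≤ (n:ℝ) := by exact_mod_cast h
          nlinarith
        · have : (n:ℝ) ≤ -2 := by exact_mod_cast h
          nlinarith
      have he_n := hzero n
      simp only [hedef, hn2, if_false] at he_n
      have hcn : ‖c n‖^2 = 0 := by
        rcases mul_eq_zero.mp he_n with h | h
        · nlinarith
        · exact h
      have : ‖c n‖ = 0 := by
        have := pow_eq_zero_iff (n := 2) (by norm_num) |>.mp hcn
        exact this
      exact norm_eq_zero.mp this
    have hsummc : Summable c := summable_of_ne_finset_zero (s := ({-1, 0, 1} : Finset ℤ)) hcvanish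
    set F : C(AddCircle (2*π), ℂ) := ⟨hqp.lift, isoAux_lift_continuous hqc hqp⟩ with hF
    have hsummF : Summable (fourierCoeff (F : AddCircle (2*π) → ℂ)) := hsummc
    refine ⟨(c 0).re, (c 1).re + (c (-1)).re, (c (-1)).im - (c 1).im, fun θ => ?_⟩
    have hps := has_pointwise_sum_fourier_series_of_summable hsummF ((θ:ℝ) : AddCircle (2*π))
    have hfin : HasSum (fun i : ℤ => fourierCoeff (F : AddCircle (2*π) → ℂ) i
          • fourier i ((θ:ℝ) : AddCircle (2*π)))
        (∑ i ∈ ({-1, 0, 1} : Finset ℤ), fourierCoeff (F : AddCircle (2*π) → ℂ) i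
          • fourier i ((θ:ℝ) : AddCircle (2*π))) := by
      apply hasSum_sum_of_ne_finset_zero
      intro b hb
      rw [show fourierCoeff (F : AddCircle (2*π) → ℂ) b = c b from rfl, hcvanish b hb, zero_smul]
    have heq : ((p θ : ℝ) : ℂ) = ∑ i ∈ ({-1, 0, 1} : Finset ℤ),
        c i • fourier i ((θ:ℝ) : AddCircle (2*π)) := hps.unique hfin
    have hfour : ∀ i : ℤ, (fourier i (((θ:ℝ)) : AddCircle (2*π)) : ℂ)
        = Complex.exp ((i:ℂ) * θ * I) := by
      intro i
      rw [fourier_coe_apply]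
      congr 1
      have hπc : (π:ℂ) ≠ 0 := ofReal_ne_zero.mpr pi_ne_zero
      field_simp
      push_cast
      ring
    rw [Finset.sum_insert (by decide), Finset.sum_insert (by decide),
      Finset.sum_singleton, hfour, hfour, hfour] at heq
    rw [show ((-1:ℤ):ℂ) * θ * I = ((-θ:ℝ):ℂ) * I by push_cast; ring,
      show ((0:ℤ):ℂ) * θ * I = ((0:ℝ):ℂ) * I by push_cast; ring,
      show ((1:ℤ):ℂ) * θ * I = ((θ:ℝ):ℂ) * I by push_cast; ring] at heq
    have hre := congrArg Complex.re heq
    simp only [smul_eq_mul, Complex.add_re, isoAux_re_mul_exp, Complex.ofReal_re] at hre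
    rw [hre]
    simp [Real.cos_neg, Real.sin_neg]
    ring
  · -- circle implies equality
    rintro ⟨a₀, a₁, b₁, hpeq⟩
    have hpfun : p = fun θ => a₀ + a₁ * Real.cos θ + b₁ * Real.sin θ := funext hpeq
    have hD1 : deriv p = fun θ => -(a₁ * Real.sin θ) + b₁ * Real.cos θ := by
      funext θ
      rw [hpfun]
      have h : HasDerivAt (fun θ => a₀ + a₁ * Real.cos θ + b₁ * Real.sin θ)
          (-(a₁ * Real.sin θ) + b₁ * Real.cos θ) θ := by
        refine ((((Real.hasDerivAt_cos θ).const_mul a₁).const_add a₀).add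
          ((Real.hasDerivAt_sin θ).const_mul b₁)).congr_deriv ?_
        ring
      exact h.deriv
    have hD2 : ∀ θ : ℝ, iteratedDeriv 2 p θ = -(a₁ * Real.cos θ) - b₁ * Real.sin θ := by
      intro θ
      rw [iteratedDeriv_succ, iteratedDeriv_one, hD1]
      have h : HasDerivAt (fun θ => -(a₁ * Real.sin θ) + b₁ * Real.cos θ)
          (-(a₁ * Real.cos θ) - b₁ * Real.sin θ) θ := by
        refine ((((Real.hasDerivAt_sin θ).const_mul a₁).neg).add
          ((Real.hasDerivAt_cos θ).const_mul b₁)).congr_deriv ?_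
        ring
      exact h.deriv
    have hbeta : ∀ θ : ℝ, betaF p θ = a₀ := by
      intro θ
      show p θ + iteratedDeriv 2 p θ = a₀
      rw [hD2, hpeq θ]
      ring
    have hL : algLen p = 2 * π * a₀ := by
      rw [algLen]
      have h1 : (∫ θ in (0:ℝ)..(2*π), p θ)
          = ∫ θ in (0:ℝ)..(2*π), (a₀ + a₁ * Real.cos θ + b₁ * Real.sin θ) :=
        intervalIntegral.integral_congr fun θ _ => hpeq θ
      rw [h1, intervalIntegral.integral_add (f := fun θ => a₀ + a₁ * Real.cos θ) (g := fun θ => b₁ * Real.sin θ)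
          ((continuous_const.add (continuous_const.mul Real.continuous_cos)).intervalIntegrable _ _)
          ((continuous_const.mul Real.continuous_sin).intervalIntegrable _ _),
        intervalIntegral.integral_add (f := fun _ => a₀) (g := fun θ => a₁ * Real.cos θ)
          (continuous_const.intervalIntegrable _ _)
          ((continuous_const.mul Real.continuous_cos).intervalIntegrable _ _),
        intervalIntegral.integral_const, intervalIntegral.integral_const_mul,
        intervalIntegral.integral_const_mul, integral_cos, integral_sin]
      simp [Real.sin_two_pi, Real.cos_two_pi]
    have hA : algArea p = π * a₀^2 := by
      rw [algArea]
      have h1 : (∫ θ in (0:ℝ)..(2*π), p θ * betaF p θ)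
          = ∫ θ in (0:ℝ)..(2*π), p θ * a₀ :=
        intervalIntegral.integral_congr fun θ _ => by rw [hbeta]
      rw [h1, intervalIntegral.integral_mul_const,
        show (∫ θ in (0:ℝ)..(2*π), p θ) = algLen p from rfl, hL]
      ring
    rw [hL, hA]
    ring
end

section
/- Let p : ℝ → ℝ be a smooth 2π-periodic function, the support function of an ℓ-convex Legendre curve with ℓ = 1, with β = p + p'', algebraic length L = ∫₀^{2π} p(θ) dθ and algebraic area A = (1/2)∫₀^{2π} p(θ)β(θ) dθ. Then for every real τ ≤ 8, ∫₀^{2π} β(θ)² dθ ≥ 2A + τ(L²/(4π) − A). Moreover, for every τ < 8, equality holds if and only if the curve is a circle, i.e. p(θ) = a₀ + a₁ cos θ + b₁ sin θ for some real constants a₀, a₁, b₁. -/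
open Real

open Real MeasureTheory Set intervalIntegral

noncomputable section

namespace BSI

lemma two_pi_pos : (0:ℝ) < 2 * π := by positivity

instance : Fact ((0:ℝ) < 2 * π) := ⟨two_pi_pos⟩

/-- Fourier coefficient on `[0, 2π]`. -/
def fc (f : ℝ → ℂ) (n : ℤ) : ℂ := fourierCoeffOn two_pi_pos f n

lemma fc_eq_lift (f : ℝ → ℂ) (n : ℤ) :
    fourierCoeff (AddCircle.liftIco (2*π) 0 f) n = fc f n := by
  rw [fourierCoeff_liftIco_eq]
  unfold fc
  congr 1
  simp

end BSI

section Parseval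
variable {f : ℝ → ℂ} (hf : Continuous f) (hper : Function.Periodic f (2*π))

namespace BSI

lemma lift_eq (hper : Function.Periodic f (2*π)) (hf : Continuous f) (x : ℝ) :
    AddCircle.liftIco (2*π) 0 f ↑x = f x := by
  have h1 : x - toIcoDiv two_pi_pos 0 x • (2*π) ∈ Ico (0:ℝ) (0 + 2*π) :=
    sub_toIcoDiv_zsmul_mem_Ico two_pi_pos 0 x
  rw [zero_add] at h1
  have h2 : (x : AddCircle (2*π)) = ((x - toIcoDiv two_pi_pos 0 x • (2*π) : ℝ) : AddCircle (2*π)) := by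
    have : ((toIcoDiv two_pi_pos 0 x • (2*π) : ℝ) : AddCircle (2*π)) = 0 := by
      rw [AddCircle.coe_eq_zero_iff]
      exact ⟨toIcoDiv two_pi_pos 0 x, rfl⟩
    rw [sub_eq_add_neg]
    push_cast [QuotientAddGroup.mk_add, QuotientAddGroup.mk_neg, this]
    simp [this]
  rw [h2, AddCircle.liftIco_coe_apply (by simpa using h1)]
  exact hper.sub_zsmul_eq _


/-- The lifted continuous map on the circle. -/
def liftCM (hf : Continuous f) (hper : Function.Periodic f (2*π)) :
    C(AddCircle (2*π), ℂ) :=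
  ⟨AddCircle.liftIco (2*π) 0 f,
    AddCircle.liftIco_zero_continuous (by simpa using (hper 0).symm) hf.continuousOn⟩

lemma parseval (hf : Continuous f) (hper : Function.Periodic f (2*π)) :
    Summable (fun n : ℤ => ‖fc f n‖^2) ∧
    (2*π) * ∑' n : ℤ, ‖fc f n‖^2 = ∫ x in (0:ℝ)..(2*π), ‖f x‖^2 := by
  set F : C(AddCircle (2*π), ℂ) := liftCM hf hper with hF
  set FL := ContinuousMap.toLp (E := ℂ) 2 AddCircle.haarAddCircle ℂ F with hFL
  have hcoeff : ∀ n : ℤ, fourierCoeff (FL : AddCircle (2*π) → ℂ) n = fc f n := by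
    intro n
    rw [fourierCoeff_toLp]
    exact fc_eq_lift f n
  have hsum : Summable (fun n : ℤ => ‖fc f n‖^2) := by
    have hmem := lp.memℓp (fourierBasis.repr FL)
    have hs := hmem.summable (by norm_num)
    simp only [fourierBasis_repr] at hs
    have : (fun n : ℤ => ‖fourierCoeff (FL : AddCircle (2*π) → ℂ) n‖ ^ ((2:ENNReal).toReal))
        = fun n : ℤ => ‖fc f n‖^2 := by
      funext n
      rw [hcoeff n]
      norm_num
    rwa [this] at hs
  refine ⟨hsum, ?_⟩
  have hpars := tsum_sq_fourierCoeff FL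
  simp only [hcoeff] at hpars
  rw [hpars]
  have h1 : ∫ t : AddCircle (2*π), ‖FL t‖^2 ∂AddCircle.haarAddCircle
      = ∫ t : AddCircle (2*π), ‖F t‖^2 ∂AddCircle.haarAddCircle := by
    apply MeasureTheory.integral_congr_ae
    filter_upwards [ContinuousMap.coeFn_toLp (𝕜 := ℂ) (p := 2) AddCircle.haarAddCircle F] with t ht
    rw [ht]
  have h2 : ∫ x in (0:ℝ)..(2*π), ‖f x‖^2
      = ∫ t : AddCircle (2*π), ‖F t‖^2 := by
    have := AddCircle.intervalIntegral_preimage (2*π) 0 (fun t => ‖F t‖^2)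
    rw [zero_add] at this
    rw [← this]
    apply intervalIntegral.integral_congr
    intro x _
    simp only [show F ↑x = f x from lift_eq hper hf x]
  have h3 : (∫ t : AddCircle (2*π), ‖F t‖^2)
      = (2*π) * ∫ t : AddCircle (2*π), ‖F t‖^2 ∂AddCircle.haarAddCircle := by
    rw [AddCircle.volume_eq_smul_haarAddCircle, _root_.MeasureTheory.integral_smul_measure _ _,
      ENNReal.toReal_ofReal two_pi_pos.le, smul_eq_mul]
  rw [h1, h2, h3]

end BSI
end Parseval

namespace BSI
open Complex

lemma fc_deriv {f f' : ℝ → ℂ} (hder : ∀ x, HasDerivAt f (f' x) x)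
    (hcont : Continuous f') (hper : Function.Periodic f (2*π)) (n : ℤ) :
    fc f' n = Complex.I * n * fc f n := by
  rcases eq_or_ne n 0 with rfl | hn
  · simp only [Int.cast_zero, mul_zero, zero_mul]
    unfold fc
    rw [fourierCoeffOn_eq_integral]
    simp only [neg_zero, fourier_zero, one_smul, sub_zero]
    rw [intervalIntegral.integral_eq_sub_of_hasDerivAt (fun x _ => hder x)
      (hcont.intervalIntegrable _ _)]
    rw [show f (2*π) = f 0 by simpa using (hper 0)]
    simp
  · have h := fourierCoeffOn_of_hasDerivAt two_pi_pos hn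
      (fun x _ => hder x) (hcont.intervalIntegrable _ _)
    have hf0 : f (2*π) - f 0 = 0 := by rw [show f (2*π) = f 0 by simpa using (hper 0)]; ring
    rw [hf0, mul_zero, zero_sub] at h
    unfold fc
    rw [h]
    have hn' : (n:ℂ) ≠ 0 := Int.cast_ne_zero.mpr hn
    have hπ : (π:ℂ) ≠ 0 := Complex.ofReal_ne_zero.mpr Real.pi_ne_zero
    have hI := Complex.I_ne_zero
    push_cast
    field_simp
    ring

end BSI

namespace BSI
open Complex

lemma recover {f : ℝ → ℂ} (hf : Continuous f) (hper : Function.Periodic f (2*π))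
    (hzero : ∀ n : ℤ, 2 ≤ |n| → fc f n = 0) (x : ℝ) :
    f x = fc f (-1) * Complex.exp (-(x:ℂ) * Complex.I) + fc f 0
        + fc f 1 * Complex.exp ((x:ℂ) * Complex.I) := by
  set F : C(AddCircle (2*π), ℂ) := liftCM hf hper with hFdef
  have hcoeff : ∀ n : ℤ, fourierCoeff (F : AddCircle (2*π) → ℂ) n = fc f n :=
    fun n => fc_eq_lift f n
  have hsupp : ∀ n : ℤ, n ∉ ({-1, 0, 1} : Finset ℤ) → fourierCoeff (F : AddCircle (2*π) → ℂ) n = 0 := by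
    intro n hn
    rw [hcoeff]
    apply hzero
    simp only [Finset.mem_insert, Finset.mem_singleton] at hn
    push_neg at hn
    rcases hn with ⟨h1, h2, h3⟩
    rcases abs_cases n with ⟨h, _⟩ | ⟨h, _⟩ <;> omega
  have hsummable : Summable (fourierCoeff (F : AddCircle (2*π) → ℂ)) :=
    summable_of_ne_finset_zero hsupp
  have hps := has_pointwise_sum_fourier_series_of_summable hsummable (x : AddCircle (2*π))
  have htsum := hps.tsum_eq
  rw [tsum_eq_sum (s := ({-1, 0, 1} : Finset ℤ))
    (fun n hn => by rw [hsupp n hn, zero_smul])] at htsum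
  have hFx : F (x : AddCircle (2*π)) = f x := lift_eq hper hf x
  rw [hFx] at htsum
  rw [← htsum]
  have hfour : ∀ n : ℤ, fourier n ((x : ℝ) : AddCircle (2*π)) = Complex.exp ((n:ℂ) * x * Complex.I) := by
    intro n
    rw [fourier_coe_apply]
    congr 1
    have hπ : (π:ℂ) ≠ 0 := Complex.ofReal_ne_zero.mpr Real.pi_ne_zero
    push_cast
    field_simp
  rw [Finset.sum_insert (by decide), Finset.sum_insert (by decide), Finset.sum_singleton]
  simp only [hcoeff, hfour, smul_eq_mul]
  push_cast
  ring_nf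
  rw [Complex.exp_zero]
  ring

end BSI

namespace BSI

lemma periodic_deriv {F : Type*} [NormedAddCommGroup F] [NormedSpace ℝ F]
    (f : ℝ → F) {c : ℝ} (hf : Function.Periodic f c) : Function.Periodic (deriv f) c := by
  intro x
  have h : (fun y => f (y + c)) = f := funext hf
  calc deriv f (x + c) = deriv (fun y => f (y + c)) x := (deriv_comp_add_const f c x).symm
  _ = deriv f x := by rw [h]

end BSI

namespace BSI

/-- Fourier coefficients of (the complexification of) `p`. -/
def cf (p : ℝ → ℝ) (n : ℤ) : ℂ := fc (fun x => ((p x : ℝ) : ℂ)) n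

lemma core {p : ℝ → ℝ} (hp : ContDiff ℝ (⊤ : ℕ∞) p)
    (hper : Function.Periodic p (2 * π)) :
    Summable (fun n : ℤ => ‖cf p n‖^2) ∧
    Summable (fun n : ℤ => (n:ℝ)^2 * ‖cf p n‖^2) ∧
    Summable (fun n : ℤ => (n:ℝ)^4 * ‖cf p n‖^2) ∧
    (2*π) * ∑' n : ℤ, ‖cf p n‖^2 = ∫ θ in (0:ℝ)..(2*π), (p θ)^2 ∧
    (2*π) * ∑' n : ℤ, (n:ℝ)^2 * ‖cf p n‖^2 = ∫ θ in (0:ℝ)..(2*π), (deriv p θ)^2 ∧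
    (2*π) * ∑' n : ℤ, (n:ℝ)^4 * ‖cf p n‖^2 = ∫ θ in (0:ℝ)..(2*π), (deriv (deriv p) θ)^2 ∧
    ‖cf p 0‖^2 = (algLen p / (2*π))^2 ∧
    2 * algArea p
      = (∫ θ in (0:ℝ)..(2*π), (p θ)^2) - ∫ θ in (0:ℝ)..(2*π), (deriv p θ)^2 ∧
    (∫ θ in (0:ℝ)..(2*π), (betaF p θ)^2)
      = (∫ θ in (0:ℝ)..(2*π), (p θ)^2) - 2 * (∫ θ in (0:ℝ)..(2*π), (deriv p θ)^2)
        + ∫ θ in (0:ℝ)..(2*π), (deriv (deriv p) θ)^2 := by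
  have hdiff : Differentiable ℝ p := hp.differentiable (by simp)
  have hp1 : ContDiff ℝ (⊤ : ℕ∞) (deriv p) := (contDiff_infty_iff_deriv.mp hp).2
  have hdiff1 : Differentiable ℝ (deriv p) := hp1.differentiable (by simp)
  have hp2 : ContDiff ℝ (⊤ : ℕ∞) (deriv (deriv p)) := (contDiff_infty_iff_deriv.mp hp1).2
  have hc0 : Continuous p := hp.continuous
  have hc1 : Continuous (deriv p) := hp1.continuous
  have hc2 : Continuous (deriv (deriv p)) := hp2.continuous
  have hper1 : Function.Periodic (deriv p) (2*π) := periodic_deriv _ hper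
  have hper2 : Function.Periodic (deriv (deriv p)) (2*π) := periodic_deriv _ hper1
  set q0 : ℝ → ℂ := fun x => ((p x : ℝ) : ℂ) with hq0
  set q1 : ℝ → ℂ := fun x => ((deriv p x : ℝ) : ℂ) with hq1
  set q2 : ℝ → ℂ := fun x => ((deriv (deriv p) x : ℝ) : ℂ) with hq2
  have hq0c : Continuous q0 := Complex.continuous_ofReal.comp hc0
  have hq1c : Continuous q1 := Complex.continuous_ofReal.comp hc1
  have hq2c : Continuous q2 := Complex.continuous_ofReal.comp hc2
  have hq0p : Function.Periodic q0 (2*π) := fun x => by simp [hq0, hper x]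
  have hq1p : Function.Periodic q1 (2*π) := fun x => by simp [hq1, hper1 x]
  have hd0 : ∀ x, HasDerivAt q0 (q1 x) x := fun x => ((hdiff x).hasDerivAt).ofReal_comp
  have hd1 : ∀ x, HasDerivAt q1 (q2 x) x := fun x => ((hdiff1 x).hasDerivAt).ofReal_comp
  have hq2p : Function.Periodic q2 (2*π) := fun x => by simp [hq2, hper2 x]
  have hfc1 : ∀ n : ℤ, fc q1 n = Complex.I * n * fc q0 n := fun n => fc_deriv hd0 hq1c hq0p n
  have hfc2 : ∀ n : ℤ, fc q2 n = Complex.I * n * fc q1 n := fun n => fc_deriv hd1 hq2c hq1p n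
  have hnormsq : ∀ (n : ℤ) (z : ℂ), ‖Complex.I * n * z‖^2 = (n:ℝ)^2 * ‖z‖^2 := by
    intro n z
    rw [norm_mul, norm_mul, Complex.norm_I, one_mul, mul_pow]
    congr 1
    rw [show ((n:ℤ):ℂ) = ((n:ℝ):ℂ) by push_cast; rfl]
    simp [Real.norm_eq_abs, sq_abs]
  have hS1 : ∀ n : ℤ, ‖fc q1 n‖^2 = (n:ℝ)^2 * ‖fc q0 n‖^2 := fun n => by
    rw [hfc1 n]; exact hnormsq n _
  have hS2 : ∀ n : ℤ, ‖fc q2 n‖^2 = (n:ℝ)^4 * ‖fc q0 n‖^2 := fun n => by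
    rw [hfc2 n, hnormsq n, hS1 n]; ring
  obtain ⟨hsum0, hint0⟩ := parseval hq0c hq0p
  obtain ⟨hsum1, hint1⟩ := parseval hq1c hq1p
  obtain ⟨hsum2, hint2⟩ := parseval hq2c hq2p
  have hcf : ∀ n, cf p n = fc q0 n := fun n => rfl
  have e0 : (∫ x in (0:ℝ)..2*π, ‖q0 x‖^2) = ∫ θ in (0:ℝ)..2*π, (p θ)^2 :=
    intervalIntegral.integral_congr fun x _ => by
      simp [hq0, Real.norm_eq_abs, sq_abs]
  have e1 : (∫ x in (0:ℝ)..2*π, ‖q1 x‖^2) = ∫ θ in (0:ℝ)..2*π, (deriv p θ)^2 :=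
    intervalIntegral.integral_congr fun x _ => by
      simp [hq1, Real.norm_eq_abs, sq_abs]
  have e2 : (∫ x in (0:ℝ)..2*π, ‖q2 x‖^2) = ∫ θ in (0:ℝ)..2*π, (deriv (deriv p) θ)^2 :=
    intervalIntegral.integral_congr fun x _ => by
      simp [hq2, Real.norm_eq_abs, sq_abs]
  simp only [hS1] at hsum1 hint1
  simp only [hS2] at hsum2 hint2
  rw [e0] at hint0
  rw [e1] at hint1
  rw [e2] at hint2
  -- the zeroth coefficient
  have hfc0 : fc q0 0 = ((algLen p / (2*π) : ℝ) : ℂ) := by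
    unfold fc
    rw [fourierCoeffOn_eq_integral]
    simp only [neg_zero, fourier_zero, one_smul, sub_zero, hq0]
    rw [intervalIntegral.integral_ofReal, Complex.real_smul]
    rw [algLen]
    push_cast
    ring
  have hS0 : ‖cf p 0‖^2 = (algLen p / (2*π))^2 := by
    rw [hcf 0, hfc0]
    rw [Complex.norm_real, Real.norm_eq_abs, sq_abs]
  -- integration by parts
  have hbeta : ∀ θ, betaF p θ = p θ + deriv (deriv p) θ := fun θ => by
    simp [betaF, iteratedDeriv_succ, iteratedDeriv_one]
  have hparts : (∫ θ in (0:ℝ)..(2*π), p θ * deriv (deriv p) θ)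
      = - ∫ θ in (0:ℝ)..(2*π), (deriv p θ)^2 := by
    have h := intervalIntegral.integral_mul_deriv_eq_deriv_mul
      (a := (0:ℝ)) (b := 2*π) (u := p) (u' := deriv p) (v := deriv p) (v' := deriv (deriv p))
      (fun x _ => (hdiff x).hasDerivAt) (fun x _ => (hdiff1 x).hasDerivAt)
      (hc1.intervalIntegrable _ _) (hc2.intervalIntegrable _ _)
    rw [show p (2*π) = p 0 by simpa using hper 0,
      show deriv p (2*π) = deriv p 0 by simpa using hper1 0] at h
    rw [h]
    have : (∫ θ in (0:ℝ)..(2*π), deriv p θ * deriv p θ)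
        = ∫ θ in (0:ℝ)..(2*π), (deriv p θ)^2 :=
      intervalIntegral.integral_congr fun x _ => (sq (deriv p x)).symm
    rw [this]
    ring
  have h2A : 2 * algArea p
      = (∫ θ in (0:ℝ)..(2*π), (p θ)^2) - ∫ θ in (0:ℝ)..(2*π), (deriv p θ)^2 := by
    have h1 : IntervalIntegrable (fun θ => (p θ)^2) MeasureTheory.volume 0 (2*π) :=
      (hc0.pow 2).intervalIntegrable _ _
    have h2 : IntervalIntegrable (fun θ => p θ * deriv (deriv p) θ)
        MeasureTheory.volume 0 (2*π) := (hc0.mul hc2).intervalIntegrable _ _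
    have key : (∫ θ in (0:ℝ)..(2*π), p θ * betaF p θ)
        = ∫ θ in (0:ℝ)..(2*π), ((p θ)^2 + p θ * deriv (deriv p) θ) :=
      intervalIntegral.integral_congr fun x _ => by rw [hbeta x]; ring
    rw [algArea, key, intervalIntegral.integral_add h1 h2, hparts]
    ring
  have hB2 : (∫ θ in (0:ℝ)..(2*π), (betaF p θ)^2)
      = (∫ θ in (0:ℝ)..(2*π), (p θ)^2) - 2 * (∫ θ in (0:ℝ)..(2*π), (deriv p θ)^2)
        + ∫ θ in (0:ℝ)..(2*π), (deriv (deriv p) θ)^2 := by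
    have h1 : IntervalIntegrable (fun θ => (p θ)^2) MeasureTheory.volume 0 (2*π) :=
      (hc0.pow 2).intervalIntegrable _ _
    have h2 : IntervalIntegrable (fun θ => p θ * deriv (deriv p) θ)
        MeasureTheory.volume 0 (2*π) := (hc0.mul hc2).intervalIntegrable _ _
    have h3 : IntervalIntegrable (fun θ => (deriv (deriv p) θ)^2)
        MeasureTheory.volume 0 (2*π) := (hc2.pow 2).intervalIntegrable _ _
    have key : (∫ θ in (0:ℝ)..(2*π), (betaF p θ)^2)
        = ∫ θ in (0:ℝ)..(2*π),
            ((p θ)^2 + 2 * (p θ * deriv (deriv p) θ) + (deriv (deriv p) θ)^2) :=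
      intervalIntegral.integral_congr fun x _ => by rw [hbeta x]; ring
    rw [key, intervalIntegral.integral_add (h1.add (h2.const_mul 2)) h3,
      intervalIntegral.integral_add h1 (h2.const_mul 2),
      intervalIntegral.integral_const_mul, hparts]
    ring
  exact ⟨hsum0, hsum1, hsum2, hint0, hint1, hint2, hS0, h2A, hB2⟩

end BSI

end

theorem beta_square_integral_inequality
    (p : ℝ → ℝ) (hp : ContDiff ℝ (⊤ : ℕ∞) p)
    (hper : Function.Periodic p (2 * π)) :
    (∀ τ : ℝ, τ ≤ 8 →
      2 * algArea p + τ * ((algLen p) ^ 2 / (4 * π) - algArea p)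
        ≤ ∫ θ in (0:ℝ)..(2 * π), (betaF p θ) ^ 2) ∧
    (∀ τ : ℝ, τ < 8 →
      ((∫ θ in (0:ℝ)..(2 * π), (betaF p θ) ^ 2)
          = 2 * algArea p + τ * ((algLen p) ^ 2 / (4 * π) - algArea p) ↔
        ∃ a₀ a₁ b₁ : ℝ, ∀ θ : ℝ,
          p θ = a₀ + a₁ * Real.cos θ + b₁ * Real.sin θ)) := by
  obtain ⟨hsum0, hsum1, hsum2, hint0, hint1, hint2, hS0, h2A, hB2⟩ := BSI.core hp hper
  set S : ℤ → ℝ := fun n => ‖BSI.cf p n‖^2 with hSdef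
  have hSdef' : ∀ n : ℤ, ‖BSI.cf p n‖^2 = S n := fun n => rfl
  simp only [hSdef'] at hint0 hint1 hint2 hS0 hsum0 hsum1 hsum2
  have hSnn : ∀ n, 0 ≤ S n := fun n => sq_nonneg _
  have hπ : (0:ℝ) < π := Real.pi_pos
  have hind : ∀ τ : ℝ, Summable (fun n : ℤ => if n = 0 then (τ/2) * S n else 0) := by
    intro τ
    apply summable_of_ne_finset_zero (s := ({0} : Finset ℤ))
    intro n hn
    simp only [Finset.mem_singleton] at hn
    simp [hn]
  set G : ℝ → ℤ → ℝ := fun τ n =>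
    (n:ℝ)^4 * S n - (1 + τ/2) * ((n:ℝ)^2 * S n) + (τ/2) * S n
      - (if n = 0 then (τ/2) * S n else 0) with hGdef
  have hGsum : ∀ τ, Summable (G τ) := fun τ =>
    ((hsum2.sub (hsum1.mul_left _)).add (hsum0.mul_left _)).sub (hind τ)
  have hGtsum : ∀ τ, ∑' n, G τ n
      = (∑' n : ℤ, (n:ℝ)^4 * S n) - (1+τ/2) * (∑' n : ℤ, (n:ℝ)^2 * S n)
        + (τ/2) * (∑' n : ℤ, S n) - (τ/2) * S 0 := by
    intro τ
    simp only [hGdef]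
    rw [Summable.tsum_sub ((hsum2.sub (hsum1.mul_left _)).add (hsum0.mul_left _)) (hind τ),
      Summable.tsum_add (hsum2.sub (hsum1.mul_left _)) (hsum0.mul_left _),
      Summable.tsum_sub hsum2 (hsum1.mul_left _), tsum_mul_left, tsum_mul_left]
    have hif : (fun n : ℤ => if n = 0 then (τ/2) * S n else 0)
        = fun n : ℤ => if n = 0 then (τ/2) * S 0 else 0 := by
      funext n; by_cases h : n = 0 <;> simp [h]
    rw [hif, tsum_ite_eq]
  have hD : ∀ τ : ℝ, (∫ θ in (0:ℝ)..(2*π), (betaF p θ)^2)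
      - (2 * algArea p + τ * ((algLen p)^2 / (4*π) - algArea p))
      = (2*π) * ∑' n, G τ n := by
    intro τ
    rw [hGtsum τ]
    have hA : algArea p
        = ((2*π) * (∑' n : ℤ, S n) - (2*π) * (∑' n : ℤ, (n:ℝ)^2 * S n)) / 2 := by
      rw [← hint0, ← hint1] at h2A
      linarith
    have hL : (algLen p)^2 = (2*π)^2 * S 0 := by
      rw [hS0]
      field_simp
    rw [hB2, ← hint0, ← hint1, ← hint2, hA, hL]
    field_simp
    ring
  have hGnn : ∀ τ : ℝ, τ ≤ 8 → ∀ n : ℤ, 0 ≤ G τ n := by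
    intro τ hτ n
    by_cases h : n = 0
    · simp [hGdef, h]
    · simp only [hGdef, if_neg h]
      have hz1 : (1:ℤ) ≤ n^2 := by rcases lt_or_gt_of_ne h with h' | h' <;> nlinarith
      have h1 : (1:ℝ) ≤ (n:ℝ)^2 := by exact_mod_cast hz1
      have h4 : (n:ℤ)^2 = 1 ∨ (4:ℤ) ≤ n^2 := by
        by_cases h1' : n = 1
        · left; simp [h1']
        by_cases h2' : n = -1
        · left; simp [h2']
        right
        have : 2 ≤ n ∨ n ≤ -2 := by omega
        rcases this with h' | h' <;> nlinarith
      rcases h4 with h4 | h4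
      · have e : (n:ℝ)^2 = 1 := by exact_mod_cast h4
        have e4 : (n:ℝ)^4 = 1 := by
          have : (n:ℝ)^4 = ((n:ℝ)^2)^2 := by ring
          rw [this, e]; norm_num
        rw [e, e4]
        ring_nf
        nlinarith [hSnn n]
      · have h4' : (4:ℝ) ≤ (n:ℝ)^2 := by exact_mod_cast h4
        nlinarith [hSnn n,
          mul_nonneg (mul_nonneg (by linarith : (0:ℝ) ≤ (n:ℝ)^2 - 1)
            (by linarith : (0:ℝ) ≤ (n:ℝ)^2 - τ/2)) (hSnn n)]
  constructor
  · intro τ hτ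
    have hnn : 0 ≤ ∑' n, G τ n := tsum_nonneg (hGnn τ hτ)
    nlinarith [hD τ, mul_nonneg (by positivity : (0:ℝ) ≤ 2*π) hnn]
  · intro τ hτ
    constructor
    · intro heq
      have h0 : (2*π) * ∑' n, G τ n = 0 := by
        rw [← hD τ, heq]; ring
      have hzero : ∑' n, G τ n = 0 := by
        have h2πne : (2*π : ℝ) ≠ 0 := by positivity
        exact (mul_eq_zero.mp h0).resolve_left h2πne
      have hGzero : ∀ n, G τ n = 0 := by
        intro n
        refine le_antisymm ?_ (hGnn τ hτ.le n)
        calc G τ n ≤ ∑' m, G τ m := Summable.le_tsum (hGsum τ) n (fun m _ => hGnn τ hτ.le m)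
        _ = 0 := hzero
      have hczero : ∀ n : ℤ, 2 ≤ |n| → BSI.fc (fun x => ((p x : ℝ) : ℂ)) n = 0 := by
        intro n hn
        have hn0 : n ≠ 0 := by rcases abs_cases n with ⟨h', _⟩ | ⟨h', _⟩ <;> omega
        have hG := hGzero n
        simp only [hGdef, if_neg hn0, sub_zero] at hG
        have h4 : (4:ℝ) ≤ (n:ℝ)^2 := by
          have : (2:ℤ) ≤ n ∨ n ≤ -2 := by rcases abs_cases n with ⟨h', _⟩ | ⟨h', _⟩ <;> omega
          have h4z : (4:ℤ) ≤ n^2 := by rcases this with h' | h' <;> nlinarith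
          exact_mod_cast h4z
        have hpos : 0 < ((n:ℝ)^2 - 1) * ((n:ℝ)^2 - τ/2) := by nlinarith
        have hprod : ((n:ℝ)^2 - 1) * ((n:ℝ)^2 - τ/2) * S n = 0 := by
          linear_combination hG
        have hSn : S n = 0 := by
          rcases mul_eq_zero.mp hprod with h' | h'
          · exact absurd h' hpos.ne'
          · exact h'
        have hnorm : ‖BSI.cf p n‖ = 0 := by
          have h2' : ‖BSI.cf p n‖^2 = 0 := by simpa [hSdef] using hSn
          exact (pow_eq_zero_iff two_ne_zero).mp h2'
        exact norm_eq_zero.mp hnorm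
      have hq0c : Continuous (fun x => ((p x : ℝ) : ℂ)) :=
        Complex.continuous_ofReal.comp hp.continuous
      have hq0p : Function.Periodic (fun x => ((p x : ℝ) : ℂ)) (2*π) := fun x => by
        simp [hper x]
      refine ⟨(BSI.cf p 0).re, (BSI.cf p 1).re + (BSI.cf p (-1)).re,
        (BSI.cf p (-1)).im - (BSI.cf p 1).im, fun θ => ?_⟩
      have hrec := BSI.recover hq0c hq0p hczero θ
      have h := congrArg Complex.re hrec
      simp only [Complex.ofReal_re] at h
      rw [h]
      have e1 : (-(θ:ℂ)) * Complex.I = ((-θ : ℝ) : ℂ) * Complex.I := by push_cast; ring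
      rw [e1]
      simp only [Complex.add_re, Complex.mul_re, Complex.exp_ofReal_mul_I_re,
        Complex.exp_ofReal_mul_I_im, Real.cos_neg, Real.sin_neg]
      show (BSI.cf p (-1)).re * Real.cos θ - (BSI.cf p (-1)).im * (-Real.sin θ)
          + (BSI.cf p 0).re + ((BSI.cf p 1).re * Real.cos θ - (BSI.cf p 1).im * Real.sin θ)
          = _
      ring
    · rintro ⟨a₀, a₁, b₁, hcirc⟩
      have hpfun : p = fun θ => a₀ + a₁ * Real.cos θ + b₁ * Real.sin θ := funext hcirc
      have hd1 : ∀ θ, HasDerivAt p (a₁ * (-Real.sin θ) + b₁ * Real.cos θ) θ := by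
        intro θ
        have h0 : HasDerivAt (fun θ => a₀ + a₁ * Real.cos θ + b₁ * Real.sin θ)
            (0 + a₁ * (-Real.sin θ) + b₁ * Real.cos θ) θ :=
          (((hasDerivAt_const θ a₀).add ((Real.hasDerivAt_cos θ).const_mul a₁)).add
            ((Real.hasDerivAt_sin θ).const_mul b₁))
        rw [hpfun]
        simpa using h0
      have hder1 : deriv p = fun θ => a₁ * (-Real.sin θ) + b₁ * Real.cos θ :=
        funext fun θ => (hd1 θ).deriv
      have hd2 : ∀ θ, HasDerivAt (deriv p) (a₁ * (-Real.cos θ) + b₁ * (-Real.sin θ)) θ := by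
        intro θ
        rw [hder1]
        exact ((Real.hasDerivAt_sin θ).neg.const_mul a₁).add
          (((Real.hasDerivAt_cos θ).const_mul b₁))
      have hbeta' : ∀ θ, betaF p θ = a₀ := by
        intro θ
        have : iteratedDeriv 2 p θ = a₁ * (-Real.cos θ) + b₁ * (-Real.sin θ) := by
          rw [show (2:ℕ) = 1 + 1 from rfl, iteratedDeriv_succ, iteratedDeriv_one]
          exact (hd2 θ).deriv
        rw [betaF, this, hcirc θ]
        ring
      have hcosint : (∫ θ in (0:ℝ)..(2*π), Real.cos θ) = 0 := by
        rw [integral_cos]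
        simp [Real.sin_two_pi]
      have hsinint : (∫ θ in (0:ℝ)..(2*π), Real.sin θ) = 0 := by
        rw [integral_sin]
        simp [Real.cos_two_pi]
      have hL : algLen p = 2*π*a₀ := by
        rw [algLen, hpfun]
        beta_reduce
        rw [intervalIntegral.integral_add (f := fun θ => a₀ + a₁ * Real.cos θ)
            (g := fun θ => b₁ * Real.sin θ)
            ((continuous_const.add (continuous_const.mul Real.continuous_cos)).intervalIntegrable _ _)
            ((continuous_const.mul Real.continuous_sin).intervalIntegrable _ _),
          intervalIntegral.integral_add (f := fun _ => a₀) (g := fun θ => a₁ * Real.cos θ)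
            ((continuous_const : Continuous fun _ : ℝ => a₀).intervalIntegrable _ _)
            ((continuous_const.mul Real.continuous_cos).intervalIntegrable _ _),
          intervalIntegral.integral_const_mul, intervalIntegral.integral_const_mul,
          intervalIntegral.integral_const, hcosint, hsinint]
        simp
      have hA : algArea p = π * a₀^2 := by
        rw [algArea]
        have hkey : (∫ θ in (0:ℝ)..(2*π), p θ * betaF p θ)
            = ∫ θ in (0:ℝ)..(2*π), a₀ * p θ :=
          intervalIntegral.integral_congr fun x _ => by rw [hbeta' x]; ring
        rw [hkey, intervalIntegral.integral_const_mul]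
        have : (∫ θ in (0:ℝ)..(2*π), p θ) = algLen p := rfl
        rw [this, hL]
        ring
      have hI : (∫ θ in (0:ℝ)..(2*π), (betaF p θ)^2) = 2*π*a₀^2 := by
        have hkey : (∫ θ in (0:ℝ)..(2*π), (betaF p θ)^2)
            = ∫ _ in (0:ℝ)..(2*π), a₀^2 :=
          intervalIntegral.integral_congr fun x _ => by rw [hbeta' x]
        rw [hkey, intervalIntegral.integral_const]
        simp
      rw [hI, hL, hA]
      field_simp
      ring
end

section
/- Let p : ℝ → ℝ be a smooth 2π-periodic function, the support function of an ℓ-convex Legendre curve with ℓ = 1, with β = p + p'', algebraic length L = ∫₀^{2π} p(θ) dθ and algebraic area A = (1/2)∫₀^{2π} p(θ)β(θ) dθ. Then ∫₀^{2π} β(θ)² dθ − 2A ≥ 8(L²/(4π) − A), with equality if and only if p(θ) = a₀ + a₁ cos θ + b₁ sin θ + a₂ cos 2θ + b₂ sin 2θ for some real constants a₀, a₁, b₁, a₂, b₂ (i.e. the curve is a parallel curve of an astroid). -/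
open Real

namespace BetaAux

open MeasureTheory intervalIntegral AddCircle Complex Set

instance : Fact (0 < 2 * π) := ⟨Real.two_pi_pos⟩

noncomputable def cf (Q : ℝ → ℂ) (n : ℤ) : ℂ :=
  (1 / (2 * π) : ℂ) * ∫ θ in (0:ℝ)..(2 * π), (fourier (-n) (θ : AddCircle (2 * π)) : ℂ) * Q θ

noncomputable def vfun (n : ℤ) : ℝ :=
  if n = 0 then 0 else ((n:ℝ)^2 - 1) * ((n:ℝ)^2 - 4)

lemma vfun_nonneg (n : ℤ) : 0 ≤ vfun n := by
  unfold vfun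
  rcases eq_or_ne n 0 with rfl | hn
  · simp
  rw [if_neg hn]
  rcases lt_or_ge n.natAbs 3 with h | h
  · have : n = 1 ∨ n = -1 ∨ n = 2 ∨ n = -2 := by omega
    rcases this with rfl|rfl|rfl|rfl <;> norm_num
  · have h' : (3:ℤ) ≤ n ∨ n ≤ -3 := by omega
    have h9 : (3:ℝ) ≤ (n:ℝ) ∨ (n:ℝ) ≤ -3 := by
      rcases h' with h'|h'
      · left; exact_mod_cast h'
      · right; exact_mod_cast h'
    have h9sq : (9:ℝ) ≤ (n:ℝ)^2 := by rcases h9 with h9|h9 <;> nlinarith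
    exact mul_nonneg (by linarith) (by linarith)

lemma vfun_pos {n : ℤ} (hn : 3 ≤ n.natAbs) : 0 < vfun n := by
  unfold vfun
  have hn0 : n ≠ 0 := by omega
  rw [if_neg hn0]
  have h' : (3:ℤ) ≤ n ∨ n ≤ -3 := by omega
  have h9 : (3:ℝ) ≤ (n:ℝ) ∨ (n:ℝ) ≤ -3 := by
    rcases h' with h'|h'
    · left; exact_mod_cast h'
    · right; exact_mod_cast h'
  have h9sq : (9:ℝ) ≤ (n:ℝ)^2 := by rcases h9 with h9|h9 <;> nlinarith
  exact mul_pos (by linarith) (by linarith)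

lemma pi_ne : (π:ℂ) ≠ 0 := by exact_mod_cast Real.pi_ne_zero

lemma h02 : (0:ℝ) < 0 + 2 * π := by linarith [Real.two_pi_pos]

lemma cf_eq_fourierCoeffOn (Q : ℝ → ℂ) (n : ℤ) : cf Q n = fourierCoeffOn h02 Q n := by
  rw [fourierCoeffOn_eq_integral, cf]; norm_num

lemma cf_deriv (Q Q' : ℝ → ℂ) (hQ : Function.Periodic Q (2 * π))
    (hd : ∀ x, HasDerivAt Q (Q' x) x) (hc' : Continuous Q') (n : ℤ) :
    cf Q' n = I * n * cf Q n := by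
  rcases eq_or_ne n 0 with rfl | hn
  · rw [cf]
    simp only [neg_zero, Int.cast_zero, mul_zero, zero_mul]
    have : ∀ θ : ℝ, (fourier (0:ℤ) (θ : AddCircle (2*π)) : ℂ) * Q' θ = Q' θ := by
      intro θ; rw [fourier_zero]; ring
    rw [intervalIntegral.integral_congr (fun θ _ => this θ)]
    rw [intervalIntegral.integral_eq_sub_of_hasDerivAt (fun x _ => hd x)
      (hc'.intervalIntegrable _ _)]
    have := hQ 0
    rw [zero_add] at this
    rw [this]; ring
  · have key := fourierCoeffOn_of_hasDerivAt h02 hn (fun x _ => hd x)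
      (hc'.intervalIntegrable _ _)
    rw [← cf_eq_fourierCoeffOn, ← cf_eq_fourierCoeffOn] at key
    have h0 : ((0:ℝ) : AddCircle (0 + 2*π - 0)) = 0 := by norm_num
    rw [h0] at key
    have hQ0 : Q (0 + 2 * π) = Q 0 := hQ 0
    rw [hQ0, sub_self, mul_zero, zero_sub] at key
    have hnne : (n:ℂ) ≠ 0 := by exact_mod_cast hn
    have hne2 : (2:ℂ) * (π:ℂ) * I * (n:ℂ) ≠ 0 :=
      mul_ne_zero (mul_ne_zero (mul_ne_zero two_ne_zero pi_ne) I_ne_zero) hnne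
    rw [key]
    push_cast
    field_simp
    try rw [eq_div_iff hne2]
    ring

lemma parseval (Q : ℝ → ℂ) (hQ : Function.Periodic Q (2 * π)) (hc : Continuous Q) :
    Summable (fun n => ‖cf Q n‖^2) ∧
    (2 * π) * ∑' n : ℤ, ‖cf Q n‖^2 = ∫ θ in (0:ℝ)..(2 * π), ‖Q θ‖^2 := by
  have hlift : Continuous hQ.lift := continuous_coinduced_dom.mpr hc
  set F : C(AddCircle (2 * π), ℂ) := ⟨hQ.lift, hlift⟩ with hF
  have hFc : ∀ n, fourierCoeff (F : AddCircle (2*π) → ℂ) n = cf Q n := by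
    intro n
    rw [show (F : AddCircle (2*π) → ℂ) = hQ.lift from rfl]
    rw [fourierCoeff_eq_intervalIntegral _ n 0, cf]
    simp only [zero_add, Function.Periodic.lift_coe, smul_eq_mul, real_smul]
    push_cast
    ring_nf
  have h1 := tsum_sq_fourierCoeff (ContinuousMap.toLp (E := ℂ) 2 haarAddCircle ℂ F)
  have h2 : ∀ n, fourierCoeff ((ContinuousMap.toLp (E := ℂ) 2 haarAddCircle ℂ F :
      Lp ℂ 2 haarAddCircle) : AddCircle (2*π) → ℂ) n = cf Q n := by
    intro n; rw [fourierCoeff_toLp]; exact hFc n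
  simp_rw [h2] at h1
  have hsum : Summable (fun n : ℤ => ‖cf Q n‖^2) := by
    have hm := lp.memℓp (fourierBasis.repr (ContinuousMap.toLp (E := ℂ) 2 haarAddCircle ℂ F))
    have hs := hm.summable (by norm_num : (0:ℝ) < (2 : ENNReal).toReal)
    refine hs.congr fun n => ?_
    rw [fourierBasis_repr, h2]
    norm_num
  refine ⟨hsum, ?_⟩
  rw [h1]
  have hae : (∫ t, ‖(ContinuousMap.toLp (E := ℂ) 2 haarAddCircle ℂ F :
      Lp ℂ 2 haarAddCircle) t‖^2 ∂haarAddCircle) = ∫ t, ‖F t‖^2 ∂haarAddCircle := by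
    apply MeasureTheory.integral_congr_ae
    filter_upwards [ContinuousMap.coeFn_toLp (E := ℂ) (𝕜 := ℂ) (p := 2) haarAddCircle F] with t ht
    rw [ht]
  rw [hae]
  have h3 := AddCircle.intervalIntegral_preimage (2*π) 0 (fun z : AddCircle (2*π) => ‖F z‖^2)
  rw [zero_add] at h3
  have h4 : ∫ θ in (0:ℝ)..(2*π), ‖Q θ‖^2 = ∫ z : AddCircle (2*π), ‖F z‖^2 := by
    rw [← h3]
    apply intervalIntegral.integral_congr
    intro x _
    simp [hF, Function.Periodic.lift_coe]
  rw [h4, volume_eq_smul_haarAddCircle, MeasureTheory.integral_smul_measure]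
  simp [ENNReal.toReal_ofReal Real.two_pi_pos.le, ENNReal.toReal_ofReal Real.pi_pos.le]

lemma periodic_deriv (f : ℝ → ℝ) {c : ℝ} (h : Function.Periodic f c) :
    Function.Periodic (deriv f) c := by
  intro x
  have hf : (fun y => f (y + c)) = f := funext h
  rw [← deriv_comp_add_const, hf]

lemma cf_add (Q R : ℝ → ℂ) (hQ : Continuous Q) (hR : Continuous R) (n : ℤ) :
    cf (fun θ => Q θ + R θ) n = cf Q n + cf R n := by
  have hf : Continuous fun θ : ℝ => (fourier (-n) (θ : AddCircle (2*π)) : ℂ) :=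
    (map_continuous (fourier (-n))).comp (AddCircle.continuous_mk' _)
  unfold cf
  rw [← mul_add, ← intervalIntegral.integral_add
    (f := fun θ : ℝ => (fourier (-n) (θ : AddCircle (2*π)) : ℂ) * Q θ)
    (g := fun θ : ℝ => (fourier (-n) (θ : AddCircle (2*π)) : ℂ) * R θ)
    ((hf.mul hQ).intervalIntegrable _ _)
    ((hf.mul hR).intervalIntegrable _ _)]
  congr 1
  apply intervalIntegral.integral_congr
  intro x _
  ring

lemma fourier_eq_exp (m : ℤ) (θ : ℝ) :
    (fourier m (θ : AddCircle (2*π)) : ℂ) = Complex.exp ((((m:ℝ)*θ:ℝ):ℂ)*I) := by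
  rw [fourier_coe_apply]
  congr 1
  push_cast
  have h : (2:ℂ)*π ≠ 0 := mul_ne_zero two_ne_zero pi_ne
  field_simp

lemma exp_int_integral_zero {k : ℤ} (hk : k ≠ 0) :
    ∫ θ in (0:ℝ)..(2*π), Complex.exp ((((k:ℝ)*θ:ℝ):ℂ)*I) = 0 := by
  have hc : ((k:ℂ)*I) ≠ 0 := mul_ne_zero (by exact_mod_cast hk) I_ne_zero
  have h1 : ∀ θ:ℝ, Complex.exp ((((k:ℝ)*θ:ℝ):ℂ)*I) = Complex.exp (((k:ℂ)*I)*(θ:ℂ)) := by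
    intro θ; congr 1; push_cast; ring
  rw [intervalIntegral.integral_congr fun θ _ => h1 θ]
  rw [integral_exp_mul_complex hc]
  have h2 : ((k:ℂ)*I)*((2*π:ℝ):ℂ) = (k:ℂ)*(2*(π:ℂ)*I) := by push_cast; ring
  rw [h2, Complex.exp_int_mul_two_pi_mul_I]
  norm_num

lemma ortho (n m : ℤ) (h : m ≠ n) :
    ∫ θ in (0:ℝ)..(2*π), (fourier (-n) (θ:AddCircle (2*π)) : ℂ)
      * Complex.exp ((((m:ℝ)*θ:ℝ):ℂ)*I) = 0 := by
  have h1 : ∀ θ:ℝ, (fourier (-n) (θ:AddCircle (2*π)) : ℂ) * Complex.exp ((((m:ℝ)*θ:ℝ):ℂ)*I)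
      = Complex.exp (((((m-n:ℤ):ℝ)*θ:ℝ):ℂ)*I) := by
    intro θ
    rw [fourier_eq_exp, ← Complex.exp_add]
    congr 1
    push_cast
    ring
  rw [intervalIntegral.integral_congr fun θ _ => h1 θ]
  exact exp_int_integral_zero (sub_ne_zero.mpr h)

lemma trig_decomp (a₀ a₁ b₁ a₂ b₂ θ : ℝ) :
    ((a₀ + a₁ * Real.cos θ + b₁ * Real.sin θ + a₂ * Real.cos (2*θ) + b₂ * Real.sin (2*θ) : ℝ) : ℂ)
      = (((a₂:ℂ) + b₂*I)/2) * Complex.exp (((((-2:ℤ):ℝ)*θ:ℝ):ℂ)*I)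
      + (((a₁:ℂ) + b₁*I)/2) * Complex.exp (((((-1:ℤ):ℝ)*θ:ℝ):ℂ)*I)
      + (a₀:ℂ) * Complex.exp (((((0:ℤ):ℝ)*θ:ℝ):ℂ)*I)
      + (((a₁:ℂ) - b₁*I)/2) * Complex.exp (((((1:ℤ):ℝ)*θ:ℝ):ℂ)*I)
      + (((a₂:ℂ) - b₂*I)/2) * Complex.exp (((((2:ℤ):ℝ)*θ:ℝ):ℂ)*I) := by
  simp only [Complex.exp_mul_I]
  push_cast
  simp only [← Complex.ofReal_cos, ← Complex.ofReal_sin]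
  simp only [Complex.ext_iff, Complex.add_re, Complex.add_im, Complex.mul_re, Complex.mul_im,
    Complex.ofReal_re, Complex.ofReal_im, Complex.I_re, Complex.I_im, Complex.div_re,
    Complex.div_im]
  constructor <;>
  · push_cast
    simp [Real.cos_neg, Real.sin_neg, Complex.normSq, Complex.cos_ofReal_re,
      Complex.sin_ofReal_re, Complex.cos_ofReal_im, Complex.sin_ofReal_im]
    try ring_nf

lemma poly_cf_zero (p : ℝ → ℝ) (a₀ a₁ b₁ a₂ b₂ : ℝ)
    (hpoly : ∀ θ : ℝ, p θ = a₀ + a₁ * Real.cos θ + b₁ * Real.sin θ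
      + a₂ * Real.cos (2*θ) + b₂ * Real.sin (2*θ))
    {n : ℤ} (hn : 3 ≤ n.natAbs) : cf (fun θ => ((p θ : ℝ) : ℂ)) n = 0 := by
  classical
  set γ : ℤ → ℂ := fun m =>
    if m = -2 then ((a₂:ℂ) + b₂*I)/2 else
    if m = -1 then ((a₁:ℂ) + b₁*I)/2 else
    if m = 0 then (a₀:ℂ) else
    if m = 1 then ((a₁:ℂ) - b₁*I)/2 else ((a₂:ℂ) - b₂*I)/2 with hγ
  set s : Finset ℤ := {-2, -1, 0, 1, 2} with hs
  have hg : ∀ m ∈ s, IntervalIntegrable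
      (fun θ:ℝ => γ m * ((fourier (-n) (θ:AddCircle (2*π)) : ℂ)
        * Complex.exp ((((m:ℝ)*θ:ℝ):ℂ)*I))) volume 0 (2*π) := by
    intro m _
    apply Continuous.intervalIntegrable
    apply continuous_const.mul
    exact ((map_continuous (fourier (-n))).comp (AddCircle.continuous_mk' _)).mul
      (Complex.continuous_exp.comp ((Complex.continuous_ofReal.comp
        (continuous_const.mul continuous_id)).mul continuous_const))
  have hdec : ∀ θ : ℝ, (fourier (-n) (θ:AddCircle (2*π)) : ℂ) * ((p θ : ℝ) : ℂ)
      = ∑ m ∈ s, γ m * ((fourier (-n) (θ:AddCircle (2*π)) : ℂ)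
          * Complex.exp ((((m:ℝ)*θ:ℝ):ℂ)*I)) := by
    intro θ
    rw [hpoly θ, trig_decomp]
    rw [hs]
    rw [Finset.sum_insert (by decide), Finset.sum_insert (by decide),
      Finset.sum_insert (by decide), Finset.sum_insert (by decide), Finset.sum_singleton]
    simp only [hγ]
    norm_num
    ring
  unfold cf
  rw [intervalIntegral.integral_congr fun θ _ => hdec θ]
  rw [intervalIntegral.integral_finset_sum hg]
  have hzero : ∀ m ∈ s, (∫ θ in (0:ℝ)..(2*π), γ m * ((fourier (-n) (θ:AddCircle (2*π)) : ℂ)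
      * Complex.exp ((((m:ℝ)*θ:ℝ):ℂ)*I))) = 0 := by
    intro m hm
    rw [intervalIntegral.integral_const_mul]
    have hmn : m ≠ n := by
      have : m = -2 ∨ m = -1 ∨ m = 0 ∨ m = 1 ∨ m = 2 := by
        rw [hs] at hm
        simpa using hm
      omega
    rw [ortho n m hmn, mul_zero]
  rw [Finset.sum_congr rfl hzero]
  simp

lemma mul_exp_re (z : ℂ) (x : ℝ) :
    (z * Complex.exp ((x:ℂ)*I)).re = z.re * Real.cos x - z.im * Real.sin x := by
  rw [Complex.mul_re, Complex.exp_ofReal_mul_I_re, Complex.exp_ofReal_mul_I_im]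

lemma rep_of_highcoeff_zero (p : ℝ → ℝ) (hc : Continuous p)
    (hper : Function.Periodic p (2 * π))
    (hzero : ∀ n : ℤ, 3 ≤ n.natAbs → cf (fun θ => ((p θ : ℝ) : ℂ)) n = 0) :
    ∃ a₀ a₁ b₁ a₂ b₂ : ℝ, ∀ θ : ℝ,
      p θ = a₀ + a₁ * Real.cos θ + b₁ * Real.sin θ
        + a₂ * Real.cos (2 * θ) + b₂ * Real.sin (2 * θ) := by
  classical
  set Pc : ℝ → ℂ := fun θ => ((p θ : ℝ) : ℂ) with hPc
  have hPcper : Function.Periodic Pc (2*π) := fun x => by simp [hPc, hper x]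
  have hPccont : Continuous Pc := Complex.continuous_ofReal.comp hc
  have hlift : Continuous hPcper.lift := continuous_coinduced_dom.mpr hPccont
  set F : C(AddCircle (2*π), ℂ) := ⟨hPcper.lift, hlift⟩ with hF
  have hFc : ∀ n, fourierCoeff (F : AddCircle (2*π) → ℂ) n = cf Pc n := by
    intro n
    rw [show (F : AddCircle (2*π) → ℂ) = hPcper.lift from rfl]
    rw [fourierCoeff_eq_intervalIntegral _ n 0, cf]
    simp only [zero_add, Function.Periodic.lift_coe, smul_eq_mul, real_smul]
    push_cast
    ring_nf
  set s : Finset ℤ := {-2,-1,0,1,2} with hs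
  have houts : ∀ n : ℤ, n ∉ s → fourierCoeff (F : AddCircle (2*π) → ℂ) n = 0 := by
    intro n hn
    rw [hFc]
    apply hzero
    have h5 : ¬(n = -2 ∨ n = -1 ∨ n = 0 ∨ n = 1 ∨ n = 2) := by
      rw [hs] at hn; simpa using hn
    omega
  have hsummable : Summable (fourierCoeff (F : AddCircle (2*π) → ℂ)) :=
    summable_of_ne_finset_zero houts
  refine ⟨(cf Pc 0).re, (cf Pc 1).re + (cf Pc (-1)).re, (cf Pc (-1)).im - (cf Pc 1).im,
    (cf Pc 2).re + (cf Pc (-2)).re, (cf Pc (-2)).im - (cf Pc 2).im, fun θ => ?_⟩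
  have hps := has_pointwise_sum_fourier_series_of_summable hsummable ((θ : ℝ) : AddCircle (2*π))
  have hFθ : F ((θ : ℝ) : AddCircle (2*π)) = Pc θ := Function.Periodic.lift_coe hPcper θ
  have htsum := hps.tsum_eq
  rw [hFθ] at htsum
  rw [tsum_eq_sum (s := s) (fun b hb => by rw [houts b hb, zero_smul])] at htsum
  rw [hs] at htsum
  rw [Finset.sum_insert (by decide), Finset.sum_insert (by decide), Finset.sum_insert (by decide),
    Finset.sum_insert (by decide), Finset.sum_singleton] at htsum
  simp only [hFc, smul_eq_mul] at htsum
  rw [fourier_eq_exp, fourier_eq_exp, fourier_eq_exp, fourier_eq_exp, fourier_eq_exp] at htsum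
  have hre := congrArg Complex.re htsum
  simp only [Complex.add_re, mul_exp_re, hPc, Complex.ofReal_re] at hre
  rw [← hre]
  push_cast
  simp [neg_mul, Real.cos_neg, Real.sin_neg]
  ring

lemma master (p : ℝ → ℝ) (hp : ContDiff ℝ (⊤ : ℕ∞) p)
    (hper : Function.Periodic p (2 * π)) :
    Summable (fun n : ℤ => vfun n * ‖cf (fun θ => (p θ : ℂ)) n‖ ^ 2) ∧
    ((∫ θ in (0:ℝ)..(2 * π), (betaF p θ) ^ 2) - 2 * algArea p)
        - 8 * ((algLen p) ^ 2 / (4 * π) - algArea p)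
      = 2 * π * ∑' n : ℤ, vfun n * ‖cf (fun θ => (p θ : ℂ)) n‖ ^ 2 := by
  have hπ : (π:ℝ) ≠ 0 := Real.pi_ne_zero
  have hpd : Differentiable ℝ p := hp.differentiable (by simp)
  have hp' : ContDiff ℝ (⊤:ℕ∞) (deriv p) := (contDiff_infty_iff_deriv.mp hp).2
  have hp'd : Differentiable ℝ (deriv p) := hp'.differentiable (by simp)
  have hp'' : ContDiff ℝ (⊤:ℕ∞) (deriv (deriv p)) := (contDiff_infty_iff_deriv.mp hp').2
  have hit2 : iteratedDeriv 2 p = deriv (deriv p) := by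
    simp [iteratedDeriv_succ, iteratedDeriv_one]
  have hcp : Continuous p := hp.continuous
  have hc2 : Continuous (iteratedDeriv 2 p) := by rw [hit2]; exact hp''.continuous
  have hper1 : Function.Periodic (deriv p) (2*π) := periodic_deriv p hper
  have hper2' : Function.Periodic (deriv (deriv p)) (2*π) := periodic_deriv _ hper1
  -- complexifications
  set Pc : ℝ → ℂ := fun θ => (p θ : ℂ) with hPc
  set P1 : ℝ → ℂ := fun θ => ((deriv p θ : ℝ) : ℂ) with hP1
  set P2 : ℝ → ℂ := fun θ => ((deriv (deriv p) θ : ℝ) : ℂ) with hP2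
  set Qβ : ℝ → ℂ := fun θ => ((betaF p θ : ℝ) : ℂ) with hQβ
  have hPcper : Function.Periodic Pc (2*π) := fun x => by simp [hPc, hper x]
  have hP1per : Function.Periodic P1 (2*π) := fun x => by simp [hP1, hper1 x]
  have hP2per : Function.Periodic P2 (2*π) := fun x => by simp [hP2, hper2' x]
  have hQβper : Function.Periodic Qβ (2*π) := fun x => by
    have h2 := hper2' x
    simp only [hQβ, betaF, hit2, Complex.ofReal_inj]
    rw [hper x, h2]
  have hPccont : Continuous Pc := Complex.continuous_ofReal.comp hcp
  have hP1cont : Continuous P1 := Complex.continuous_ofReal.comp hp'.continuous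
  have hP2cont : Continuous P2 := Complex.continuous_ofReal.comp hp''.continuous
  have hQβcont : Continuous Qβ := Complex.continuous_ofReal.comp (hcp.add hc2)
  have hd1 : ∀ x, HasDerivAt Pc (P1 x) x := fun x => ((hpd x).hasDerivAt).ofReal_comp
  have hd2 : ∀ x, HasDerivAt P1 (P2 x) x := fun x => ((hp'd x).hasDerivAt).ofReal_comp
  set c : ℤ → ℂ := cf Pc with hc
  have cf1 : ∀ n : ℤ, cf P1 n = I * n * c n := cf_deriv Pc P1 hPcper hd1 hP1cont
  have cf2 : ∀ n : ℤ, cf P2 n = -((n:ℂ)^2) * c n := by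
    intro n
    rw [cf_deriv P1 P2 hP1per hd2 hP2cont n, cf1 n]
    calc I * (n:ℂ) * (I * n * c n) = (I*I) * (n*n) * c n := by ring
    _ = -((n:ℂ)^2) * c n := by rw [Complex.I_mul_I]; ring
  have cfβ : ∀ n : ℤ, cf Qβ n = ((1:ℂ) - (n:ℂ)^2) * c n := by
    intro n
    have hsplit : Qβ = fun θ => Pc θ + P2 θ := by
      funext θ
      simp only [hQβ, hPc, hP2, betaF, hit2]
      push_cast
      ring
    rw [hsplit, cf_add Pc P2 hPccont hP2cont n, cf2 n]
    ring
  -- Parseval identities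
  obtain ⟨sA, hA⟩ := parseval Pc hPcper hPccont
  obtain ⟨sB, hB⟩ := parseval P2 hP2per hP2cont
  obtain ⟨sZ, hZ⟩ := parseval Qβ hQβper hQβcont
  have hnorm : ∀ x : ℝ, ‖((x:ℝ):ℂ)‖^2 = x^2 := fun x => by
    rw [Complex.norm_real, Real.norm_eq_abs, _root_.sq_abs]
  set X := ∫ θ in (0:ℝ)..(2*π), p θ^2 with hX
  set Y := ∫ θ in (0:ℝ)..(2*π), (iteratedDeriv 2 p θ)^2 with hY
  set Z := ∫ θ in (0:ℝ)..(2*π), (betaF p θ)^2 with hZdef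
  set W := ∫ θ in (0:ℝ)..(2*π), p θ * iteratedDeriv 2 p θ with hW
  have hA' : 2*π * ∑' n : ℤ, ‖c n‖^2 = X := by
    rw [hc, hA, hX]
    exact intervalIntegral.integral_congr fun θ _ => hnorm (p θ)
  have normB : ∀ n : ℤ, ‖cf P2 n‖^2 = ((n:ℝ)^2)^2 * ‖c n‖^2 := by
    intro n
    rw [cf2 n, norm_mul, mul_pow, norm_neg, norm_pow]
    congr 2
    rw [show ((n:ℂ)) = (((n:ℝ)):ℂ) by push_cast; ring, Complex.norm_real,
      Real.norm_eq_abs, _root_.sq_abs]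
  have hB' : 2*π * ∑' n : ℤ, ((n:ℝ)^2)^2 * ‖c n‖^2 = Y := by
    rw [← tsum_congr normB, hB, hY]
    apply intervalIntegral.integral_congr
    intro θ _
    show ‖((deriv (deriv p) θ : ℝ) : ℂ)‖^2 = iteratedDeriv 2 p θ ^ 2
    rw [hit2]
    exact hnorm _
  have normZ : ∀ n : ℤ, ‖cf Qβ n‖^2 = (1-(n:ℝ)^2)^2 * ‖c n‖^2 := by
    intro n
    rw [cfβ n, norm_mul, mul_pow]
    congr 1
    rw [show ((1:ℂ) - (n:ℂ)^2) = (((1 - (n:ℝ)^2):ℝ):ℂ) by push_cast; ring]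
    exact hnorm _
  have hZ' : 2*π * ∑' n : ℤ, (1-(n:ℝ)^2)^2 * ‖c n‖^2 = Z := by
    rw [← tsum_congr normZ, hZ, hZdef]
    exact intervalIntegral.integral_congr fun θ _ => hnorm _
  have sB' : Summable (fun n : ℤ => ((n:ℝ)^2)^2 * ‖c n‖^2) := sB.congr normB
  have sZ' : Summable (fun n : ℤ => (1-(n:ℝ)^2)^2 * ‖c n‖^2) := sZ.congr normZ
  -- zeroth coefficient
  have hc0 : c 0 = ((algLen p / (2*π) : ℝ) : ℂ) := by
    rw [hc]
    unfold cf
    simp only [neg_zero]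
    have : ∀ θ : ℝ, (fourier (0:ℤ) (θ : AddCircle (2*π)) : ℂ) * Pc θ = Pc θ := by
      intro θ; rw [fourier_zero]; ring
    rw [intervalIntegral.integral_congr fun θ _ => this θ]
    rw [show Pc = fun θ : ℝ => ((p θ : ℝ) : ℂ) from rfl]
    rw [intervalIntegral.integral_ofReal]
    unfold algLen
    push_cast
    field_simp
  have ha0 : ‖c 0‖^2 = (algLen p / (2*π))^2 := by rw [hc0]; exact hnorm _
  -- integral expansions
  have hint2 : IntervalIntegrable (fun θ => p θ * iteratedDeriv 2 p θ) volume 0 (2*π) :=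
    (hcp.mul hc2).intervalIntegrable _ _
  have hintX : IntervalIntegrable (fun θ => p θ^2) volume 0 (2*π) :=
    (hcp.pow 2).intervalIntegrable _ _
  have hintY : IntervalIntegrable (fun θ => (iteratedDeriv 2 p θ)^2) volume 0 (2*π) :=
    (hc2.pow 2).intervalIntegrable _ _
  have hZexp : Z = X + (2*W + Y) := by
    rw [hZdef, hX, hW, hY]
    have hcong : ∀ θ ∈ Set.uIcc (0:ℝ) (2*π), (betaF p θ)^2
        = p θ^2 + (2*(p θ * iteratedDeriv 2 p θ) + (iteratedDeriv 2 p θ)^2) := by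
      intro θ _; simp only [betaF]; ring
    rw [intervalIntegral.integral_congr hcong,
      intervalIntegral.integral_add hintX ((hint2.const_mul 2).add hintY),
      intervalIntegral.integral_add (hint2.const_mul 2) hintY,
      intervalIntegral.integral_const_mul]
  have hpβ : (∫ θ in (0:ℝ)..(2*π), p θ * betaF p θ) = X + W := by
    have hcong : ∀ θ ∈ Set.uIcc (0:ℝ) (2*π), p θ * betaF p θ
        = p θ^2 + p θ * iteratedDeriv 2 p θ := by
      intro θ _; simp only [betaF]; ring
    rw [intervalIntegral.integral_congr hcong, intervalIntegral.integral_add hintX hint2, hX, hW]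
  have hArea : algArea p = 1/2 * (X + W) := by
    unfold algArea; rw [hpβ]
  set d : ℤ → ℝ := fun n => (3/2)*‖c n‖^2 - (3/2)*(((n:ℝ)^2)^2*‖c n‖^2)
      + (5/2)*((1-(n:ℝ)^2)^2*‖c n‖^2) with hd
  have sd : Summable d := ((sA.mul_left (3/2)).sub (sB'.mul_left (3/2))).add (sZ'.mul_left (5/2))
  have htd : 2*π*∑' n, d n = (3/2)*X - (3/2)*Y + (5/2)*Z := by
    rw [show d = fun n => ((3/2)*‖c n‖^2 - (3/2)*(((n:ℝ)^2)^2*‖c n‖^2))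
      + (5/2)*((1-(n:ℝ)^2)^2*‖c n‖^2) from rfl]
    rw [Summable.tsum_add ((sA.mul_left _).sub (sB'.mul_left _)) (sZ'.mul_left _),
        Summable.tsum_sub (sA.mul_left _) (sB'.mul_left _), tsum_mul_left, tsum_mul_left, tsum_mul_left]
    rw [← hA', ← hB', ← hZ']
    ring
  set e : ℤ → ℝ := fun n => if n = 0 then 4*‖c 0‖^2 else 0 with he
  have se : Summable e := summable_of_ne_finset_zero (s := ({0} : Finset ℤ))
    (fun b hb => if_neg (by simpa using hb))
  have hte : ∑' n, e n = 4*‖c 0‖^2 := by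
    rw [tsum_eq_single 0 (fun b hb => if_neg hb)]
    simp [he]
  have hva : ∀ n : ℤ, vfun n * ‖c n‖^2 = d n - e n := by
    intro n
    rcases eq_or_ne n 0 with rfl|hn
    · simp only [vfun, if_pos rfl, hd, he, Int.cast_zero]
      norm_num
      ring
    · simp only [vfun, if_neg hn, hd, he]
      push_cast
      ring
  have sva : Summable (fun n : ℤ => vfun n * ‖c n‖^2) := (sd.sub se).congr fun n => (hva n).symm
  refine ⟨sva, ?_⟩
  have htva : ∑' n : ℤ, vfun n * ‖c n‖^2 = (∑' n, d n) - 4*‖c 0‖^2 := by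
    rw [tsum_congr hva, Summable.tsum_sub sd se, hte]
  rw [htva, hArea]
  have hSd : ∑' n, d n = ((3/2)*X - (3/2)*Y + (5/2)*Z) / (2*π) := by
    rw [← htd]
    field_simp
  rw [hSd, ha0, hZexp]
  unfold algLen
  field_simp
  ring

end BetaAux

theorem beta_square_integral_inequality_sharp
    (p : ℝ → ℝ) (hp : ContDiff ℝ (⊤ : ℕ∞) p)
    (hper : Function.Periodic p (2 * π)) :
    8 * ((algLen p) ^ 2 / (4 * π) - algArea p)
      ≤ (∫ θ in (0:ℝ)..(2 * π), (betaF p θ) ^ 2) - 2 * algArea p ∧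
    ((∫ θ in (0:ℝ)..(2 * π), (betaF p θ) ^ 2) - 2 * algArea p
        = 8 * ((algLen p) ^ 2 / (4 * π) - algArea p) ↔
      ∃ a₀ a₁ b₁ a₂ b₂ : ℝ, ∀ θ : ℝ,
        p θ = a₀ + a₁ * Real.cos θ + b₁ * Real.sin θ
          + a₂ * Real.cos (2 * θ) + b₂ * Real.sin (2 * θ)) := by
  obtain ⟨hsum, hiden⟩ := BetaAux.master p hp hper
  have hnn : ∀ n : ℤ, 0 ≤ BetaAux.vfun n * ‖BetaAux.cf (fun θ => ((p θ : ℝ) : ℂ)) n‖ ^ 2 :=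
    fun n => mul_nonneg (BetaAux.vfun_nonneg n) (sq_nonneg _)
  have htnn : (0:ℝ) ≤ ∑' n : ℤ, BetaAux.vfun n * ‖BetaAux.cf (fun θ => ((p θ : ℝ) : ℂ)) n‖ ^ 2 :=
    tsum_nonneg hnn
  have h2π : (0:ℝ) < 2 * π := Real.two_pi_pos
  constructor
  · nlinarith
  constructor
  · intro heq
    have ht0 : ∑' n : ℤ, BetaAux.vfun n * ‖BetaAux.cf (fun θ => ((p θ : ℝ) : ℂ)) n‖ ^ 2 = 0 := by
      have hm : 2 * π * ∑' n : ℤ, BetaAux.vfun n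
          * ‖BetaAux.cf (fun θ => ((p θ : ℝ) : ℂ)) n‖ ^ 2 = 0 := by
        rw [← hiden]; linarith
      rcases mul_eq_zero.mp hm with h | h
      · exact absurd h (ne_of_gt h2π)
      · exact h
    have hterm0 : ∀ n : ℤ, BetaAux.vfun n * ‖BetaAux.cf (fun θ => ((p θ : ℝ) : ℂ)) n‖ ^ 2 = 0 := by
      intro n
      have hle := Summable.le_tsum hsum n (fun m _ => hnn m)
      rw [ht0] at hle
      exact le_antisymm hle (hnn n)
    have hczero : ∀ n : ℤ, 3 ≤ n.natAbs → BetaAux.cf (fun θ => ((p θ : ℝ) : ℂ)) n = 0 := by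
      intro n hn
      have hv := BetaAux.vfun_pos hn
      have hsq : ‖BetaAux.cf (fun θ => ((p θ : ℝ) : ℂ)) n‖ ^ 2 = 0 := by
        rcases mul_eq_zero.mp (hterm0 n) with h | h
        · exact absurd h (ne_of_gt hv)
        · exact h
      have hnrm : ‖BetaAux.cf (fun θ => ((p θ : ℝ) : ℂ)) n‖ = 0 :=
        pow_eq_zero_iff two_ne_zero |>.mp hsq
      exact norm_eq_zero.mp hnrm
    exact BetaAux.rep_of_highcoeff_zero p hp.continuous hper hczero
  · rintro ⟨a₀, a₁, b₁, a₂, b₂, hpoly⟩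
    have hall : ∀ n : ℤ, BetaAux.vfun n * ‖BetaAux.cf (fun θ => ((p θ : ℝ) : ℂ)) n‖ ^ 2 = 0 := by
      intro n
      rcases lt_or_ge n.natAbs 3 with h | h
      · have h5 : n = 0 ∨ n = 1 ∨ n = -1 ∨ n = 2 ∨ n = -2 := by omega
        have hv0 : BetaAux.vfun n = 0 := by
          rcases h5 with rfl | rfl | rfl | rfl | rfl <;> simp [BetaAux.vfun] <;> norm_num
        rw [hv0, zero_mul]
      · rw [BetaAux.poly_cf_zero p a₀ a₁ b₁ a₂ b₂ hpoly h]
        simp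
    have ht0 : ∑' n : ℤ, BetaAux.vfun n * ‖BetaAux.cf (fun θ => ((p θ : ℝ) : ℂ)) n‖ ^ 2 = 0 := by
      rw [tsum_congr hall]; exact tsum_zero
    rw [ht0, mul_zero] at hiden
    linarith
end
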